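/- arXiv:1104.0338 — 5 statements merged into one kernel-verified Lean document; each statement's English description precedes it below -/
import Mathlib

section
/- Let F be a distribution function on the reals in the class AEP(b, C) with b > 0 and C > 0, meaning that x^{-b} log(1 - F(x)) → -C as x → ∞. If X_1, ..., X_n are i.i.d. with distribution F, then max(X_1, ..., X_n) / (log n)^{1/b} converges to C^{-1/b} in probability as n → ∞. -/
open MeasureTheory Filter Set

/-- Survival function of a measure on ℝ. -/
noncomputable def survival (ν : Measure ℝ) (x : ℝ) : ℝ := (ν (Set.Ioi x)).toReal

/-- F ∈ AEP(b, C): x^{-b} log F̄(x) → -C as x → ∞. -/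
def MemAEP (ν : Measure ℝ) (b C : ℝ) : Prop :=
  Tendsto (fun x : ℝ => Real.log (survival ν x) / x ^ b) atTop (nhds (-C))

/-- Moment-generating function, with value in ℝ≥0∞. -/
noncomputable def mgf' (ν : Measure ℝ) (θ : ℝ) : ENNReal :=
  ∫⁻ x, ENNReal.ofReal (Real.exp (θ * x)) ∂ν

/-- Logarithmic moment-generating function Λ(θ) = log ∫ e^{θx} dν. -/
noncomputable def cgf' (ν : Measure ℝ) (θ : ℝ) : ℝ := Real.log (mgf' ν θ).toReal

/-- Rate function Λ*(x) = sup_{θ ≥ 0} (θx - Λ(θ)). -/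
noncomputable def rateFn (ν : Measure ℝ) (x : ℝ) : ℝ :=
  sSup {y | ∃ θ : ℝ, 0 ≤ θ ∧ y = θ * x - cgf' ν θ}

/-- Rate function with values in ℝ≥0∞, the supremum being restricted to the
effective domain of Λ. -/
noncomputable def rateFnE (ν : Measure ℝ) (x : ℝ) : ENNReal :=
  ⨆ θ : {θ : ℝ // 0 ≤ θ ∧ mgf' ν θ < ⊤}, ENNReal.ofReal (θ * x - cgf' ν θ)

lemma biSup_range_le {f : ℕ → ℝ} {n : ℕ} {u : ℝ} (hu : 0 ≤ u)
    (h : ∀ i ∈ Finset.range n, f i ≤ u) : (⨆ i ∈ Finset.range n, f i) ≤ u :=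
  Real.iSup_le (fun i => Real.iSup_le (fun hi => h i hi) hu) hu

lemma le_biSup_range {f : ℕ → ℝ} {n : ℕ} {i : ℕ} (hi : i ∈ Finset.range n) :
    f i ≤ ⨆ j ∈ Finset.range n, f j := by
  have hg : ∀ j, (⨆ _ : j ∈ Finset.range n, f j)
      = if j ∈ Finset.range n then f j else 0 := by
    intro j
    split_ifs with hj
    · exact ciSup_pos hj
    · haveI : IsEmpty (j ∈ Finset.range n) := ⟨hj⟩
      exact Real.iSup_of_isEmpty _
  have hbdd : BddAbove (Set.range fun j => ⨆ _ : j ∈ Finset.range n, f j) := by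
    apply Set.Finite.bddAbove
    apply Set.Finite.subset (((Finset.range n).finite_toSet.image f).insert 0)
    rintro x ⟨j, rfl⟩
    simp only []
    rw [hg j]
    split_ifs with hj
    · exact Set.mem_insert_of_mem _ ⟨j, hj, rfl⟩
    · exact Set.mem_insert _ _
  calc f i = ⨆ _ : i ∈ Finset.range n, f i := ((ciSup_pos (f := fun _ => f i) hi)).symm
    _ ≤ ⨆ j ∈ Finset.range n, f j := le_ciSup hbdd i

set_option maxHeartbeats 1000000 in
private lemma key_lemma (ν : Measure ℝ) (hν : IsProbabilityMeasure ν)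
    (b C : ℝ) (hb : 0 < b) (hC : 0 < C) (hAEP : MemAEP ν b C)
    {Ω : Type*} [MeasurableSpace Ω] (μ : Measure Ω) (hμ : IsProbabilityMeasure μ)
    (X : ℕ → Ω → ℝ) (hmeas : ∀ i, Measurable (X i))
    (hdist : ∀ i, μ.map (X i) = ν)
    (hindep : ProbabilityTheory.iIndepFun X μ)
    (ε : ℝ) (hε : 0 < ε) (hεt : ε < C ^ (-(1 / b))) :
    Tendsto (fun n : ℕ =>
      μ {ω | ε < |(⨆ i ∈ Finset.range n, X i ω) / (Real.log n) ^ (1 / b)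
                    - C ^ (-(1 / b))|}) atTop (nhds 0) := by
  set t : ℝ := C ^ (-(1 / b)) with ht
  have htpos : 0 < t := Real.rpow_pos_of_pos hC _
  have htb : t ^ b = C⁻¹ := by
    rw [ht, ← Real.rpow_mul hC.le]
    rw [show (-(1 / b)) * b = -1 by field_simp]
    exact Real.rpow_neg_one C
  have hCt : C * t ^ b = 1 := by rw [htb]; exact mul_inv_cancel₀ hC.ne'
  -- upper-tail constants
  set P : ℝ := (t + ε) ^ b with hPdef
  have hPpos : 0 < P := Real.rpow_pos_of_pos (by linarith) _
  have htP : t ^ b < P := Real.rpow_lt_rpow htpos.le (by linarith) hb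
  have hK1 : 1 < C * P := by
    calc 1 = C * t ^ b := hCt.symm
      _ < C * P := mul_lt_mul_of_pos_left htP hC
  set δ₁ : ℝ := (C * P - 1) / (2 * P) with hδ₁def
  have hδ₁ : 0 < δ₁ := div_pos (by linarith) (by linarith)
  set η₁ : ℝ := (C * P - 1) / 2 with hη₁def
  have hη₁ : 0 < η₁ := by rw [hη₁def]; linarith
  have hEq1 : (C - δ₁) * P = 1 + η₁ := by
    rw [hδ₁def, hη₁def]
    field_simp
    ring
  -- lower-tail constants
  have htε : 0 < t - ε := by linarith
  set Q : ℝ := (t - ε) ^ b with hQdef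
  have hQpos : 0 < Q := Real.rpow_pos_of_pos htε _
  have hQt : Q < t ^ b := Real.rpow_lt_rpow htε.le (by linarith) hb
  have hK2 : C * Q < 1 := by
    calc C * Q < C * t ^ b := mul_lt_mul_of_pos_left hQt hC
      _ = 1 := hCt
  have hCQ : 0 < C * Q := mul_pos hC hQpos
  set δ₂ : ℝ := min ((1 - C * Q) / (2 * Q)) (C / 2) with hδ₂def
  have hδ₂ : 0 < δ₂ := lt_min (div_pos (by linarith) (by linarith)) (by linarith)
  have hδ₂C : δ₂ ≤ C / 2 := min_le_right _ _
  set η₂ : ℝ := (1 - C * Q) / 2 with hη₂def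
  have hη₂ : 0 < η₂ := by rw [hη₂def]; linarith
  have hη₂1 : η₂ < 1 := by rw [hη₂def]; linarith
  have hEq2 : (C + δ₂) * Q ≤ 1 - η₂ := by
    have h := min_le_left ((1 - C * Q) / (2 * Q)) (C / 2)
    have h2 : δ₂ * Q ≤ (1 - C * Q) / 2 := by
      calc δ₂ * Q ≤ ((1 - C * Q) / (2 * Q)) * Q := by
            exact mul_le_mul_of_nonneg_right (hδ₂def ▸ h) hQpos.le
        _ = (1 - C * Q) / 2 := by field_simp
    rw [hη₂def]; linarith
  -- extract eventual bounds from the AEP hypothesis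
  set δ : ℝ := min δ₁ δ₂ with hδdef
  have hδ : 0 < δ := lt_min hδ₁ hδ₂
  have hδle1 : δ ≤ δ₁ := min_le_left _ _
  have hδle2 : δ ≤ δ₂ := min_le_right _ _
  have hIoo : ∀ᶠ x in atTop,
      Real.log (survival ν x) / x ^ b ∈ Set.Ioo (-C - δ) (-C + δ) :=
    hAEP.eventually (eventually_mem_set.mpr (Ioo_mem_nhds (by linarith) (by linarith)))
  obtain ⟨x0, hx0⟩ := eventually_atTop.mp hIoo
  have hFnonneg : ∀ x, 0 ≤ survival ν x := fun x => ENNReal.toReal_nonneg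
  have hFle1 : ∀ x, survival ν x ≤ 1 := fun x => by
    have h := prob_le_one (μ := ν) (s := Set.Ioi x)
    simpa [survival] using ENNReal.toReal_mono ENNReal.one_ne_top h
  have hub : ∀ x, x0 ≤ x → 0 < x →
      survival ν x ≤ Real.exp ((-C + δ₁) * x ^ b) := by
    intro x hx hxpos
    obtain ⟨h1, h2⟩ := hx0 x hx
    have hxb : 0 < x ^ b := Real.rpow_pos_of_pos hxpos _
    have hlog : Real.log (survival ν x) < (-C + δ₁) * x ^ b := by
      have h3 := (div_lt_iff₀ hxb).mp h2
      have h4 := mul_le_mul_of_nonneg_right hδle1 hxb.le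
      linarith [h3, h4]
    rcases eq_or_lt_of_le (hFnonneg x) with h | h
    · rw [← h]; exact (Real.exp_pos _).le
    · calc survival ν x = Real.exp (Real.log (survival ν x)) := (Real.exp_log h).symm
        _ ≤ Real.exp ((-C + δ₁) * x ^ b) := Real.exp_le_exp.mpr hlog.le
  have hpos : ∀ x, x0 ≤ x → 0 < x → 0 < survival ν x := by
    intro x hx hxpos
    obtain ⟨h1, h2⟩ := hx0 x hx
    have hxb : 0 < x ^ b := Real.rpow_pos_of_pos hxpos _
    rcases eq_or_lt_of_le (hFnonneg x) with h | h
    · exfalso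
      have hl : Real.log (survival ν x) = 0 := by rw [← h, Real.log_zero]
      rw [hl, zero_div] at h2
      have : -C + δ ≤ -C / 2 := by linarith [hδle2.trans hδ₂C]
      linarith
    · exact h
  have hlb : ∀ x, x0 ≤ x → 0 < x →
      Real.exp (-(C + δ₂) * x ^ b) ≤ survival ν x := by
    intro x hx hxpos
    obtain ⟨h1, h2⟩ := hx0 x hx
    have hxb : 0 < x ^ b := Real.rpow_pos_of_pos hxpos _
    have hFpos := hpos x hx hxpos
    have hlog : -(C + δ₂) * x ^ b ≤ Real.log (survival ν x) := by
      have h3 := (lt_div_iff₀ hxb).mp h1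
      have h4 := mul_le_mul_of_nonneg_right hδle2 hxb.le
      linarith [h3, h4]
    calc Real.exp (-(C + δ₂) * x ^ b)
        ≤ Real.exp (Real.log (survival ν x)) := Real.exp_le_exp.mpr hlog
      _ = survival ν x := Real.exp_log hFpos
  -- sequences
  have hL : Tendsto (fun n : ℕ => Real.log n) atTop atTop :=
    Real.tendsto_log_atTop.comp tendsto_natCast_atTop_atTop
  have hbinv : (0:ℝ) < 1 / b := by positivity
  have haT : Tendsto (fun n : ℕ => (Real.log n) ^ (1 / b)) atTop atTop :=
    (tendsto_rpow_atTop hbinv).comp hL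
  have hsT : Tendsto (fun n : ℕ => (t - ε) * (Real.log n) ^ (1 / b)) atTop atTop :=
    haT.const_mul_atTop htε
  have hev : ∀ᶠ n : ℕ in atTop,
      1 ≤ Real.log n ∧ x0 ≤ (t - ε) * (Real.log n) ^ (1 / b) :=
    (hL.eventually_ge_atTop 1).and (hsT.eventually_ge_atTop x0)
  -- the two bounding sequences
  set g₁ : ℕ → ℝ := fun n => (n : ℝ) * Real.exp (-(1 + η₁) * Real.log n) with hg₁def
  set g₂ : ℕ → ℝ := fun n =>
    Real.exp (-((n : ℝ) * Real.exp (-(1 - η₂) * Real.log n))) with hg₂def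
  -- the eventual measure bound
  have hbound : ∀ᶠ n : ℕ in atTop,
      μ {ω | ε < |(⨆ i ∈ Finset.range n, X i ω) / (Real.log n) ^ (1 / b) - t|}
        ≤ ENNReal.ofReal (g₁ n) + ENNReal.ofReal (g₂ n) := by
    filter_upwards [hev] with n hn
    obtain ⟨hLn, hsn⟩ := hn
    have hLpos : (0:ℝ) < Real.log n := lt_of_lt_of_le one_pos hLn
    set an : ℝ := (Real.log n) ^ (1 / b) with handef
    have hapos : 0 < an := Real.rpow_pos_of_pos hLpos _
    set un : ℝ := (t + ε) * an with hundef
    set sn : ℝ := (t - ε) * an with hsndef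
    have hsnpos : 0 < sn := mul_pos htε hapos
    have hunpos : 0 < un := mul_pos (by linarith) hapos
    have hsnx0 : x0 ≤ sn := hsn
    have hunx0 : x0 ≤ un := by
      refine hsnx0.trans ?_
      rw [hundef, hsndef]
      have := mul_le_mul_of_nonneg_right (by linarith : t - ε ≤ t + ε) hapos.le
      linarith
    have hanb : an ^ b = Real.log n := by
      rw [handef, ← Real.rpow_mul hLpos.le, one_div_mul_cancel hb.ne', Real.rpow_one]
    have hunb : un ^ b = P * Real.log n := by
      rw [hundef, Real.mul_rpow (by linarith) hapos.le, hanb, hPdef]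
    have hsnb : sn ^ b = Q * Real.log n := by
      rw [hsndef, Real.mul_rpow htε.le hapos.le, hanb, hQdef]
    -- set inclusion
    have hincl : {ω | ε < |(⨆ i ∈ Finset.range n, X i ω) / an - t|}
        ⊆ (⋃ i ∈ Finset.range n, X i ⁻¹' Set.Ioi un)
          ∪ (⋂ i ∈ Finset.range n, X i ⁻¹' Set.Iic sn) := by
      intro ω hω
      simp only [Set.mem_setOf_eq] at hω
      rcases lt_abs.mp hω with h | h
      · left
        have hM : un < ⨆ i ∈ Finset.range n, X i ω := by
          rw [hundef]
          have h' : t + ε < (⨆ i ∈ Finset.range n, X i ω) / an := by linarith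
          exact (lt_div_iff₀ hapos).mp h'
        by_contra hA
        simp only [Set.mem_iUnion, Set.mem_preimage, Set.mem_Ioi, not_exists] at hA
        push_neg at hA
        have hle : (⨆ i ∈ Finset.range n, X i ω) ≤ un :=
          biSup_range_le hunpos.le (fun i hi => (hA i hi))
        linarith
      · right
        have hM : (⨆ i ∈ Finset.range n, X i ω) < sn := by
          rw [hsndef]
          have h' : (⨆ i ∈ Finset.range n, X i ω) / an < t - ε := by linarith
          exact (div_lt_iff₀ hapos).mp h'
        simp only [Set.mem_iInter, Set.mem_preimage, Set.mem_Iic]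
        intro i hi
        exact (le_biSup_range hi).trans hM.le
    -- bound the union part
    have hmuA : μ (⋃ i ∈ Finset.range n, X i ⁻¹' Set.Ioi un)
        ≤ ENNReal.ofReal (g₁ n) := by
      calc μ (⋃ i ∈ Finset.range n, X i ⁻¹' Set.Ioi un)
          ≤ ∑ i ∈ Finset.range n, μ (X i ⁻¹' Set.Ioi un) :=
            measure_biUnion_finset_le _ _
        _ = ∑ _i ∈ Finset.range n, ENNReal.ofReal (survival ν un) := by
            refine Finset.sum_congr rfl fun i _ => ?_
            rw [← Measure.map_apply (hmeas i) measurableSet_Ioi, hdist i]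
            exact (ENNReal.ofReal_toReal (measure_ne_top ν _)).symm
        _ = (n : ENNReal) * ENNReal.ofReal (survival ν un) := by
            rw [Finset.sum_const, Finset.card_range, nsmul_eq_mul]
        _ = ENNReal.ofReal ((n : ℝ) * survival ν un) := by
            rw [ENNReal.ofReal_mul (Nat.cast_nonneg n), ENNReal.ofReal_natCast]
        _ ≤ ENNReal.ofReal (g₁ n) := by
            apply ENNReal.ofReal_le_ofReal
            have h1 : survival ν un ≤ Real.exp ((-C + δ₁) * un ^ b) :=
              hub un hunx0 hunpos
            have h2 : (-C + δ₁) * un ^ b = -(1 + η₁) * Real.log n := by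
              rw [hunb, ← hEq1]; ring
            rw [hg₁def]
            have h3 : survival ν un ≤ Real.exp (-(1 + η₁) * Real.log n) := by
              rw [← h2]; exact h1
            exact mul_le_mul_of_nonneg_left h3 (Nat.cast_nonneg n)
    -- bound the intersection part via independence
    have hmuB : μ (⋂ i ∈ Finset.range n, X i ⁻¹' Set.Iic sn)
        ≤ ENNReal.ofReal (g₂ n) := by
      have hprod := hindep.measure_inter_preimage_eq_mul (Finset.range n)
        (sets := fun _ => Set.Iic sn) (fun i _ => measurableSet_Iic)
      have hXi : ∀ i, μ (X i ⁻¹' Set.Iic sn) = ν (Set.Iic sn) := fun i => by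
        rw [← hdist i]
        exact (Measure.map_apply (hmeas i) measurableSet_Iic).symm
      have hIic : ν (Set.Iic sn) = ENNReal.ofReal (1 - survival ν sn) := by
        have hcompl : ν (Set.Iic sn) = 1 - ν (Set.Ioi sn) := by
          rw [← Set.compl_Ioi, measure_compl measurableSet_Ioi (measure_ne_top ν _),
            measure_univ]
        rw [hcompl, ENNReal.ofReal_sub _ (hFnonneg sn), ENNReal.ofReal_one]
        congr 1
        exact (ENNReal.ofReal_toReal (measure_ne_top ν _)).symm
      have hmeq : μ (⋂ i ∈ Finset.range n, X i ⁻¹' Set.Iic sn)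
          = ENNReal.ofReal ((1 - survival ν sn) ^ n) := by
        rw [hprod, Finset.prod_congr rfl (fun i _ => (hXi i).trans hIic),
          Finset.prod_const, Finset.card_range,
          ← ENNReal.ofReal_pow (by linarith [hFle1 sn])]
      rw [hmeq]
      apply ENNReal.ofReal_le_ofReal
      have hq : Real.exp (-(1 - η₂) * Real.log n) ≤ survival ν sn := by
        have h1 := hlb sn hsnx0 hsnpos
        have h2 : -(1 - η₂) * Real.log n ≤ -(C + δ₂) * sn ^ b := by
          rw [hsnb]
          have h3 := mul_le_mul_of_nonneg_right hEq2 hLpos.le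
          linarith [h3]
        exact (Real.exp_le_exp.mpr h2).trans h1
      set p : ℝ := survival ν sn with hpdef
      have hp0 : 0 ≤ p := hFnonneg sn
      have hp1 : p ≤ 1 := hFle1 sn
      rw [hg₂def]
      calc (1 - p) ^ n ≤ Real.exp (-p) ^ n := by
            apply pow_le_pow_left₀ (by linarith)
            linarith [Real.add_one_le_exp (-p)]
        _ = Real.exp ((n : ℝ) * (-p)) := (Real.exp_nat_mul _ n).symm
        _ ≤ Real.exp (-((n : ℝ) * Real.exp (-(1 - η₂) * Real.log n))) := by
            apply Real.exp_le_exp.mpr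
            have h4 : (n : ℝ) * Real.exp (-(1 - η₂) * Real.log n) ≤ (n : ℝ) * p :=
              mul_le_mul_of_nonneg_left hq (Nat.cast_nonneg n)
            linarith
    calc μ {ω | ε < |(⨆ i ∈ Finset.range n, X i ω) / an - t|}
        ≤ μ ((⋃ i ∈ Finset.range n, X i ⁻¹' Set.Ioi un)
            ∪ (⋂ i ∈ Finset.range n, X i ⁻¹' Set.Iic sn)) := measure_mono hincl
      _ ≤ μ (⋃ i ∈ Finset.range n, X i ⁻¹' Set.Ioi un)
          + μ (⋂ i ∈ Finset.range n, X i ⁻¹' Set.Iic sn) := measure_union_le _ _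
      _ ≤ ENNReal.ofReal (g₁ n) + ENNReal.ofReal (g₂ n) := add_le_add hmuA hmuB
  -- the bounding sequences tend to 0
  have hg₁T : Tendsto (fun n => ENNReal.ofReal (g₁ n)) atTop (nhds 0) := by
    rw [show (0 : ENNReal) = ENNReal.ofReal 0 by simp]
    apply ENNReal.tendsto_ofReal
    have heq : ∀ᶠ n : ℕ in atTop,
        Real.exp (-η₁ * Real.log n) = g₁ n := by
      filter_upwards [eventually_ge_atTop 1] with n hn
      have hn' : (0:ℝ) < n := by exact_mod_cast hn
      rw [hg₁def]
      calc Real.exp (-η₁ * Real.log n)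
          = Real.exp (Real.log n + -(1 + η₁) * Real.log n) := by congr 1; ring
        _ = Real.exp (Real.log n) * Real.exp (-(1 + η₁) * Real.log n) := Real.exp_add _ _
        _ = (n : ℝ) * Real.exp (-(1 + η₁) * Real.log n) := by rw [Real.exp_log hn']
    have hT : Tendsto (fun n : ℕ => Real.exp (-η₁ * Real.log n)) atTop (nhds 0) :=
      Real.tendsto_exp_atBot.comp
        ((tendsto_const_mul_atBot_of_neg (by linarith : -η₁ < 0)).mpr hL)
    exact hT.congr' heq
  have hg₂T : Tendsto (fun n => ENNReal.ofReal (g₂ n)) atTop (nhds 0) := by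
    rw [show (0 : ENNReal) = ENNReal.ofReal 0 by simp]
    apply ENNReal.tendsto_ofReal
    have hhT : Tendsto (fun n : ℕ => (n : ℝ) * Real.exp (-(1 - η₂) * Real.log n))
        atTop atTop := by
      have heq : ∀ᶠ n : ℕ in atTop,
          Real.exp (η₂ * Real.log n) = (n : ℝ) * Real.exp (-(1 - η₂) * Real.log n) := by
        filter_upwards [eventually_ge_atTop 1] with n hn
        have hn' : (0:ℝ) < n := by exact_mod_cast hn
        calc Real.exp (η₂ * Real.log n)
            = Real.exp (Real.log n + -(1 - η₂) * Real.log n) := by congr 1; ring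
          _ = Real.exp (Real.log n) * Real.exp (-(1 - η₂) * Real.log n) := Real.exp_add _ _
          _ = (n : ℝ) * Real.exp (-(1 - η₂) * Real.log n) := by rw [Real.exp_log hn']
      exact (Real.tendsto_exp_atTop.comp (hL.const_mul_atTop hη₂)).congr' heq
    rw [hg₂def]
    exact Real.tendsto_exp_atBot.comp (tendsto_neg_atTop_atBot.comp hhT)
  have hsum : Tendsto (fun n => ENNReal.ofReal (g₁ n) + ENNReal.ofReal (g₂ n))
      atTop (nhds 0) := by
    simpa using hg₁T.add hg₂T
  exact tendsto_of_tendsto_of_tendsto_of_le_of_le' tendsto_const_nhds hsum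
    (Eventually.of_forall fun n => zero_le) hbound

/-- maximum of an i.i.d. AEP(b,C) sample grows like (C^{-1} log n)^{1/b}. -/
theorem stmt0 (ν : Measure ℝ) (hν : IsProbabilityMeasure ν)
    (b C : ℝ) (hb : 0 < b) (hC : 0 < C) (hAEP : MemAEP ν b C)
    {Ω : Type*} [MeasurableSpace Ω] (μ : Measure Ω) (hμ : IsProbabilityMeasure μ)
    (X : ℕ → Ω → ℝ) (hmeas : ∀ i, Measurable (X i))
    (hdist : ∀ i, μ.map (X i) = ν)
    (hindep : ProbabilityTheory.iIndepFun X μ) :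
    ∀ ε > 0, Tendsto (fun n : ℕ =>
      μ {ω | ε < |(⨆ i ∈ Finset.range n, X i ω) / (Real.log n) ^ (1 / b)
                    - C ^ (-(1 / b))|})
      atTop (nhds 0) := by
  intro ε hε
  have htpos : 0 < C ^ (-(1 / b)) := Real.rpow_pos_of_pos hC _
  set ε' : ℝ := min ε (C ^ (-(1 / b)) / 2) with hε'def
  have hε'pos : 0 < ε' := lt_min hε (by linarith)
  have hε't : ε' < C ^ (-(1 / b)) := (min_le_right _ _).trans_lt (by linarith)
  have hkey := key_lemma ν hν b C hb hC hAEP μ hμ X hmeas hdist hindep ε' hε'pos hε't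
  refine tendsto_of_tendsto_of_tendsto_of_le_of_le' tendsto_const_nhds hkey
    (Eventually.of_forall fun n => zero_le) (Eventually.of_forall fun n => ?_)
  apply measure_mono
  intro ω hω
  simp only [Set.mem_setOf_eq] at hω ⊢
  exact lt_of_le_of_lt (min_le_left _ _) hω
end

section
/- Let F ∈ AEP(b, C) with b > 1 and C > 0, and let Λ(θ) = log ∫ e^{θx} dF(x) be its logarithmic moment-generating function. Then θ^{-b/(b-1)} Λ(θ) → C(b-1)(Cb)^{-b/(b-1)} as θ → ∞. -/
open MeasureTheory Filter Set

namespace Stmt2Aux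


noncomputable def phi (b c : ℝ) : ℝ := (b - 1) / b * (c * b) ^ (-(1 / (b - 1)))

variable {b c C θ x y M : ℝ}


lemma phi_pos (hb : 1 < b) (hc : 0 < c) : 0 < phi b c := by
  have hb0 : 0 < b := lt_trans one_pos hb
  exact mul_pos (div_pos (by linarith) hb0) (Real.rpow_pos_of_pos (mul_pos hc hb0) _)

lemma conj (hb : 1 < b) : (b / (b - 1)).HolderConjugate b := by
  have h1 : 0 < b - 1 := by linarith
  have h0 : 0 < b := by linarith
  exact ((Real.holderConjugate_iff_eq_conjExponent hb).2 rfl).symm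

lemma young_bound (hb : 1 < b) (hc : 0 < c) (hθ : 0 ≤ θ) (hx : 0 ≤ x) :
    θ * x - c * x ^ b ≤ phi b c * θ ^ (b / (b - 1)) := by
  have h1 : 0 < b - 1 := by linarith
  have h0 : 0 < b := by linarith
  have hD : 0 < c * b := mul_pos hc h0
  set A : ℝ := (c * b) ^ (-(1 / b)) with hA
  have hApos : 0 < A := Real.rpow_pos_of_pos hD _
  have key := Real.young_inequality_of_nonneg (mul_nonneg hApos.le hθ)
    (div_nonneg hx hApos.le) (conj hb)
  have hAb : A ^ b = (c * b)⁻¹ := by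
    rw [hA, ← Real.rpow_mul hD.le]
    rw [show -(1 / b) * b = -1 by field_simp]
    exact Real.rpow_neg_one _
  have hAp : A ^ (b / (b - 1)) = (c * b) ^ (-(1 / (b - 1))) := by
    rw [hA, ← Real.rpow_mul hD.le]
    congr 1
    field_simp
  have e1 : (x / A) ^ b / b = c * x ^ b := by
    rw [Real.div_rpow hx hApos.le, hAb]
    field_simp
  have e2 : (A * θ) ^ (b / (b - 1)) / (b / (b - 1)) = phi b c * θ ^ (b / (b - 1)) := by
    rw [Real.mul_rpow hApos.le hθ, hAp, phi]
    rw [div_div_eq_mul_div]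
    ring
  rw [e1, e2] at key
  have : A * θ * (x / A) = θ * x := by field_simp
  rw [this] at key
  linarith





lemma eval_at_max (hb : 1 < b) (hc : 0 < c) (hθ : 0 < θ) :
    θ * (θ / (c * b)) ^ (1 / (b - 1)) - c * ((θ / (c * b)) ^ (1 / (b - 1))) ^ b
      = phi b c * θ ^ (b / (b - 1)) := by
  have h1 : 0 < b - 1 := by linarith
  have h0 : 0 < b := by linarith
  have hD : 0 < c * b := mul_pos hc h0
  set r : ℝ := 1 / (b - 1) with hr
  have hrb : r * b = 1 + r := by rw [hr]; field_simp; ring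
  have hq : 0 < θ / (c * b) := div_pos hθ hD
  have hx : ((θ / (c * b)) ^ r) ^ b = (θ / (c * b)) ^ (1 + r) := by
    rw [← Real.rpow_mul hq.le, hrb]
  have hsplit : (θ / (c * b)) ^ (1 + r) = (θ / (c * b)) * (θ / (c * b)) ^ r := by
    rw [Real.rpow_add hq, Real.rpow_one]
  have hdiv : (θ / (c * b)) ^ r = θ ^ r / (c * b) ^ r :=
    Real.div_rpow hθ.le hD.le r
  have hneg : (c * b) ^ (-r) = ((c * b) ^ r)⁻¹ := Real.rpow_neg hD.le r
  have hp : θ ^ (b / (b - 1)) = θ * θ ^ r := by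
    rw [show b / (b - 1) = 1 + r by rw [hr]; field_simp; ring, Real.rpow_add hθ, Real.rpow_one]
  rw [hx, hsplit, hdiv, hp, phi, hneg]
  have hcbr : 0 < (c * b) ^ r := Real.rpow_pos_of_pos hD r
  field_simp

lemma linear_decay (hb : 1 < b) (hc : 0 < c) (hθ : 0 ≤ θ)
    (hX : ((θ + 1) / c) ^ (1 / (b - 1)) ≤ x) : θ * x - c * x ^ b ≤ -x := by
  have h1 : 0 < b - 1 := by linarith
  have hq : 0 < (θ + 1) / c := div_pos (by linarith) hc
  have hXpos : 0 < ((θ + 1) / c) ^ (1 / (b - 1)) := Real.rpow_pos_of_pos hq _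
  have hxpos : 0 < x := lt_of_lt_of_le hXpos hX
  have h2 : (((θ + 1) / c) ^ (1 / (b - 1))) ^ (b - 1) ≤ x ^ (b - 1) :=
    Real.rpow_le_rpow hXpos.le hX h1.le
  have h3 : (((θ + 1) / c) ^ (1 / (b - 1))) ^ (b - 1) = (θ + 1) / c := by
    rw [← Real.rpow_mul hq.le]
    rw [show 1 / (b - 1) * (b - 1) = 1 by field_simp]
    exact Real.rpow_one _
  have h4 : θ + 1 ≤ c * x ^ (b - 1) := by
    rw [h3] at h2
    rw [div_le_iff₀ hc] at h2
    linarith [h2]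
  have h5 : x ^ b = x * x ^ (b - 1) := by
    rw [show b = 1 + (b - 1) by ring, Real.rpow_add hxpos, Real.rpow_one]
    ring_nf
  have h6 : 0 ≤ x ^ (b-1) := Real.rpow_nonneg hxpos.le _
  nlinarith [mul_le_mul_of_nonneg_left h4 hxpos.le]

lemma sup_shift (hb : 1 < b) (hc : 0 < c) (hθ : 0 ≤ θ) (hy : 0 ≤ y) :
    θ * y - c * y ^ b
      ≤ phi b c * θ ^ (b / (b - 1)) + ((θ + 1) / c) ^ (1 / (b - 1)) - y := by
  have hXpos : 0 < ((θ + 1) / c) ^ (1 / (b - 1)) :=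
    Real.rpow_pos_of_pos (div_pos (by linarith) hc) _
  have hphi : 0 ≤ phi b c * θ ^ (b / (b - 1)) :=
    mul_nonneg (phi_pos hb hc).le (Real.rpow_nonneg hθ _)
  rcases le_or_gt y (((θ + 1) / c) ^ (1 / (b - 1))) with h | h
  · have := young_bound hb hc hθ hy; linarith
  · have := linear_decay hb hc hθ h.le; linarith

lemma mgf_upper (ν : Measure ℝ) [IsProbabilityMeasure ν] (hb : 1 < b) (hc : 0 < c)
    (hM : 0 ≤ M) (hs : ∀ x, M ≤ x → survival ν x ≤ Real.exp (-(c * x ^ b)))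
    (hθ : 0 ≤ θ) :
    mgf' ν θ ≤ ENNReal.ofReal (Real.exp (θ * M)
      + 2 * Real.exp (θ + (phi b c * θ ^ (b / (b - 1)) + ((θ + 1) / c) ^ (1 / (b - 1))))) := by
  set X := ((θ + 1) / c) ^ (1 / (b - 1)) with hX
  set G := phi b c * θ ^ (b / (b - 1)) + X with hG
  have hmeas : Measurable fun x : ℝ => ENNReal.ofReal (Real.exp (θ * x)) :=
    ((measurable_id.const_mul θ).exp).ennreal_ofReal
  have hsplit : mgf' ν θ
      = (∫⁻ x in Iic M, ENNReal.ofReal (Real.exp (θ * x)) ∂ν)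
        + ∫⁻ x in Ioi M, ENNReal.ofReal (Real.exp (θ * x)) ∂ν := by
    rw [mgf', ← lintegral_add_compl _ (measurableSet_Iic (a := M)), compl_Iic]
  have part1 : (∫⁻ x in Iic M, ENNReal.ofReal (Real.exp (θ * x)) ∂ν)
      ≤ ENNReal.ofReal (Real.exp (θ * M)) := by
    calc (∫⁻ x in Iic M, ENNReal.ofReal (Real.exp (θ * x)) ∂ν)
        ≤ ∫⁻ _x in Iic M, ENNReal.ofReal (Real.exp (θ * M)) ∂ν :=
          setLIntegral_mono measurable_const (fun x hx => ENNReal.ofReal_le_ofReal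
            (Real.exp_le_exp.2 (mul_le_mul_of_nonneg_left hx hθ)))
      _ = ENNReal.ofReal (Real.exp (θ * M)) * ν (Iic M) := setLIntegral_const _ _
      _ ≤ ENNReal.ofReal (Real.exp (θ * M)) * 1 := by
          gcongr; exact prob_le_one
      _ = _ := mul_one _
  have hcover : Ioi M ⊆ ⋃ k : ℕ, Ioc (M + k) (M + k + 1) := by
    intro x hx
    have hx' : 0 < x - M := sub_pos.2 hx
    have h1 : 1 ≤ Nat.ceil (x - M) := Nat.one_le_ceil_iff.2 hx'
    have h2 : ((Nat.ceil (x - M) - 1 : ℕ) : ℝ) = (Nat.ceil (x - M) : ℝ) - 1 := by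
      push_cast [h1]; ring
    refine mem_iUnion.2 ⟨Nat.ceil (x - M) - 1, ?_, ?_⟩
    · rw [h2]
      have := Nat.ceil_lt_add_one hx'.le
      linarith
    · rw [h2]
      have := Nat.le_ceil (x - M)
      linarith
  have hterm : ∀ k : ℕ, (∫⁻ x in Ioc (M + k) (M + k + 1),
        ENNReal.ofReal (Real.exp (θ * x)) ∂ν)
      ≤ ENNReal.ofReal (Real.exp (θ + G)) * ENNReal.ofReal (Real.exp (-1)) ^ k := by
    intro k
    have hMk : (0:ℝ) ≤ M + k := by positivity
    calc (∫⁻ x in Ioc (M + k) (M + k + 1), ENNReal.ofReal (Real.exp (θ * x)) ∂ν)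
        ≤ ∫⁻ _x in Ioc (M + k) (M + k + 1),
            ENNReal.ofReal (Real.exp (θ * (M + k + 1))) ∂ν :=
          setLIntegral_mono measurable_const (fun x hx => ENNReal.ofReal_le_ofReal
            (Real.exp_le_exp.2 (mul_le_mul_of_nonneg_left hx.2 hθ)))
      _ = ENNReal.ofReal (Real.exp (θ * (M + k + 1))) * ν (Ioc (M + k) (M + k + 1)) :=
          setLIntegral_const _ _
      _ ≤ ENNReal.ofReal (Real.exp (θ * (M + k + 1))) * ν (Ioi (M + k)) := by
          gcongr; exact Ioc_subset_Ioi_self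
      _ = ENNReal.ofReal (Real.exp (θ * (M + k + 1)))
            * ENNReal.ofReal (survival ν (M + k)) := by
          rw [survival, ENNReal.ofReal_toReal (measure_ne_top ν _)]
      _ ≤ ENNReal.ofReal (Real.exp (θ * (M + k + 1)))
            * ENNReal.ofReal (Real.exp (-(c * (M + k) ^ b))) :=
          mul_le_mul_right (ENNReal.ofReal_le_ofReal
            (hs (M + k) (le_add_of_nonneg_right (Nat.cast_nonneg k)))) _
      _ = ENNReal.ofReal (Real.exp (θ * (M + k + 1) - c * (M + k) ^ b)) := by
          rw [← ENNReal.ofReal_mul (Real.exp_pos _).le, ← Real.exp_add]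
          ring_nf
      _ ≤ ENNReal.ofReal (Real.exp (θ + G - k)) := by
          apply ENNReal.ofReal_le_ofReal
          apply Real.exp_le_exp.2
          have h := sup_shift hb hc hθ hMk
          have : θ * (M + k + 1) = θ + (θ * (M + k)) := by ring
          rw [hG, hX]
          nlinarith [h]
      _ = ENNReal.ofReal (Real.exp (θ + G)) * ENNReal.ofReal (Real.exp (-1)) ^ k := by
          rw [← ENNReal.ofReal_pow (Real.exp_pos _).le, ← Real.exp_nat_mul,
            ← ENNReal.ofReal_mul (Real.exp_pos _).le, ← Real.exp_add]
          congr 2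
          push_cast; ring
  have part2 : (∫⁻ x in Ioi M, ENNReal.ofReal (Real.exp (θ * x)) ∂ν)
      ≤ ENNReal.ofReal (Real.exp (θ + G)) * 2 := by
    calc (∫⁻ x in Ioi M, ENNReal.ofReal (Real.exp (θ * x)) ∂ν)
        ≤ ∫⁻ x in ⋃ k : ℕ, Ioc (M + k) (M + k + 1),
            ENNReal.ofReal (Real.exp (θ * x)) ∂ν := lintegral_mono_set hcover
      _ ≤ ∑' k : ℕ, ∫⁻ x in Ioc (M + k) (M + k + 1),
            ENNReal.ofReal (Real.exp (θ * x)) ∂ν := lintegral_iUnion_le _ _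
      _ ≤ ∑' k : ℕ, ENNReal.ofReal (Real.exp (θ + G)) * ENNReal.ofReal (Real.exp (-1)) ^ k :=
          ENNReal.tsum_le_tsum hterm
      _ = ENNReal.ofReal (Real.exp (θ + G)) * ∑' k : ℕ, ENNReal.ofReal (Real.exp (-1)) ^ k :=
          ENNReal.tsum_mul_left
      _ ≤ ENNReal.ofReal (Real.exp (θ + G)) * ∑' k : ℕ, (2⁻¹ : ENNReal) ^ k := by
          have hq : ENNReal.ofReal (Real.exp (-1)) ≤ (2⁻¹ : ENNReal) := by
            calc ENNReal.ofReal (Real.exp (-1)) ≤ ENNReal.ofReal 2⁻¹ := by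
                  apply ENNReal.ofReal_le_ofReal
                  rw [Real.exp_neg]
                  have h2 : (2:ℝ) ≤ Real.exp 1 := by
                    have := Real.add_one_le_exp (1:ℝ); linarith
                  rw [inv_le_inv₀ (Real.exp_pos 1) two_pos]
                  exact h2
              _ = 2⁻¹ := by
                  rw [← ENNReal.ofReal_ofNat 2, ← ENNReal.ofReal_inv_of_pos two_pos]
          exact mul_le_mul_right (ENNReal.tsum_le_tsum
            (fun k => pow_le_pow_left₀ (zero_le') hq k)) _
      _ = ENNReal.ofReal (Real.exp (θ + G)) * 2 := by
          rw [ENNReal.tsum_geometric, ENNReal.one_sub_inv_two, inv_inv]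
  calc mgf' ν θ ≤ ENNReal.ofReal (Real.exp (θ * M)) + ENNReal.ofReal (Real.exp (θ + G)) * 2 := by
        rw [hsplit]; exact add_le_add part1 part2
    _ = ENNReal.ofReal (Real.exp (θ * M) + 2 * Real.exp (θ + G)) := by
        rw [show ENNReal.ofReal (Real.exp (θ + G)) * 2 = ENNReal.ofReal (2 * Real.exp (θ + G)) by
          rw [ENNReal.ofReal_mul two_pos.le, ENNReal.ofReal_ofNat, mul_comm],
          ← ENNReal.ofReal_add (Real.exp_pos _).le (by positivity)]

lemma log_le_of_le {t R : ℝ} (ht : 0 ≤ t) (hR : 1 ≤ R) (h : t ≤ R) :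
    Real.log t ≤ Real.log R := by
  rcases eq_or_lt_of_le ht with h0 | h0
  · rw [← h0, Real.log_zero]; exact Real.log_nonneg hR
  · exact Real.log_le_log h0 h

lemma cgf_upper (ν : Measure ℝ) [IsProbabilityMeasure ν] (hb : 1 < b) (hc : 0 < c)
    (hM : 0 ≤ M) (hs : ∀ x, M ≤ x → survival ν x ≤ Real.exp (-(c * x ^ b)))
    (hθ : 0 ≤ θ) :
    cgf' ν θ ≤ 2 * Real.log 2 + θ * (M + 1)
      + ((θ + 1) / c) ^ (1 / (b - 1)) + phi b c * θ ^ (b / (b - 1)) := by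
  set X := ((θ + 1) / c) ^ (1 / (b - 1)) with hX
  set G := phi b c * θ ^ (b / (b - 1)) + X with hG
  have key := mgf_upper ν hb hc hM hs hθ
  have hR1 : (1:ℝ) ≤ Real.exp (θ * M) := Real.one_le_exp (by positivity)
  have hR2 : (1:ℝ) ≤ 2 * Real.exp (θ + G) := by
    have hGpos : 0 ≤ G := by
      rw [hG, hX]
      have : 0 < ((θ + 1) / c) ^ (1 / (b - 1)) :=
        Real.rpow_pos_of_pos (div_pos (by linarith) hc) _
      have := mul_nonneg (phi_pos hb hc).le (Real.rpow_nonneg hθ (b / (b - 1)))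
      linarith
    have := Real.one_le_exp (by linarith : (0:ℝ) ≤ θ + G)
    linarith
  have htR : (mgf' ν θ).toReal ≤ Real.exp (θ * M) + 2 * Real.exp (θ + G) := by
    rw [hG]
    exact ENNReal.toReal_le_of_le_ofReal (by positivity) key
  have hprod : Real.exp (θ * M) + 2 * Real.exp (θ + G)
      ≤ 2 * (Real.exp (θ * M) * (2 * Real.exp (θ + G))) := by nlinarith
  have := log_le_of_le ENNReal.toReal_nonneg (by linarith) (le_trans htR hprod)
  rw [cgf'] at *
  calc Real.log (mgf' ν θ).toReal
      ≤ Real.log (2 * (Real.exp (θ * M) * (2 * Real.exp (θ + G)))) := this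
    _ = Real.log 2 + (θ * M + (Real.log 2 + (θ + G))) := by
        rw [Real.log_mul two_ne_zero (by positivity), Real.log_mul (by positivity) (by positivity),
          Real.log_mul two_ne_zero (by positivity), Real.log_exp, Real.log_exp]
    _ = 2 * Real.log 2 + θ * (M + 1) + X + phi b c * θ ^ (b / (b - 1)) := by
        rw [hG]; ring

lemma cgf_lower (ν : Measure ℝ) [IsProbabilityMeasure ν] (hb : 1 < b) (hc : 0 < c)
    (hs : ∀ x, M ≤ x → Real.exp (-(c * x ^ b)) ≤ survival ν x)
    (hfin : mgf' ν θ ≠ ⊤) (hθ : 0 < θ)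
    (hxM : M ≤ (θ / (c * b)) ^ (1 / (b - 1))) :
    phi b c * θ ^ (b / (b - 1)) ≤ cgf' ν θ := by
  set xs := (θ / (c * b)) ^ (1 / (b - 1)) with hxs
  have hmono : ENNReal.ofReal (Real.exp (θ * xs - c * xs ^ b)) ≤ mgf' ν θ := by
    calc ENNReal.ofReal (Real.exp (θ * xs - c * xs ^ b))
        = ENNReal.ofReal (Real.exp (θ * xs)) * ENNReal.ofReal (Real.exp (-(c * xs ^ b))) := by
          rw [← ENNReal.ofReal_mul (Real.exp_pos _).le, ← Real.exp_add]; ring_nf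
      _ ≤ ENNReal.ofReal (Real.exp (θ * xs)) * ENNReal.ofReal (survival ν xs) :=
          mul_le_mul_right (ENNReal.ofReal_le_ofReal (hs xs hxM)) _
      _ = ENNReal.ofReal (Real.exp (θ * xs)) * ν (Ioi xs) := by
          rw [survival, ENNReal.ofReal_toReal (measure_ne_top ν _)]
      _ = ∫⁻ _x in Ioi xs, ENNReal.ofReal (Real.exp (θ * xs)) ∂ν :=
          (setLIntegral_const _ _).symm
      _ ≤ ∫⁻ x in Ioi xs, ENNReal.ofReal (Real.exp (θ * x)) ∂ν :=
          setLIntegral_mono ((measurable_id.const_mul θ).exp).ennreal_ofReal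
            (fun x hx => ENNReal.ofReal_le_ofReal
              (Real.exp_le_exp.2 (mul_le_mul_of_nonneg_left (le_of_lt hx) hθ.le)))
      _ ≤ ∫⁻ x, ENNReal.ofReal (Real.exp (θ * x)) ∂ν := setLIntegral_le_lintegral _ _
  have h2 : Real.exp (θ * xs - c * xs ^ b) ≤ (mgf' ν θ).toReal :=
    (ENNReal.ofReal_le_iff_le_toReal hfin).1 hmono
  have h3 := Real.log_le_log (Real.exp_pos _) h2
  rw [Real.log_exp] at h3
  rw [cgf']
  calc phi b c * θ ^ (b / (b - 1)) = θ * xs - c * xs ^ b := (eval_at_max hb hc hθ).symm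
    _ ≤ _ := h3

lemma err_tendsto (hb : 1 < b) (hc : 0 < c) (M : ℝ) :
    Tendsto (fun θ : ℝ => (2 * Real.log 2 + θ * (M + 1) + ((θ + 1) / c) ^ (1 / (b - 1)))
      / θ ^ (b / (b - 1))) atTop (nhds 0) := by
  have h1 : 0 < b - 1 := by linarith
  have h0 : 0 < b := by linarith
  have hp : 0 < b / (b - 1) := div_pos h0 h1
  have hp1 : 1 < b / (b - 1) := by rw [lt_div_iff₀ h1]; linarith
  have f1 : Tendsto (fun θ : ℝ => (2 * Real.log 2) / θ ^ (b / (b - 1))) atTop (nhds 0) :=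
    Tendsto.div_atTop tendsto_const_nhds (tendsto_rpow_atTop hp)
  have f2 : Tendsto (fun θ : ℝ => θ * (M + 1) / θ ^ (b / (b - 1))) atTop (nhds 0) := by
    have key : Tendsto (fun θ : ℝ => (M + 1) * θ ^ (-(b / (b - 1) - 1))) atTop (nhds 0) := by
      have := (tendsto_rpow_neg_atTop (by linarith : 0 < b / (b - 1) - 1)).const_mul (M + 1)
      simpa using this
    apply key.congr'
    filter_upwards [eventually_gt_atTop (0:ℝ)] with θ hθ
    rw [neg_sub, Real.rpow_sub hθ, Real.rpow_one]
    field_simp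
  have f3 : Tendsto (fun θ : ℝ => ((θ + 1) / c) ^ (1 / (b - 1)) / θ ^ (b / (b - 1)))
      atTop (nhds 0) := by
    apply squeeze_zero' (g := fun θ : ℝ => (2 / c) ^ (1 / (b - 1)) * θ ^ (-(1:ℝ)))
    · filter_upwards [eventually_ge_atTop (1:ℝ)] with θ hθ
      have h : (0:ℝ) < θ := by linarith
      positivity
    · filter_upwards [eventually_ge_atTop (1:ℝ)] with θ hθ
      have hθ0 : (0:ℝ) < θ := by linarith
      have hnum : ((θ + 1) / c) ^ (1 / (b - 1)) ≤ (2 / c * θ) ^ (1 / (b - 1)) := by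
        apply Real.rpow_le_rpow (by positivity) _ (by positivity)
        calc (θ + 1) / c ≤ 2 * θ / c := by gcongr; linarith
          _ = 2 / c * θ := by ring
      have hsplit : (2 / c * θ) ^ (1 / (b - 1)) = (2 / c) ^ (1 / (b - 1)) * θ ^ (1 / (b - 1)) :=
        Real.mul_rpow (by positivity) hθ0.le
      have hpow : θ ^ (1 / (b - 1)) / θ ^ (b / (b - 1)) = θ ^ (-(1:ℝ)) := by
        rw [← Real.rpow_sub hθ0]
        congr 1
        field_simp
        ring
      calc ((θ + 1) / c) ^ (1 / (b - 1)) / θ ^ (b / (b - 1))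
          ≤ (2 / c * θ) ^ (1 / (b - 1)) / θ ^ (b / (b - 1)) := by gcongr
        _ = (2 / c) ^ (1 / (b - 1)) * θ ^ (-(1:ℝ)) := by
            rw [hsplit, mul_div_assoc, hpow]
    · have := (tendsto_rpow_neg_atTop (by norm_num : (0:ℝ) < 1)).const_mul
        ((2 / c) ^ (1 / (b - 1)))
      simpa using this
  have := (f1.add f2).add f3
  simp only [add_zero] at this
  apply this.congr'
  filter_upwards [] with θ
  rw [← add_div, ← add_div]

lemma const_eq (hb : 1 < b) (hC : 0 < C) :
    C * (b - 1) * (C * b) ^ (-(b / (b - 1))) = phi b C := by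
  have h1 : 0 < b - 1 := by linarith
  have h0 : 0 < b := by linarith
  have hD : 0 < C * b := mul_pos hC h0
  have hexp : -(b / (b - 1)) = -(1 / (b - 1)) + -1 := by field_simp; ring
  rw [hexp, Real.rpow_add hD, Real.rpow_neg_one, phi]
  field_simp

lemma phi_continuousAt (hb : 1 < b) (hC : 0 < C) : ContinuousAt (phi b) C := by
  have h0 : 0 < b := by linarith
  unfold phi
  apply ContinuousAt.mul continuousAt_const
  exact (continuous_mul_right b).continuousAt.rpow_const
    (Or.inl (ne_of_gt (mul_pos hC h0)))


end Stmt2Aux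

open Stmt2Aux in
/-- growth of the log-MGF of an AEP(b,C) distribution, b > 1. -/
theorem stmt2 (ν : Measure ℝ) (hν : IsProbabilityMeasure ν)
    (b C : ℝ) (hb : 1 < b) (hC : 0 < C) (hAEP : MemAEP ν b C) :
    Tendsto (fun θ : ℝ => cgf' ν θ / θ ^ (b / (b - 1))) atTop
      (nhds (C * (b - 1) * (C * b) ^ (-(b / (b - 1))))) := by

  have h1 : 0 < b - 1 := by linarith
  have h0 : 0 < b := by linarith
  rw [const_eq hb hC]
  have hup : ∀ c : ℝ, 0 < c → c < C → ∃ M : ℝ, 0 ≤ M ∧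
      ∀ x, M ≤ x → survival ν x ≤ Real.exp (-(c * x ^ b)) := by
    intro c hc hcC
    have hev : ∀ᶠ x : ℝ in atTop, 1 ≤ x ∧ Real.log (survival ν x) / x ^ b < -c :=
      (eventually_ge_atTop 1).and (hAEP.eventually_lt_const (by linarith))
    obtain ⟨M₀, hM₀⟩ := eventually_atTop.1 hev
    refine ⟨max M₀ 0, le_max_right _ _, fun x hx => ?_⟩
    obtain ⟨hx1, hxlog⟩ := hM₀ x (le_trans (le_max_left _ _) hx)
    have hxb : 0 < x ^ b := Real.rpow_pos_of_pos (by linarith) b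
    have hlog : Real.log (survival ν x) < -(c * x ^ b) := by
      rw [div_lt_iff₀ hxb] at hxlog; linarith [hxlog]
    have hsnn : 0 ≤ survival ν x := ENNReal.toReal_nonneg
    have hpos : 0 < survival ν x := by
      rcases eq_or_lt_of_le hsnn with h | h
      · exfalso; rw [← h, Real.log_zero] at hlog; nlinarith
      · exact h
    calc survival ν x = Real.exp (Real.log (survival ν x)) := (Real.exp_log hpos).symm
      _ ≤ Real.exp (-(c * x ^ b)) := Real.exp_le_exp.2 hlog.le
  have hlow : ∀ c : ℝ, C < c → ∃ M : ℝ,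
      ∀ x, M ≤ x → Real.exp (-(c * x ^ b)) ≤ survival ν x := by
    intro c hcC
    have hev : ∀ᶠ x : ℝ in atTop, 1 ≤ x ∧ Real.log (survival ν x) / x ^ b < -(C/2)
        ∧ -c < Real.log (survival ν x) / x ^ b :=
      (eventually_ge_atTop 1).and ((hAEP.eventually_lt_const (by linarith)).and
        (hAEP.eventually_const_lt (by linarith)))
    obtain ⟨M₀, hM₀⟩ := eventually_atTop.1 hev
    refine ⟨M₀, fun x hx => ?_⟩
    obtain ⟨hx1, hup', hlo'⟩ := hM₀ x hx
    have hxb : 0 < x ^ b := Real.rpow_pos_of_pos (by linarith) b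
    have hlog : Real.log (survival ν x) < -(C/2 * x ^ b) := by
      rw [div_lt_iff₀ hxb] at hup'; linarith [hup']
    have hsnn : 0 ≤ survival ν x := ENNReal.toReal_nonneg
    have hpos : 0 < survival ν x := by
      rcases eq_or_lt_of_le hsnn with h | h
      · exfalso; rw [← h, Real.log_zero] at hlog; nlinarith
      · exact h
    have hlog2 : -(c * x ^ b) ≤ Real.log (survival ν x) := by
      rw [lt_div_iff₀ hxb] at hlo'; nlinarith [hlo']
    calc Real.exp (-(c * x ^ b)) ≤ Real.exp (Real.log (survival ν x)) :=
          Real.exp_le_exp.2 hlog2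
      _ = survival ν x := Real.exp_log hpos
  obtain ⟨M₀, hM₀0, hM₀⟩ := hup (C/2) (half_pos hC) (half_lt_self hC)
  have hfin : ∀ θ : ℝ, 0 ≤ θ → mgf' ν θ ≠ ⊤ := fun θ hθ =>
    (lt_of_le_of_lt (mgf_upper ν hb (half_pos hC) hM₀0 hM₀ hθ) ENNReal.ofReal_lt_top).ne
  refine tendsto_order.2 ⟨?_, ?_⟩
  · intro a ha
    have hev := (((phi_continuousAt hb hC).eventually_const_lt ha).filter_mono
      (nhdsWithin_le_nhds (s := Ioi C))).and eventually_mem_nhdsWithin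
    obtain ⟨c, hac, hcC⟩ := hev.exists
    have hcC' : C < c := hcC
    have hcpos : 0 < c := lt_trans hC hcC'
    obtain ⟨M₁, hM₁⟩ := hlow c hcC'
    have hxs : Tendsto (fun θ : ℝ => (θ / (c * b)) ^ (1 / (b - 1))) atTop atTop := by
      apply (tendsto_rpow_atTop (by positivity : (0:ℝ) < 1/(b-1))).comp
      exact tendsto_id.atTop_div_const (mul_pos hcpos h0)
    filter_upwards [eventually_ge_atTop (1:ℝ), hxs.eventually_ge_atTop M₁] with θ hθ1 hθM
    have hθ0 : (0:ℝ) < θ := by linarith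
    have hlower := cgf_lower ν hb hcpos hM₁ (hfin θ hθ0.le) hθ0 hθM
    have hpp : 0 < θ ^ (b/(b-1)) := Real.rpow_pos_of_pos hθ0 _
    calc a < phi b c := hac
      _ ≤ cgf' ν θ / θ ^ (b/(b-1)) := (le_div_iff₀ hpp).2 hlower
  · intro a ha
    have hev := ((((phi_continuousAt hb hC).eventually_lt_const ha).and
      (eventually_gt_nhds hC)).filter_mono
      (nhdsWithin_le_nhds (s := Iio C))).and eventually_mem_nhdsWithin
    obtain ⟨c, ⟨hac, hcpos⟩, hcC⟩ := hev.exists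
    have hcC' : c < C := hcC
    obtain ⟨M, hM0, hM⟩ := hup c hcpos hcC'
    have herr := err_tendsto hb hcpos M
    have hgap : (0:ℝ) < a - phi b c := by linarith
    filter_upwards [eventually_ge_atTop (1:ℝ), herr.eventually_lt_const hgap] with θ hθ1 hθe
    have hθ0 : (0:ℝ) < θ := by linarith
    have hpp : 0 < θ ^ (b/(b-1)) := Real.rpow_pos_of_pos hθ0 _
    have hupper := cgf_upper ν hb hcpos hM0 hM hθ0.le
    have key : cgf' ν θ / θ ^ (b / (b - 1))
        ≤ (2 * Real.log 2 + θ * (M + 1) + ((θ + 1) / c) ^ (1 / (b - 1))) / θ ^ (b / (b - 1))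
          + phi b c := by
      have heq : (2 * Real.log 2 + θ * (M + 1) + ((θ + 1) / c) ^ (1 / (b - 1)))
            / θ ^ (b/(b-1)) + phi b c
          = (2 * Real.log 2 + θ * (M + 1) + ((θ + 1) / c) ^ (1/(b-1))
            + phi b c * θ^(b/(b-1))) / θ^(b/(b-1)) := by
        field_simp
      rw [heq]
      gcongr
    calc cgf' ν θ / θ ^ (b/(b-1))
        ≤ (2 * Real.log 2 + θ * (M + 1) + ((θ + 1) / c) ^ (1 / (b - 1))) / θ ^ (b / (b - 1))
          + phi b c := key
      _ < a := by linarith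
end

section
/- Consider site percolation on ℤ^d with parameter p < p_c, and let S_m denote the size of the largest open cluster within the box V_m = {1, ..., m}^d. Then S_m / log m → d / ζ_p in probability as m → ∞, where ζ_p = -lim_{k→∞} (1/k) log P_p(S ≥ k) ∈ (0, ∞). -/
open MeasureTheory Filter Set
open scoped Classical

namespace Perc

abbrev Vertex (d : ℕ) := Fin d → ℤ

/-- Nearest-neighbor adjacency on ℤ^d. -/
def adj {d : ℕ} (v w : Vertex d) : Prop := (∑ i, (v i - w i).natAbs) = 1

/-- Adjacency between open vertices in configuration ω. -/
def openAdj {d : ℕ} (ω : Vertex d → Bool) (v w : Vertex d) : Prop :=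
  adj v w ∧ ω v = true ∧ ω w = true

/-- Open cluster at v (empty if v is closed). -/
def cluster {d : ℕ} (ω : Vertex d → Bool) (v : Vertex d) : Set (Vertex d) :=
  {w | ω v = true ∧ Relation.ReflTransGen (openAdj ω) v w}

/-- Event: the open cluster at v contains at least k vertices. -/
def clusterGE {d : ℕ} (v : Vertex d) (k : ℕ) : Set (Vertex d → Bool) :=
  {ω | ∃ T : Finset (Vertex d), ↑T ⊆ cluster ω v ∧ T.card = k}

/-- Event: the open cluster at v contains at least x vertices (real threshold). -/
def clusterGEr {d : ℕ} (v : Vertex d) (x : ℝ) : Set (Vertex d → Bool) :=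
  {ω | ∃ T : Finset (Vertex d), ↑T ⊆ cluster ω v ∧ x ≤ (T.card : ℝ)}

/-- Event: the open cluster at v has exactly k vertices (and is finite). -/
def clusterEq {d : ℕ} (v : Vertex d) (k : ℕ) : Set (Vertex d → Bool) :=
  {ω | (cluster ω v).Finite ∧ (cluster ω v).ncard = k}

/-- Event: the open cluster at v is finite of size at least k. -/
def clusterFinGE {d : ℕ} (v : Vertex d) (k : ℕ) : Set (Vertex d → Bool) :=
  {ω | (cluster ω v).Finite ∧ k ≤ (cluster ω v).ncard}

/-- μ is (possibly inhomogeneous) Bernoulli site percolation with parameters q. -/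
def IsSitePerc {d : ℕ} (μ : Measure (Vertex d → Bool)) (q : Vertex d → ℝ) : Prop :=
  IsProbabilityMeasure μ ∧
  ∀ (s : Finset (Vertex d)) (f : Vertex d → Bool),
    μ {ω | ∀ v ∈ s, ω v = f v}
      = ∏ v ∈ s, (if f v then ENNReal.ofReal (q v) else ENNReal.ofReal (1 - q v))

/-- μ is Bernoulli site percolation with parameter p. -/
def IsBernoulliPerc {d : ℕ} (μ : Measure (Vertex d → Bool)) (p : ℝ) : Prop :=
  IsSitePerc μ (fun _ => p)

def origin (d : ℕ) : Vertex d := fun _ => 0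

/-- Critical probability for site percolation on ℤ^d. -/
noncomputable def pc (d : ℕ) : ℝ :=
  sSup {p : ℝ | 0 ≤ p ∧ p ≤ 1 ∧ ∀ μ : Measure (Vertex d → Bool),
    IsBernoulliPerc μ p → μ {ω | (cluster ω (origin d)).Infinite} = 0}

/-- The box V_m = {1, ..., m}^d. -/
def box (d m : ℕ) : Set (Vertex d) := {v | ∀ i, 1 ≤ v i ∧ v i ≤ (m : ℤ)}

/-- Adjacency between open vertices within a region B. -/
def openAdjIn {d : ℕ} (B : Set (Vertex d)) (ω : Vertex d → Bool) (v w : Vertex d) : Prop :=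
  adj v w ∧ v ∈ B ∧ w ∈ B ∧ ω v = true ∧ ω w = true

/-- Open cluster at v within the region B. -/
def clusterIn {d : ℕ} (B : Set (Vertex d)) (ω : Vertex d → Bool) (v : Vertex d) :
    Set (Vertex d) :=
  {w | v ∈ B ∧ ω v = true ∧ Relation.ReflTransGen (openAdjIn B ω) v w}

/-- S_m: the size of the largest open cluster within the box V_m. -/
noncomputable def largest (d m : ℕ) (ω : Vertex d → Bool) : ℕ :=
  sSup {n : ℕ | ∃ v : Vertex d, n = (clusterIn (box d m) ω v).ncard}

/-- N_m(k): the number of open clusters of size exactly k within the box V_m. -/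
noncomputable def Nm (d m k : ℕ) (ω : Vertex d → Bool) : ℝ :=
  ∑ v ∈ Fintype.piFinset (fun _ : Fin d => Finset.Icc (1 : ℤ) (m : ℤ)),
    if (clusterIn (box d m) ω v).ncard = k then (1 : ℝ) / k else 0

/-- ℓ^∞ distance between vertices. -/
def linfDist {d : ℕ} (v w : Vertex d) : ℕ :=
  Finset.univ.sup fun i => (v i - w i).natAbs

end Perc

namespace Perc6
open Perc

variable {d : ℕ}

/-! ### ℓ∞ geometry -/

lemma linf_le_iff {v w : Vertex d} {R : ℕ} :
    linfDist v w ≤ R ↔ ∀ i, (v i - w i).natAbs ≤ R := by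
  simp [linfDist, Finset.sup_le_iff]

lemma linf_self (v : Vertex d) : linfDist v v = 0 := by
  simp [linfDist]

lemma linf_coord_le (v w : Vertex d) (i : Fin d) :
    (v i - w i).natAbs ≤ linfDist v w :=
  Finset.le_sup (f := fun i => (v i - w i).natAbs) (Finset.mem_univ i)

lemma linf_triangle (v b w : Vertex d) :
    linfDist v w ≤ linfDist v b + linfDist b w := by
  have key : ∀ i, (v i - w i).natAbs ≤ linfDist v b + linfDist b w := fun i => by
    have h1 := linf_coord_le v b i
    have h2 := linf_coord_le b w i
    omega
  exact Finset.sup_le fun i _ => key i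

lemma adj_linf {v w : Vertex d} (h : adj v w) : linfDist v w ≤ 1 := by
  have key : ∀ i, (v i - w i).natAbs ≤ 1 := fun i =>
    le_trans (Finset.single_le_sum (f := fun j => (v j - w j).natAbs)
      (fun j _ => Nat.zero_le _) (Finset.mem_univ i)) (le_of_eq h)
  exact Finset.sup_le fun i _ => key i

/-- ℓ∞ ball. -/
def ballSet (c : Vertex d) (R : ℕ) : Set (Vertex d) := {x | linfDist c x ≤ R}

lemma center_mem_ballSet (c : Vertex d) (R : ℕ) : c ∈ ballSet c R := by
  simp [ballSet, linf_self]

lemma ballSet_mono (c : Vertex d) {R R' : ℕ} (h : R ≤ R') :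
    ballSet c R ⊆ ballSet c R' := fun x hx => le_trans hx h

noncomputable def ballFinset (c : Vertex d) (R : ℕ) : Finset (Vertex d) :=
  Fintype.piFinset fun i => Finset.Icc (c i - R) (c i + R)

lemma mem_ballFinset {c : Vertex d} {R : ℕ} {x : Vertex d} :
    x ∈ ballFinset c R ↔ x ∈ ballSet c R := by
  simp only [ballFinset, Fintype.mem_piFinset, Finset.mem_Icc, ballSet, Set.mem_setOf_eq,
    linf_le_iff]
  refine forall_congr' fun i => ?_
  omega

lemma ballSet_finite (c : Vertex d) (R : ℕ) : (ballSet c R).Finite := by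
  have : ballSet c R = ↑(ballFinset c R) := by
    ext x; simp [mem_ballFinset]
  rw [this]; exact (ballFinset c R).finite_toSet

/-! ### cluster lemmas -/

lemma mem_cluster_of_rtg {ω : Vertex d → Bool} {v w : Vertex d}
    (hv : ω v = true) (h : Relation.ReflTransGen (openAdj ω) v w) :
    w ∈ cluster ω v := ⟨hv, h⟩

lemma exists_mem_cluster_linf {ω : Vertex d → Bool} {v w : Vertex d}
    (hv : ω v = true) (hw : Relation.ReflTransGen (openAdj ω) v w) :
    ∀ j, j ≤ linfDist v w → ∃ x, x ∈ cluster ω v ∧ linfDist v x = j := by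
  induction hw with
  | refl =>
    intro j hj
    rw [linf_self] at hj
    exact ⟨v, mem_cluster_of_rtg hv Relation.ReflTransGen.refl, by rw [linf_self]; omega⟩
  | @tail b c hvb hbc ih =>
    intro j hj
    rcases le_or_gt j (linfDist v b) with h | h
    · exact ih j h
    · refine ⟨c, mem_cluster_of_rtg hv (hvb.tail hbc), ?_⟩
      have h1 : linfDist v c ≤ linfDist v b + linfDist b c := linf_triangle v b c
      have h2 : linfDist b c ≤ 1 := adj_linf hbc.1
      omega

lemma clusterGE_of_far {ω : Vertex d → Bool} {v w : Vertex d} {r : ℕ}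
    (hw : w ∈ cluster ω v) (hr : r ≤ linfDist v w) : ω ∈ clusterGE v (r + 1) := by
  classical
  have hv : ω v = true := hw.1
  have hch : ∀ j, j ≤ r → ∃ x, x ∈ cluster ω v ∧ linfDist v x = j := by
    intro j hj
    exact exists_mem_cluster_linf hv hw.2 j (le_trans hj hr)
  choose f hf1 hf2 using hch
  set g : ℕ → Vertex d := fun j => if h : j ≤ r then f j h else v with hg
  refine ⟨(Finset.range (r + 1)).image g, ?_, ?_⟩
  · intro x hx
    simp only [Finset.coe_image, Set.mem_image, Finset.coe_range, Set.mem_Iio] at hx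
    obtain ⟨j, hj, rfl⟩ := hx
    have hj' : j ≤ r := by omega
    simp only [hg, hj', dif_pos]
    exact hf1 j hj'
  · rw [Finset.card_image_of_injOn, Finset.card_range]
    intro a ha b hb hab
    simp only [Finset.coe_range, Set.mem_Iio] at ha hb
    have ha' : a ≤ r := by omega
    have hb' : b ≤ r := by omega
    have : linfDist v (g a) = linfDist v (g b) := by rw [hab]
    simp only [hg, ha', hb', dif_pos] at this
    rw [hf2 a ha', hf2 b hb'] at this
    exact this

lemma cluster_subset_ball {ω : Vertex d → Bool} {v : Vertex d} {r : ℕ}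
    (h : ω ∉ clusterGE v (r + 1)) : cluster ω v ⊆ ballSet v r := by
  intro w hw
  by_contra hb
  simp only [ballSet, Set.mem_setOf_eq, not_le] at hb
  exact h (clusterGE_of_far hw (by omega))

lemma clusterIn_subset_cluster {B : Set (Vertex d)} {ω : Vertex d → Bool} {v : Vertex d} :
    clusterIn B ω v ⊆ cluster ω v := by
  rintro w ⟨hvB, hv, h⟩
  exact ⟨hv, Relation.ReflTransGen.mono (fun a b hab => ⟨hab.1, hab.2.2.2⟩) _ _ h⟩

lemma clusterIn_subset {B : Set (Vertex d)} {ω : Vertex d → Bool} {v : Vertex d} :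
    clusterIn B ω v ⊆ B := by
  rintro w ⟨hvB, hv, h⟩
  rcases h.cases_tail with h | ⟨b, _, hbw⟩
  · exact h ▸ hvB
  · exact hbw.2.2.1

lemma clusterIn_eq_cluster {B : Set (Vertex d)} {ω : Vertex d → Bool} {v : Vertex d}
    (hvB : v ∈ B) (hsub : cluster ω v ⊆ B) : clusterIn B ω v = cluster ω v := by
  apply Set.Subset.antisymm clusterIn_subset_cluster
  rintro w ⟨hv, h⟩
  refine ⟨hvB, hv, ?_⟩
  induction h with
  | refl => exact Relation.ReflTransGen.refl
  | @tail b c hvb hbc ih =>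
    exact ih.tail ⟨hbc.1, hsub ⟨hv, hvb⟩, hsub ⟨hv, hvb.tail hbc⟩, hbc.2.1, hbc.2.2⟩

lemma cluster_local {ω ω' : Vertex d → Bool} {v : Vertex d} {r : ℕ}
    (hag : ∀ x ∈ ballSet v (r + 1), ω' x = ω x)
    (hsub : cluster ω v ⊆ ballSet v r) : cluster ω' v = cluster ω v := by
  have hvv : ω' v = ω v := hag v (center_mem_ballSet v (r + 1))
  cases hov : ω v with
  | false =>
    ext w
    simp only [cluster, Set.mem_setOf_eq, hov, hvv]
    simp
  | true =>
    have hov' : ω' v = true := by rw [hvv, hov]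
    ext w
    constructor
    · rintro ⟨-, h⟩
      refine ⟨hov, ?_⟩
      have : ∀ w, Relation.ReflTransGen (openAdj ω') v w → w ∈ cluster ω v := by
        intro w h
        induction h with
        | refl => exact mem_cluster_of_rtg hov Relation.ReflTransGen.refl
        | @tail b c hvb hbc ih =>
          have hbball : b ∈ ballSet v r := hsub ih
          have hcball : c ∈ ballSet v (r + 1) := by
            have h1 : linfDist v c ≤ linfDist v b + linfDist b c := linf_triangle v b c
            have h2 : linfDist b c ≤ 1 := adj_linf hbc.1
            have h3 : linfDist v b ≤ r := hbball
            exact le_trans h1 (by omega)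
          have hob : ω b = true := by
            rw [← hag b (ballSet_mono v (by omega) hbball)]; exact hbc.2.1
          have hoc : ω c = true := by rw [← hag c hcball]; exact hbc.2.2
          exact ⟨hov, ih.2.tail ⟨hbc.1, hob, hoc⟩⟩
      exact (this w h).2
    · rintro ⟨-, h⟩
      refine ⟨hov', ?_⟩
      induction h with
      | refl => exact Relation.ReflTransGen.refl
      | @tail b c hvb hbc ih =>
        have hbball : b ∈ ballSet v r := hsub ⟨hov, hvb⟩
        have hcball : c ∈ ballSet v r := hsub ⟨hov, hvb.tail hbc⟩
        have hob : ω' b = true := by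
          rw [hag b (ballSet_mono v (by omega) hbball)]; exact hbc.2.1
        have hoc : ω' c = true := by
          rw [hag c (ballSet_mono v (by omega) hcball)]; exact hbc.2.2
        exact ih.tail ⟨hbc.1, hob, hoc⟩

lemma clusterGE_congr {ω ω' : Vertex d → Bool} {v : Vertex d} {k : ℕ}
    (h : cluster ω' v = cluster ω v) : ω ∈ clusterGE v k ↔ ω' ∈ clusterGE v k := by
  simp only [clusterGE, Set.mem_setOf_eq, h]

/-- The event: cluster at c has size in [k, 2k]. -/
def Gset (c : Vertex d) (k : ℕ) : Set (Vertex d → Bool) :=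
  clusterGE c k \ clusterGE c (2 * k + 1)

lemma Gset_local {ω ω' : Vertex d → Bool} {c : Vertex d} {k : ℕ}
    (hag : ∀ x ∈ ballSet c (2 * k + 1), ω' x = ω x) (hω : ω ∈ Gset c k) :
    ω' ∈ Gset c k := by
  obtain ⟨hGE, hnot⟩ := hω
  have hsub : cluster ω c ⊆ ballSet c (2 * k) := cluster_subset_ball hnot
  have heq : cluster ω' c = cluster ω c := cluster_local hag hsub
  exact ⟨(clusterGE_congr heq).mp hGE, fun h => hnot ((clusterGE_congr heq).mpr h)⟩

lemma Gset_clusterIn {ω : Vertex d → Bool} {c : Vertex d} {k : ℕ} {B : Set (Vertex d)}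
    (hω : ω ∈ Gset c k) (hB : B.Finite) (hcB : ballSet c (2 * k) ⊆ B) :
    k ≤ (clusterIn B ω c).ncard := by
  obtain ⟨hGE, hnot⟩ := hω
  have hsub : cluster ω c ⊆ ballSet c (2 * k) := cluster_subset_ball hnot
  have hceq : clusterIn B ω c = cluster ω c :=
    clusterIn_eq_cluster (hcB (center_mem_ballSet c (2 * k))) (hsub.trans hcB)
  obtain ⟨T, hT, hTcard⟩ := hGE
  calc k = (↑T : Set (Vertex d)).ncard := by rw [Set.ncard_coe_finset, hTcard]
  _ ≤ (clusterIn B ω c).ncard := by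
      apply Set.ncard_le_ncard
      · rw [hceq]; exact hT
      · exact hB.subset clusterIn_subset


/-! ### Cylinder events and Bernoulli measures -/

section Meas

open MeasureTheory

variable {p : ℝ}

/-- Point cylinder: configurations agreeing with `f` on `s`. -/
def Cyl (s : Finset (Vertex d)) (f : Vertex d → Bool) : Set (Vertex d → Bool) :=
  {ω | ∀ v ∈ s, ω v = f v}

lemma measurableSet_Cyl (s : Finset (Vertex d)) (f : Vertex d → Bool) :
    MeasurableSet (Cyl s f) := by
  have : Cyl s f = ⋂ v ∈ (s : Set (Vertex d)), (fun ω : Vertex d → Bool => ω v) ⁻¹' {f v} := by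
    ext ω; simp [Cyl]
  rw [this]
  exact MeasurableSet.biInter s.countable_toSet
    (fun v _ => (measurable_pi_apply v) (measurableSet_singleton _))

lemma measure_Cyl {μ : Measure (Vertex d → Bool)} (hμ : IsBernoulliPerc μ p)
    (s : Finset (Vertex d)) (f : Vertex d → Bool) :
    μ (Cyl s f) = ∏ v ∈ s, (if f v then ENNReal.ofReal p else ENNReal.ofReal (1 - p)) :=
  hμ.2 s f

/-- Extend a function on a finset to a full configuration. -/
noncomputable def extFun (D : Finset (Vertex d)) (g : {x // x ∈ D} → Bool) :
    Vertex d → Bool := fun v => if h : v ∈ D then g ⟨v, h⟩ else false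

lemma extFun_eq {D : Finset (Vertex d)} (g : {x // x ∈ D} → Bool) {v : Vertex d}
    (hv : v ∈ D) : extFun D g v = g ⟨v, hv⟩ := dif_pos hv

lemma Cyl_disjoint {D : Finset (Vertex d)} {g g' : {x // x ∈ D} → Bool} (h : g ≠ g') :
    Disjoint (Cyl D (extFun D g)) (Cyl D (extFun D g')) := by
  rw [Set.disjoint_left]
  intro ω h1 h2
  apply h
  funext x
  have e1 := h1 x x.2
  have e2 := h2 x x.2
  rw [extFun_eq g x.2] at e1
  rw [extFun_eq g' x.2] at e2
  rw [← e1, ← e2]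

lemma cylinder_decomp (s : Finset (Vertex d)) (S : Set ({x // x ∈ s} → Bool)) :
    cylinder s S = ⋃ g ∈ S.toFinite.toFinset, Cyl s (extFun s g) := by
  ext ω
  rw [mem_cylinder]
  simp only [Set.mem_iUnion, Set.Finite.mem_toFinset]
  constructor
  · intro h
    exact ⟨s.restrict ω, h, fun v hv => (extFun_eq (s.restrict ω) hv).symm⟩
  · rintro ⟨g, hg, hcyl⟩
    suffices hsr : s.restrict ω = g by rwa [hsr]
    funext x
    show ω x.1 = g x
    rw [hcyl x.1 x.2, extFun_eq g x.2]

lemma measure_cylinder {μ : Measure (Vertex d → Bool)} (hμ : IsBernoulliPerc μ p)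
    (s : Finset (Vertex d)) (S : Set ({x // x ∈ s} → Bool)) :
    μ (cylinder s S) = ∑ g ∈ S.toFinite.toFinset,
      ∏ v ∈ s, (if extFun s g v then ENNReal.ofReal p else ENNReal.ofReal (1 - p)) := by
  rw [cylinder_decomp]
  rw [measure_biUnion_finset]
  · exact Finset.sum_congr rfl fun g _ => measure_Cyl hμ _ _
  · exact fun g _ g' _ hne => Cyl_disjoint hne
  · exact fun g _ => measurableSet_Cyl _ _

/-- Two Bernoulli site percolation measures with the same parameter agree. -/
lemma bern_unique {μ ν : Measure (Vertex d → Bool)}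
    (hμ : IsBernoulliPerc μ p) (hν : IsBernoulliPerc ν p) : μ = ν := by
  haveI := hμ.1
  haveI := hν.1
  refine ext_of_generate_finite (measurableCylinders (fun _ : Vertex d => Bool))
    generateFrom_measurableCylinders.symm isPiSystem_measurableCylinders ?_ (by simp)
  intro t ht
  obtain ⟨s, S, _, rfl⟩ := (mem_measurableCylinders _).mp ht
  rw [measure_cylinder hμ, measure_cylinder hν]

/-! ### Supported events and independence -/

/-- An event depends only on the coordinates in `D`. -/
def Supported (D : Finset (Vertex d)) (A : Set (Vertex d → Bool)) : Prop :=
  ∀ ⦃ω ω' : Vertex d → Bool⦄, (∀ v ∈ D, ω v = ω' v) → ω ∈ A → ω' ∈ A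

lemma Supported.compl {D : Finset (Vertex d)} {A : Set (Vertex d → Bool)}
    (hA : Supported D A) : Supported D Aᶜ := by
  intro ω ω' hag hω hmem
  exact hω (hA (fun v hv => (hag v hv).symm) hmem)

lemma Supported.mono {D D' : Finset (Vertex d)} {A : Set (Vertex d → Bool)}
    (hA : Supported D A) (h : D ⊆ D') : Supported D' A :=
  fun _ _ hag => hA fun v hv => hag v (h hv)

noncomputable def suppF (D : Finset (Vertex d)) (A : Set (Vertex d → Bool)) :
    Finset ({x // x ∈ D} → Bool) :=
  Finset.univ.filter fun g => extFun D g ∈ A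

lemma supported_eq_biUnion {D : Finset (Vertex d)} {A : Set (Vertex d → Bool)}
    (hA : Supported D A) : A = ⋃ g ∈ suppF D A, Cyl D (extFun D g) := by
  ext ω
  simp only [Set.mem_iUnion, suppF, Finset.mem_filter, Finset.mem_univ, true_and]
  constructor
  · intro hω
    refine ⟨fun x => ω x, ?_, fun v hv => by simp [extFun, hv]⟩
    exact hA (fun v hv => by simp [extFun, hv]) hω
  · rintro ⟨g, hg, hcyl⟩
    exact hA (fun v hv => (hcyl v hv).symm) hg

lemma Supported.measurableSet {D : Finset (Vertex d)} {A : Set (Vertex d → Bool)}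
    (hA : Supported D A) : MeasurableSet A := by
  rw [supported_eq_biUnion hA]
  exact (suppF D A).measurableSet_biUnion fun g _ => measurableSet_Cyl _ _

lemma supported_measure_eq {μ : Measure (Vertex d → Bool)} {D : Finset (Vertex d)}
    {A : Set (Vertex d → Bool)} (hA : Supported D A) :
    μ A = ∑ g ∈ suppF D A, μ (Cyl D (extFun D g)) := by
  conv_lhs => rw [supported_eq_biUnion hA]
  exact measure_biUnion_finset (fun g _ g' _ hne => Cyl_disjoint hne)
    (fun g _ => measurableSet_Cyl _ _)

/-- Merge two configurations along a finset. -/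
def mergeFun (D : Finset (Vertex d)) (f f' : Vertex d → Bool) : Vertex d → Bool :=
  fun v => if v ∈ D then f v else f' v

lemma Cyl_inter_Cyl {D D' : Finset (Vertex d)} (hd : Disjoint D D')
    (f f' : Vertex d → Bool) :
    Cyl D f ∩ Cyl D' f' = Cyl (D ∪ D') (mergeFun D f f') := by
  ext ω
  simp only [Set.mem_inter_iff, Cyl, Set.mem_setOf_eq, Finset.mem_union]
  constructor
  · rintro ⟨h1, h2⟩ v hv
    rcases hv with hv | hv
    · rw [mergeFun, if_pos hv]; exact h1 v hv
    · rw [mergeFun, if_neg (Finset.disjoint_right.mp hd hv)]; exact h2 v hv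
  · intro h
    constructor
    · intro v hv
      have := h v (Or.inl hv)
      rwa [mergeFun, if_pos hv] at this
    · intro v hv
      have := h v (Or.inr hv)
      rwa [mergeFun, if_neg (Finset.disjoint_right.mp hd hv)] at this

lemma measure_Cyl_inter {μ : Measure (Vertex d → Bool)} (hμ : IsBernoulliPerc μ p)
    {D D' : Finset (Vertex d)} (hd : Disjoint D D') (f f' : Vertex d → Bool) :
    μ (Cyl D f ∩ Cyl D' f') = μ (Cyl D f) * μ (Cyl D' f') := by
  rw [Cyl_inter_Cyl hd, measure_Cyl hμ, measure_Cyl hμ, measure_Cyl hμ,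
    Finset.prod_union hd]
  congr 1
  · exact Finset.prod_congr rfl fun v hv => by rw [mergeFun, if_pos hv]
  · exact Finset.prod_congr rfl fun v hv => by
      rw [mergeFun, if_neg (Finset.disjoint_right.mp hd hv)]

lemma supported_inter_measure {μ : Measure (Vertex d → Bool)} (hμ : IsBernoulliPerc μ p)
    {D D' : Finset (Vertex d)} {A B : Set (Vertex d → Bool)}
    (hA : Supported D A) (hB : Supported D' B) (hd : Disjoint D D') :
    μ (A ∩ B) = μ A * μ B := by
  have hAB : A ∩ B = ⋃ x ∈ (suppF D A) ×ˢ (suppF D' B),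
      Cyl D (extFun D x.1) ∩ Cyl D' (extFun D' x.2) := by
    conv_lhs => rw [supported_eq_biUnion hA, supported_eq_biUnion hB]
    ext ω
    simp only [Set.mem_inter_iff, Set.mem_iUnion, Finset.mem_product]
    constructor
    · rintro ⟨⟨g, hg, h1⟩, ⟨h, hh, h2⟩⟩
      exact ⟨(g, h), ⟨hg, hh⟩, h1, h2⟩
    · rintro ⟨⟨g, h⟩, ⟨hg, hh⟩, h1, h2⟩
      exact ⟨⟨g, hg, h1⟩, ⟨h, hh, h2⟩⟩
  rw [hAB, measure_biUnion_finset, supported_measure_eq hA, supported_measure_eq hB,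
    Finset.sum_mul_sum, Finset.sum_product]
  · exact Finset.sum_congr rfl fun g _ => Finset.sum_congr rfl fun h _ =>
      measure_Cyl_inter hμ hd _ _
  · rintro ⟨g, h⟩ _ ⟨g', h'⟩ _ hne
    have : g ≠ g' ∨ h ≠ h' := by
      by_contra hc
      push_neg at hc
      exact hne (by rw [hc.1, hc.2])
    rcases this with hne' | hne'
    · exact Disjoint.mono Set.inter_subset_left Set.inter_subset_left (Cyl_disjoint hne')
    · exact Disjoint.mono Set.inter_subset_right Set.inter_subset_right (Cyl_disjoint hne')
  · exact fun x _ => ((measurableSet_Cyl _ _).inter (measurableSet_Cyl _ _))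

lemma supported_iInter_measure {μ : Measure (Vertex d → Bool)} (hμ : IsBernoulliPerc μ p)
    {ι : Type*} (J : Finset ι) (D : ι → Finset (Vertex d)) (E : ι → Set (Vertex d → Bool))
    (hdisj : ∀ i ∈ J, ∀ j ∈ J, i ≠ j → Disjoint (D i) (D j))
    (hsupp : ∀ i ∈ J, Supported (D i) (E i)) :
    μ (⋂ i ∈ J, E i) = ∏ i ∈ J, μ (E i) := by
  haveI := hμ.1
  induction J using Finset.induction_on with
  | empty => simp
  | @insert a J ha ih =>
    rw [Finset.set_biInter_insert, Finset.prod_insert ha]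
    have hBsupp : Supported (J.biUnion D) (⋂ i ∈ J, E i) := by
      intro ω ω' hag hω
      simp only [Set.mem_iInter] at hω ⊢
      intro i hi
      exact hsupp i (Finset.mem_insert_of_mem hi)
        (fun v hv => hag v (Finset.mem_biUnion.mpr ⟨i, hi, hv⟩)) (hω i hi)
    have hdd : Disjoint (D a) (J.biUnion D) := by
      rw [Finset.disjoint_biUnion_right]
      intro i hi
      exact hdisj a (Finset.mem_insert_self a J) i (Finset.mem_insert_of_mem hi)
        (fun h => ha (h ▸ hi))
    rw [supported_inter_measure hμ (hsupp a (Finset.mem_insert_self a J)) hBsupp hdd]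
    congr 1
    exact ih (fun i hi j hj hij => hdisj i (Finset.mem_insert_of_mem hi) j
      (Finset.mem_insert_of_mem hj) hij)
      (fun i hi => hsupp i (Finset.mem_insert_of_mem hi))

end Meas


/-! ### Translation invariance -/

section Shift

open MeasureTheory

variable {p : ℝ}

/-- Shift a configuration by `u`. -/
def shift (u : Vertex d) (ω : Vertex d → Bool) : Vertex d → Bool := fun x => ω (x + u)

lemma measurable_shift (u : Vertex d) : Measurable (shift u) :=
  measurable_pi_lambda _ fun x => measurable_pi_apply (x + u)

lemma shift_preimage_Cyl (u : Vertex d) (s : Finset (Vertex d)) (f : Vertex d → Bool) :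
    shift u ⁻¹' Cyl s f = Cyl (s.image (· + u)) (fun w => f (w - u)) := by
  ext ω
  simp only [Set.mem_preimage, Cyl, Set.mem_setOf_eq, Finset.mem_image, shift]
  constructor
  · rintro h w ⟨v, hv, rfl⟩
    rw [add_sub_cancel_right]
    exact h v hv
  · intro h v hv
    have := h (v + u) ⟨v, hv, rfl⟩
    rwa [add_sub_cancel_right] at this

lemma isBern_map {μ : Measure (Vertex d → Bool)} (hμ : IsBernoulliPerc μ p)
    (u : Vertex d) : IsBernoulliPerc (μ.map (shift u)) p := by
  haveI := hμ.1
  constructor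
  · exact Measure.isProbabilityMeasure_map (measurable_shift u).aemeasurable
  · intro s f
    have h1 : {ω : Vertex d → Bool | ∀ v ∈ s, ω v = f v} = Cyl s f := rfl
    rw [h1, Measure.map_apply (measurable_shift u) (measurableSet_Cyl s f),
      shift_preimage_Cyl, measure_Cyl hμ, Finset.prod_image]
    · exact Finset.prod_congr rfl fun v _ => by rw [add_sub_cancel_right]
    · intro a _ b _ hab
      have := congrArg (· - u) hab
      simpa using this

lemma map_shift_eq {μ : Measure (Vertex d → Bool)} (hμ : IsBernoulliPerc μ p)
    (u : Vertex d) : μ.map (shift u) = μ :=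
  bern_unique (isBern_map hμ u) hμ

lemma measure_shift_preimage_le {μ : Measure (Vertex d → Bool)} (hμ : IsBernoulliPerc μ p)
    (u : Vertex d) (A : Set (Vertex d → Bool)) : μ (shift u ⁻¹' A) ≤ μ A := by
  calc μ (shift u ⁻¹' A) ≤ μ.map (shift u) A :=
        Measure.le_map_apply (measurable_shift u).aemeasurable A
  _ = μ A := by rw [map_shift_eq hμ]

lemma adj_add (x y u : Vertex d) : adj (x + u) (y + u) ↔ adj x y := by
  unfold adj
  have : ∀ i, ((x + u) i - (y + u) i) = x i - y i := fun i => by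
    simp [Pi.add_apply]
  simp only [this]

lemma mem_cluster_shift {ω : Vertex d → Bool} {u w x : Vertex d} :
    x ∈ cluster (shift u ω) w ↔ x + u ∈ cluster ω (w + u) := by
  have hop : ∀ a b : Vertex d, openAdj (shift u ω) a b ↔ openAdj ω (a + u) (b + u) := by
    intro a b
    unfold openAdj shift
    rw [adj_add]
  constructor
  · rintro ⟨hw, h⟩
    refine ⟨hw, ?_⟩
    have := Relation.ReflTransGen.lift (fun z => z + u)
      (fun a b hab => (hop a b).mp hab) _ _ h
    exact this
  · rintro ⟨hw, h⟩
    refine ⟨hw, ?_⟩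
    have := Relation.ReflTransGen.lift (fun z => z - u)
      (fun a b (hab : openAdj ω a b) => by
        refine (hop (a - u) (b - u)).mpr ?_
        rwa [sub_add_cancel, sub_add_cancel]) _ _ h
    simpa [Function.onFun] using this

lemma shift_preimage_clusterGE (u w : Vertex d) (k : ℕ) :
    shift u ⁻¹' clusterGE w k = clusterGE (w + u) k := by
  ext ω
  simp only [Set.mem_preimage, clusterGE, Set.mem_setOf_eq]
  constructor
  · rintro ⟨T, hT, hc⟩
    refine ⟨T.image (· + u), ?_, ?_⟩
    · intro x hx
      simp only [Finset.coe_image, Set.mem_image, Finset.mem_coe] at hx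
      obtain ⟨y, hy, rfl⟩ := hx
      exact mem_cluster_shift.mp (hT hy)
    · rw [Finset.card_image_of_injective _ (fun a b hab => by simpa using congrArg (· - u) hab),
        hc]
  · rintro ⟨T, hT, hc⟩
    refine ⟨T.image (· - u), ?_, ?_⟩
    · intro x hx
      simp only [Finset.coe_image, Set.mem_image, Finset.mem_coe] at hx
      obtain ⟨y, hy, rfl⟩ := hx
      apply mem_cluster_shift.mpr
      rw [sub_add_cancel]
      exact hT hy
    · rw [Finset.card_image_of_injective _ (fun a b hab => by simpa using congrArg (· + u) hab),
        hc]

lemma origin_add (v : Vertex d) : origin d + v = v := by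
  funext i
  simp [origin]

lemma add_neg_self' (v : Vertex d) : v + -v = origin d := by
  funext i
  simp [origin]

lemma measure_clusterGE_eq {μ : Measure (Vertex d → Bool)} (hμ : IsBernoulliPerc μ p)
    (v : Vertex d) (k : ℕ) : μ (clusterGE v k) = μ (clusterGE (origin d) k) := by
  apply le_antisymm
  · have h := measure_shift_preimage_le hμ v (clusterGE (origin d) k)
    rwa [shift_preimage_clusterGE, origin_add] at h
  · have h := measure_shift_preimage_le hμ (-v) (clusterGE v k)
    rwa [shift_preimage_clusterGE, add_neg_self'] at h

lemma shift_preimage_Gset (u c : Vertex d) (k : ℕ) :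
    shift u ⁻¹' Gset c k = Gset (c + u) k := by
  unfold Gset
  rw [Set.preimage_diff, shift_preimage_clusterGE, shift_preimage_clusterGE]

lemma measure_Gset_eq {μ : Measure (Vertex d → Bool)} (hμ : IsBernoulliPerc μ p)
    (c : Vertex d) (k : ℕ) : μ (Gset c k) = μ (Gset (origin d) k) := by
  apply le_antisymm
  · have h := measure_shift_preimage_le hμ c (Gset (origin d) k)
    rwa [shift_preimage_Gset, origin_add] at h
  · have h := measure_shift_preimage_le hμ (-c) (Gset c k)
    rwa [shift_preimage_Gset, add_neg_self'] at h

end Shift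


/-! ### The box and the largest cluster -/

section Box

open MeasureTheory

variable {p : ℝ}

noncomputable def boxFinset (d m : ℕ) : Finset (Vertex d) :=
  Fintype.piFinset fun _ : Fin d => Finset.Icc (1 : ℤ) (m : ℤ)

lemma mem_boxFinset {m : ℕ} {v : Vertex d} : v ∈ boxFinset d m ↔ v ∈ box d m := by
  simp [boxFinset, box, Fintype.mem_piFinset, Finset.mem_Icc]

lemma box_eq_coe (d m : ℕ) : box d m = ↑(boxFinset d m) := by
  ext v; simp [mem_boxFinset]

lemma box_finite (d m : ℕ) : (box d m).Finite := by
  rw [box_eq_coe]; exact (boxFinset d m).finite_toSet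

lemma card_boxFinset (d m : ℕ) : (boxFinset d m).card = m ^ d := by
  rw [boxFinset, Fintype.card_piFinset]
  have : ∀ _ : Fin d, (Finset.Icc (1 : ℤ) (m : ℤ)).card = m := fun _ => by
    rw [Int.card_Icc]
    simp
  rw [Finset.prod_congr rfl fun i _ => this i]
  simp

lemma largest_le_card (m : ℕ) (ω : Vertex d → Bool) (v : Vertex d) :
    (clusterIn (box d m) ω v).ncard ≤ (boxFinset d m).card := by
  rw [box_eq_coe] at *
  calc (clusterIn (↑(boxFinset d m)) ω v).ncard ≤ ((boxFinset d m : Set (Vertex d))).ncard :=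
        Set.ncard_le_ncard clusterIn_subset (boxFinset d m).finite_toSet
  _ = (boxFinset d m).card := Set.ncard_coe_finset _

lemma largest_bddAbove (m : ℕ) (ω : Vertex d → Bool) :
    BddAbove {n : ℕ | ∃ v : Vertex d, n = (clusterIn (box d m) ω v).ncard} := by
  refine ⟨(boxFinset d m).card, ?_⟩
  rintro n ⟨v, rfl⟩
  exact largest_le_card m ω v

lemma le_largest {m : ℕ} {ω : Vertex d → Bool} (v : Vertex d) :
    (clusterIn (box d m) ω v).ncard ≤ largest d m ω :=
  le_csSup (largest_bddAbove m ω) ⟨v, rfl⟩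

lemma largest_mem (m : ℕ) (ω : Vertex d → Bool) :
    ∃ v : Vertex d, largest d m ω = (clusterIn (box d m) ω v).ncard := by
  have h : largest d m ω ∈ {n : ℕ | ∃ v : Vertex d, n = (clusterIn (box d m) ω v).ncard} :=
    Nat.sSup_mem ⟨(clusterIn (box d m) ω (fun _ => 0)).ncard, fun _ => 0, rfl⟩
      (largest_bddAbove m ω)
  exact h

lemma event_upper {m k : ℕ} (hk : 1 ≤ k) :
    {ω : Vertex d → Bool | k ≤ largest d m ω} ⊆ ⋃ v ∈ boxFinset d m, clusterGE v k := by
  intro ω hω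
  obtain ⟨v, hv⟩ := largest_mem m ω
  have hkn : k ≤ (clusterIn (box d m) ω v).ncard := hv ▸ hω
  have hne : (clusterIn (box d m) ω v).Nonempty := by
    apply Set.nonempty_of_ncard_ne_zero
    omega
  obtain ⟨w, hw⟩ := hne
  have hvbox : v ∈ box d m := hw.1
  have hfin : (clusterIn (box d m) ω v).Finite := (box_finite d m).subset clusterIn_subset
  have hcard : hfin.toFinset.card = (clusterIn (box d m) ω v).ncard :=
    (Set.ncard_eq_toFinset_card _ hfin).symm
  obtain ⟨T, hTsub, hTcard⟩ := Finset.exists_subset_card_eq (s := hfin.toFinset) (n := k) (by omega)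
  refine Set.mem_biUnion (mem_boxFinset.mpr hvbox) ?_
  refine ⟨T, ?_, hTcard⟩
  intro x hx
  have : x ∈ hfin.toFinset := hTsub hx
  rw [Set.Finite.mem_toFinset] at this
  exact clusterIn_subset_cluster this

lemma measure_largest_ge {μ : Measure (Vertex d → Bool)} (hμ : IsBernoulliPerc μ p)
    {m k : ℕ} (hk : 1 ≤ k) :
    μ {ω : Vertex d → Bool | k ≤ largest d m ω}
      ≤ (m ^ d : ℕ) * μ (clusterGE (origin d) k) := by
  calc μ {ω : Vertex d → Bool | k ≤ largest d m ω}
      ≤ μ (⋃ v ∈ boxFinset d m, clusterGE v k) := measure_mono (event_upper hk)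
  _ ≤ ∑ v ∈ boxFinset d m, μ (clusterGE v k) := measure_biUnion_finset_le _ _
  _ = ∑ _v ∈ boxFinset d m, μ (clusterGE (origin d) k) :=
      Finset.sum_congr rfl fun v _ => measure_clusterGE_eq hμ v _
  _ = (boxFinset d m).card • μ (clusterGE (origin d) k) := by rw [Finset.sum_const]
  _ = (m ^ d : ℕ) * μ (clusterGE (origin d) k) := by rw [card_boxFinset, nsmul_eq_mul]

/-! ### Lower bound: sub-box centers -/

/-- Center of the `j`-th sub-box. -/
def cVert (k : ℕ) (j : Fin d → ℕ) : Vertex d :=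
  fun i => (((4 * k + 3) * j i + (2 * k + 2) : ℕ) : ℤ)

lemma cVert_ball_subset_box {k n m : ℕ} (h : (4 * k + 3) * n ≤ m) {j : Fin d → ℕ}
    (hj : ∀ i, j i < n) : ballSet (cVert k j) (2 * k) ⊆ box d m := by
  intro x hx
  intro i
  have hxi := linf_le_iff.mp hx i
  have hKj : (4 * k + 3) * j i + (4 * k + 3) ≤ (4 * k + 3) * n := by
    have := Nat.mul_le_mul_left (4 * k + 3) (hj i)
    calc (4 * k + 3) * j i + (4 * k + 3) = (4 * k + 3) * (j i + 1) := by ring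
    _ ≤ (4 * k + 3) * n := Nat.mul_le_mul_left _ (hj i)
  have hcv : cVert k j i = (((4 * k + 3) * j i + (2 * k + 2) : ℕ) : ℤ) := rfl
  rw [hcv] at hxi
  set A := (4 * k + 3) * j i with hA
  omega

lemma cVert_disjoint {k n : ℕ} {j j' : Fin d → ℕ} (hj : ∀ i, j i < n)
    (hj' : ∀ i, j' i < n) (hne : j ≠ j') :
    Disjoint (ballFinset (cVert k j) (2 * k + 1)) (ballFinset (cVert k j') (2 * k + 1)) := by
  rw [Finset.disjoint_left]
  intro x hx hx'
  apply hne
  funext i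
  by_contra hii
  have h1 := linf_le_iff.mp (mem_ballFinset.mp hx) i
  have h2 := linf_le_iff.mp (mem_ballFinset.mp hx') i
  have hc1 : cVert k j i = (((4 * k + 3) * j i + (2 * k + 2) : ℕ) : ℤ) := rfl
  have hc2 : cVert k j' i = (((4 * k + 3) * j' i + (2 * k + 2) : ℕ) : ℤ) := rfl
  rw [hc1] at h1
  rw [hc2] at h2
  have hkey : (4 * k + 3) * j i + (4 * k + 3) ≤ (4 * k + 3) * j' i
      ∨ (4 * k + 3) * j' i + (4 * k + 3) ≤ (4 * k + 3) * j i := by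
    rcases Nat.lt_or_ge (j i) (j' i) with hlt | hge
    · left
      calc (4 * k + 3) * j i + (4 * k + 3) = (4 * k + 3) * (j i + 1) := by ring
      _ ≤ (4 * k + 3) * j' i := Nat.mul_le_mul_left _ hlt
    · have hlt : j' i < j i := lt_of_le_of_ne hge (fun hh => hii hh.symm)
      right
      calc (4 * k + 3) * j' i + (4 * k + 3) = (4 * k + 3) * (j' i + 1) := by ring
      _ ≤ (4 * k + 3) * j i := Nat.mul_le_mul_left _ hlt
  set A := (4 * k + 3) * j i with hA
  set B := (4 * k + 3) * j' i with hB
  omega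

lemma supported_Gset (c : Vertex d) (k : ℕ) :
    Supported (ballFinset c (2 * k + 1)) (Gset c k) := by
  intro ω ω' hag hω
  exact Gset_local (fun x hx => (hag x (mem_ballFinset.mpr hx)).symm) hω

lemma event_lower {m k n : ℕ} (h : (4 * k + 3) * n ≤ m) :
    {ω : Vertex d → Bool | largest d m ω < k} ⊆
      ⋂ j ∈ Fintype.piFinset (fun _ : Fin d => Finset.range n), (Gset (cVert k j) k)ᶜ := by
  intro ω hω
  simp only [Set.mem_iInter]
  intro j hj
  intro hG
  have hjlt : ∀ i, j i < n := by
    intro i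
    have := Fintype.mem_piFinset.mp hj i
    simpa [Finset.mem_range] using this
  have hk : k ≤ (clusterIn (box d m) ω (cVert k j)).ncard :=
    Gset_clusterIn hG (box_finite d m) (cVert_ball_subset_box h hjlt)
  have := le_largest (m := m) (ω := ω) (cVert k j)
  have hlt : largest d m ω < k := hω
  omega

lemma measure_largest_lt {μ : Measure (Vertex d → Bool)} (hμ : IsBernoulliPerc μ p)
    {m k n : ℕ} (h : (4 * k + 3) * n ≤ m) :
    μ {ω : Vertex d → Bool | largest d m ω < k}
      ≤ (1 - μ (Gset (origin d) k)) ^ (n ^ d) := by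
  haveI := hμ.1
  calc μ {ω : Vertex d → Bool | largest d m ω < k}
      ≤ μ (⋂ j ∈ Fintype.piFinset (fun _ : Fin d => Finset.range n), (Gset (cVert k j) k)ᶜ) :=
        measure_mono (event_lower h)
  _ = ∏ j ∈ Fintype.piFinset (fun _ : Fin d => Finset.range n), μ ((Gset (cVert k j) k)ᶜ) := by
      apply supported_iInter_measure hμ _ (fun j => ballFinset (cVert k j) (2 * k + 1))
      · intro i hi jj hjj hij
        refine cVert_disjoint (n := n) ?_ ?_ hij
        · intro i'
          simpa [Finset.mem_range] using Fintype.mem_piFinset.mp hi i'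
        · intro i'
          simpa [Finset.mem_range] using Fintype.mem_piFinset.mp hjj i'
      · intro j _
        exact (supported_Gset (cVert k j) k).compl
  _ = ∏ _j ∈ Fintype.piFinset (fun _ : Fin d => Finset.range n),
        (1 - μ (Gset (origin d) k)) := by
      refine Finset.prod_congr rfl fun j _ => ?_
      rw [prob_compl_eq_one_sub (supported_Gset (cVert k j) k).measurableSet,
        measure_Gset_eq hμ]
  _ = (1 - μ (Gset (origin d) k)) ^ (n ^ d) := by
      rw [Finset.prod_const, Fintype.card_piFinset]
      simp

end Box


/-! ### Asymptotics from the hypothesis on ζ -/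

section Analytic

open MeasureTheory

variable {p ζ : ℝ} {μ : Measure (Vertex d → Bool)}

lemma P_bounds (hμ : IsBernoulliPerc μ p) (hζpos : 0 < ζ)
    (hζ : Tendsto (fun k : ℕ => -(1 / (k : ℝ)) *
      Real.log ((μ (clusterGE (origin d) k)).toReal)) atTop (nhds ζ))
    {δ : ℝ} (hδ : 0 < δ) (hδζ : δ < ζ) :
    ∀ᶠ k : ℕ in atTop,
      Real.exp (-(ζ + δ) * k) ≤ (μ (clusterGE (origin d) k)).toReal ∧
      (μ (clusterGE (origin d) k)).toReal ≤ Real.exp (-(ζ - δ) * k) := by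
  have h0 : ∀ᶠ y in nhds ζ, |y - ζ| < δ := by
    have hb : Metric.ball ζ δ ∈ nhds ζ := Metric.ball_mem_nhds ζ hδ
    filter_upwards [hb] with y hy
    simpa [Real.dist_eq] using hy
  have h1 := hζ.eventually h0
  filter_upwards [h1, eventually_ge_atTop 1] with k hk hk1
  set P := (μ (clusterGE (origin d) k)).toReal with hP
  have hkR : (0 : ℝ) < k := by exact_mod_cast hk1
  have hP0 : 0 ≤ P := ENNReal.toReal_nonneg
  have hPpos : 0 < P := by
    rcases eq_or_lt_of_le hP0 with h | h
    · exfalso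
      rw [← h, Real.log_zero, mul_zero, zero_sub, abs_neg, abs_of_pos hζpos] at hk
      linarith
    · exact h
  have habs := abs_lt.mp hk
  have hlog1 : Real.log P ≤ -(ζ - δ) * k := by
    have h2 : ζ - δ < -(1 / (k : ℝ)) * Real.log P := by linarith [habs.1]
    have h3 : (ζ - δ) * k < -(1 / (k : ℝ)) * Real.log P * k := by
      exact (mul_lt_mul_iff_of_pos_right hkR).mpr h2
    have h4 : -(1 / (k : ℝ)) * Real.log P * k = -Real.log P := by
      field_simp
    nlinarith
  have hlog2 : -(ζ + δ) * k ≤ Real.log P := by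
    have h2 : -(1 / (k : ℝ)) * Real.log P < ζ + δ := by linarith [habs.2]
    have h3 : -(1 / (k : ℝ)) * Real.log P * k < (ζ + δ) * k :=
      (mul_lt_mul_iff_of_pos_right hkR).mpr h2
    have h4 : -(1 / (k : ℝ)) * Real.log P * k = -Real.log P := by
      field_simp
    nlinarith
  constructor
  · calc Real.exp (-(ζ + δ) * k) ≤ Real.exp (Real.log P) := Real.exp_le_exp.mpr hlog2
    _ = P := Real.exp_log hPpos
  · calc P = Real.exp (Real.log P) := (Real.exp_log hPpos).symm
    _ ≤ Real.exp (-(ζ - δ) * k) := Real.exp_le_exp.mpr hlog1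

lemma Gset_toReal_lower (hμ : IsBernoulliPerc μ p) {k : ℕ} :
    (μ (clusterGE (origin d) k)).toReal - (μ (clusterGE (origin d) (2 * k + 1))).toReal
      ≤ (μ (Gset (origin d) k)).toReal := by
  haveI := hμ.1
  have hsub : clusterGE (origin d) k ⊆
      Gset (origin d) k ∪ clusterGE (origin d) (2 * k + 1) := by
    intro ω hω
    by_cases h : ω ∈ clusterGE (origin d) (2 * k + 1)
    · exact Or.inr h
    · exact Or.inl ⟨hω, h⟩
  have h1 : μ (clusterGE (origin d) k)
      ≤ μ (Gset (origin d) k) + μ (clusterGE (origin d) (2 * k + 1)) :=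
    le_trans (measure_mono hsub) (measure_union_le _ _)
  have h2 := ENNReal.toReal_mono (a := μ (clusterGE (origin d) k))
    (ENNReal.add_ne_top.mpr ⟨measure_ne_top μ _, measure_ne_top μ _⟩) h1
  rw [ENNReal.toReal_add (measure_ne_top μ _) (measure_ne_top μ _)] at h2
  linarith

lemma Gset_lower (hμ : IsBernoulliPerc μ p) (hζpos : 0 < ζ)
    (hζ : Tendsto (fun k : ℕ => -(1 / (k : ℝ)) *
      Real.log ((μ (clusterGE (origin d) k)).toReal)) atTop (nhds ζ))
    {δ : ℝ} (hδ : 0 < δ) (hδζ3 : 3 * δ < ζ) :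
    ∀ᶠ k : ℕ in atTop,
      (1 / 2) * Real.exp (-(ζ + δ) * k) ≤ (μ (Gset (origin d) k)).toReal := by
  have hδζ : δ < ζ := by linarith
  have hPb := P_bounds hμ hζpos hζ hδ hδζ
  have hPb2 : ∀ᶠ k : ℕ in atTop,
      (μ (clusterGE (origin d) (2 * k + 1))).toReal
        ≤ Real.exp (-(ζ - δ) * (2 * k + 1 : ℕ)) := by
    have htend : Tendsto (fun k : ℕ => 2 * k + 1) atTop atTop :=
      tendsto_atTop_mono (fun k => by simp only [id_eq]; omega) tendsto_id
    filter_upwards [htend.eventually hPb] with k hk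
    exact hk.2
  have hsmall : ∀ᶠ k : ℕ in atTop,
      Real.exp (-(ζ - δ) * (2 * k + 1 : ℕ)) ≤ (1 / 2) * Real.exp (-(ζ + δ) * k) := by
    have hexp : Tendsto (fun k : ℕ => Real.exp (-((ζ - 3 * δ) * k))) atTop (nhds 0) := by
      apply Real.tendsto_exp_atBot.comp
      apply Filter.tendsto_neg_atTop_atBot.comp
      apply Tendsto.const_mul_atTop (by linarith : (0:ℝ) < ζ - 3 * δ)
      exact tendsto_natCast_atTop_atTop
    have hhalf : ∀ᶠ k : ℕ in atTop, Real.exp (-((ζ - 3 * δ) * k)) ≤ 1 / 2 := by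
      have := hexp.eventually (eventually_le_nhds (by norm_num : (0:ℝ) < 1/2))
      exact this
    filter_upwards [hhalf] with k hk
    have hkey : -(ζ - δ) * ((2 * k + 1 : ℕ) : ℝ) ≤ -((ζ - 3*δ) * k) + (-(ζ + δ) * k) := by
      push_cast
      nlinarith [(Nat.cast_nonneg k : (0:ℝ) ≤ (k:ℝ))]
    calc Real.exp (-(ζ - δ) * ((2 * k + 1 : ℕ) : ℝ))
        ≤ Real.exp (-((ζ - 3*δ) * k) + (-(ζ + δ) * k)) := Real.exp_le_exp.mpr hkey
    _ = Real.exp (-((ζ - 3*δ) * k)) * Real.exp (-(ζ + δ) * k) := Real.exp_add _ _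
    _ ≤ (1 / 2) * Real.exp (-(ζ + δ) * k) := by
        apply mul_le_mul_of_nonneg_right hk (Real.exp_nonneg _)
  filter_upwards [hPb, hPb2, hsmall] with k hk hk2 hsm
  have hlow := hk.1
  have := Gset_toReal_lower (d := d) hμ (k := k)
  linarith

end Analytic


section Main

open MeasureTheory

variable {p ζ : ℝ} {μ : Measure (Vertex d → Bool)}

lemma tendsto_upper (hμ : IsBernoulliPerc μ p) (hζpos : 0 < ζ)
    (hζ : Tendsto (fun k : ℕ => -(1 / (k : ℝ)) *
      Real.log ((μ (clusterGE (origin d) k)).toReal)) atTop (nhds ζ))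
    {a : ℝ} (ha : (d : ℝ) / ζ < a) (hd : 1 ≤ d) :
    Tendsto (fun m : ℕ => μ {ω : Vertex d → Bool | a * Real.log m ≤ (largest d m ω : ℝ)})
      atTop (nhds 0) := by
  haveI := hμ.1
  have hdpos : (0 : ℝ) < d := by exact_mod_cast hd
  have ha0 : 0 < a := lt_trans (div_pos hdpos hζpos) ha
  have haζ : (d : ℝ) < a * ζ := by
    rw [div_lt_iff₀ hζpos] at ha
    linarith
  set δ := (a * ζ - (d : ℝ)) / (2 * a) with hδdef
  have hδ : 0 < δ := div_pos (by linarith) (by linarith)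
  have hδζ : δ < ζ := by
    rw [hδdef, div_lt_iff₀ (by linarith : (0:ℝ) < 2 * a)]
    nlinarith
  set c := (ζ - δ) * a with hcdef
  have hcd : (d : ℝ) < c := by
    have hane : a ≠ 0 := ne_of_gt ha0
    have hceq : c = (a * ζ + d) / 2 := by
      rw [hcdef, hδdef]
      field_simp
      ring
    rw [hceq]
    linarith
  -- eventual bound
  have hPb := P_bounds hμ hζpos hζ hδ hδζ
  obtain ⟨K, hK⟩ := eventually_atTop.mp hPb
  -- k_m → ∞
  have hlog : Tendsto (fun m : ℕ => a * Real.log m) atTop atTop :=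
    (Real.tendsto_log_atTop.comp tendsto_natCast_atTop_atTop).const_mul_atTop ha0
  have hkm : ∀ (C : ℕ), ∀ᶠ m : ℕ in atTop, C ≤ ⌈a * Real.log m⌉₊ := by
    intro C
    filter_upwards [hlog.eventually_ge_atTop (C : ℝ)] with m hm
    exact_mod_cast le_trans hm (Nat.le_ceil _)
  have hbound : ∀ᶠ m : ℕ in atTop,
      μ {ω : Vertex d → Bool | a * Real.log m ≤ (largest d m ω : ℝ)}
        ≤ ENNReal.ofReal ((m : ℝ) ^ ((d : ℝ) - c)) := by
    filter_upwards [hkm (max K 1), eventually_ge_atTop 1] with m hKm hm1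
    set k := ⌈a * Real.log m⌉₊ with hkdef
    have hk1 : 1 ≤ k := le_trans (le_max_right K 1) hKm
    have hkK : K ≤ k := le_trans (le_max_left K 1) hKm
    have hmR : (1 : ℝ) ≤ (m : ℝ) := by exact_mod_cast hm1
    have hmRpos : (0 : ℝ) < m := by linarith
    have hevent : {ω : Vertex d → Bool | a * Real.log m ≤ (largest d m ω : ℝ)}
        ⊆ {ω : Vertex d → Bool | k ≤ largest d m ω} := by
      intro ω hω
      exact Nat.ceil_le.mpr hω
    calc μ {ω : Vertex d → Bool | a * Real.log m ≤ (largest d m ω : ℝ)}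
        ≤ μ {ω : Vertex d → Bool | k ≤ largest d m ω} := measure_mono hevent
    _ ≤ (m ^ d : ℕ) * μ (clusterGE (origin d) k) := measure_largest_ge hμ hk1
    _ ≤ ENNReal.ofReal ((m : ℝ) ^ ((d : ℝ) - c)) := by
        have hPk : μ (clusterGE (origin d) k)
            ≤ ENNReal.ofReal (Real.exp (-(ζ - δ) * k)) := by
          rw [← ENNReal.ofReal_toReal (measure_ne_top μ (clusterGE (origin d) k))]
          exact ENNReal.ofReal_le_ofReal (hK k hkK).2
        calc (m ^ d : ℕ) * μ (clusterGE (origin d) k)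
            ≤ (m ^ d : ℕ) * ENNReal.ofReal (Real.exp (-(ζ - δ) * k)) := by
              exact mul_le_mul_right hPk _
        _ = ENNReal.ofReal (((m : ℝ) ^ d) * Real.exp (-(ζ - δ) * k)) := by
              rw [ENNReal.ofReal_mul (by positivity)]
              congr 1
              rw [← ENNReal.ofReal_natCast (m ^ d)]
              congr 1
              push_cast
              ring
        _ ≤ ENNReal.ofReal ((m : ℝ) ^ ((d : ℝ) - c)) := by
              apply ENNReal.ofReal_le_ofReal
              have hek : Real.exp (-(ζ - δ) * k) ≤ Real.exp (-(c * Real.log m)) := by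
                apply Real.exp_le_exp.mpr
                have hak : a * Real.log m ≤ k := Nat.le_ceil _
                have hζδ : 0 < ζ - δ := by linarith
                rw [hcdef]
                nlinarith
              have hrpow : Real.exp (-(c * Real.log m)) = (m : ℝ) ^ (-c) := by
                rw [Real.rpow_def_of_pos hmRpos]
                ring_nf
              calc ((m : ℝ) ^ d) * Real.exp (-(ζ - δ) * k)
                  ≤ ((m : ℝ) ^ d) * ((m : ℝ) ^ (-c)) := by
                    rw [← hrpow]
                    exact mul_le_mul_of_nonneg_left hek (by positivity)
              _ = (m : ℝ) ^ ((d : ℝ) - c) := by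
                    rw [← Real.rpow_natCast (m : ℝ) d, ← Real.rpow_add hmRpos]
                    ring_nf
  have hzero : Tendsto (fun m : ℕ => ENNReal.ofReal ((m : ℝ) ^ ((d : ℝ) - c)))
      atTop (nhds 0) := by
    have h1 : Tendsto (fun x : ℝ => x ^ (-(c - (d : ℝ)))) atTop (nhds 0) :=
      tendsto_rpow_neg_atTop (by linarith)
    have h2 : Tendsto (fun m : ℕ => (m : ℝ) ^ ((d : ℝ) - c)) atTop (nhds 0) := by
      have := h1.comp tendsto_natCast_atTop_atTop
      simpa [neg_sub, Function.comp_def] using this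
    have h3 := (ENNReal.continuous_ofReal.tendsto 0).comp h2
    simpa [Function.comp_def] using h3
  exact tendsto_of_tendsto_of_tendsto_of_le_of_le' tendsto_const_nhds hzero
    (Eventually.of_forall fun m => zero_le) hbound

end Main


section Lower

open MeasureTheory

variable {p ζ : ℝ} {μ : Measure (Vertex d → Bool)}

noncomputable def kf (b : ℝ) (m : ℕ) : ℕ := ⌈b * Real.log m⌉₊

noncomputable def nf (b : ℝ) (m : ℕ) : ℕ := m / (4 * kf b m + 3)

noncomputable def Af (b c : ℝ) (d m : ℕ) : ℝ :=
  ((nf b m ^ d : ℕ) : ℝ) * Real.exp (-c * kf b m)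

lemma nat_div_lower (m s : ℕ) (hs : 0 < s) : m < s * (m / s + 1) := by
  have h1 := Nat.div_add_mod m s
  have h2 := Nat.mod_lt m hs
  have h3 : s * (m / s + 1) = s * (m / s) + s := by ring
  omega

set_option maxHeartbeats 2000000 in
lemma tendsto_lower (hμ : IsBernoulliPerc μ p) (hζpos : 0 < ζ)
    (hζ : Tendsto (fun k : ℕ => -(1 / (k : ℝ)) *
      Real.log ((μ (clusterGE (origin d) k)).toReal)) atTop (nhds ζ))
    {b : ℝ} (hb0 : 0 < b) (hb : b < (d : ℝ) / ζ) (hd : 1 ≤ d) :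
    Tendsto (fun m : ℕ => μ {ω : Vertex d → Bool | (largest d m ω : ℝ) < b * Real.log m})
      atTop (nhds 0) := by
  haveI := hμ.1
  have hdpos : (0 : ℝ) < d := by exact_mod_cast hd
  have hbζ : b * ζ < d := (lt_div_iff₀ hζpos).mp hb
  set δ := min (ζ / 4) (((d : ℝ) / b - ζ) / 2) with hδdef
  have hdbζ : ζ < (d : ℝ) / b := (lt_div_iff₀ hb0).mpr (by linarith [mul_comm b ζ])
  have hδ : 0 < δ := lt_min (by linarith) (by linarith)
  have hδζ3 : 3 * δ < ζ := by
    have := min_le_left (ζ / 4) (((d : ℝ) / b - ζ) / 2)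
    rw [← hδdef] at this
    linarith
  set θ := b * (ζ + δ) with hθdef
  have hθpos : 0 < θ := by positivity
  have hθd : θ < d := by
    have h1 : b * δ ≤ b * (((d : ℝ) / b - ζ) / 2) :=
      mul_le_mul_of_nonneg_left (min_le_right _ _) hb0.le
    have h2 : b * (((d : ℝ) / b - ζ) / 2) = ((d : ℝ) - b * ζ) / 2 := by
      field_simp
    rw [hθdef]
    nlinarith
  set η := ((d : ℝ) - θ) / 2 with hηdef
  have hηpos : 0 < η := by rw [hηdef]; linarith
  set γ := η / (d : ℝ) with hγdef
  have hγpos : 0 < γ := div_pos hηpos hdpos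
  have hγ1 : γ < 1 := by
    rw [hγdef, div_lt_one hdpos, hηdef]
    linarith
  have hexpeq : (1 - γ) * (d : ℝ) - θ = η := by
    have hγd : γ * (d : ℝ) = η := by
      rw [hγdef]
      field_simp
    nlinarith
  have hq := Gset_lower hμ hζpos hζ hδ hδζ3
  obtain ⟨K, hK⟩ := eventually_atTop.mp hq
  have hlogb : Tendsto (fun m : ℕ => b * Real.log m) atTop atTop :=
    (Real.tendsto_log_atTop.comp tendsto_natCast_atTop_atTop).const_mul_atTop hb0
  have hkm : ∀ C : ℕ, ∀ᶠ m : ℕ in atTop, C ≤ kf b m := by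
    intro C
    filter_upwards [hlogb.eventually_ge_atTop (C : ℝ)] with m hm
    exact_mod_cast le_trans hm (Nat.le_ceil _)
  -- (F3)
  have hsm : ∀ᶠ m : ℕ in atTop, 4 * (kf b m : ℝ) + 3 ≤ (m : ℝ) ^ γ := by
    have hlo := (isLittleO_log_rpow_atTop hγpos).def
      (show (0:ℝ) < 1 / (8 * (b + 1)) by positivity)
    have hrp : Tendsto (fun x : ℝ => x ^ γ) atTop atTop := tendsto_rpow_atTop hγpos
    filter_upwards [tendsto_natCast_atTop_atTop.eventually hlo,
      tendsto_natCast_atTop_atTop.eventually (hrp.eventually_ge_atTop 14),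
      eventually_ge_atTop 1] with m h1 h2 hm1
    have hmR : (1 : ℝ) ≤ (m : ℝ) := by exact_mod_cast hm1
    have hlog0 : 0 ≤ Real.log m := Real.log_nonneg hmR
    have hrp0 : (0 : ℝ) ≤ (m : ℝ) ^ γ := Real.rpow_nonneg (by linarith) γ
    rw [Real.norm_eq_abs, Real.norm_eq_abs, abs_of_nonneg hlog0, abs_of_nonneg hrp0] at h1
    have hkc : (kf b m : ℝ) < b * Real.log m + 1 := Nat.ceil_lt_add_one (by positivity)
    have hbl : b * Real.log m ≤ b * ((1 / (8 * (b + 1))) * (m : ℝ) ^ γ) :=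
      mul_le_mul_of_nonneg_left h1 hb0.le
    have hfrac : b * ((1 / (8 * (b + 1))) * (m : ℝ) ^ γ) ≤ (m : ℝ) ^ γ / 8 := by
      have heq : b * ((1 / (8 * (b + 1))) * (m : ℝ) ^ γ)
          = (b / (b + 1)) * ((m : ℝ) ^ γ / 8) := by
        field_simp
      rw [heq]
      have hb1 : b / (b + 1) ≤ 1 := by
        rw [div_le_one (by linarith)]
        linarith
      nlinarith
    nlinarith
  -- Claim 2 : Af b (ζ + δ) d m eventually ≥ C0 * m ^ η
  set C0 := Real.exp (-(ζ + δ)) / 2 ^ d with hC0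
  have hC0pos : 0 < C0 := by positivity
  have claim2 : ∀ᶠ m : ℕ in atTop, C0 * (m : ℝ) ^ η ≤ Af b (ζ + δ) d m := by
    have hrp2 : Tendsto (fun x : ℝ => x ^ (1 - γ)) atTop atTop :=
      tendsto_rpow_atTop (by linarith)
    filter_upwards [hsm, eventually_ge_atTop 1,
      tendsto_natCast_atTop_atTop.eventually (hrp2.eventually_ge_atTop 2)] with m hsle hm1 h2le
    have hmR : (1 : ℝ) ≤ (m : ℝ) := by exact_mod_cast hm1
    have hmpos : (0 : ℝ) < m := by linarith
    have hlog0 : 0 ≤ Real.log m := Real.log_nonneg hmR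
    have hkc : (kf b m : ℝ) < b * Real.log m + 1 := Nat.ceil_lt_add_one (by positivity)
    have hspos : (0 : ℝ) < 4 * (kf b m : ℝ) + 3 := by positivity
    have hmγpos : (0 : ℝ) < (m : ℝ) ^ γ := Real.rpow_pos_of_pos hmpos γ
    -- n lower bound
    have hnat := nat_div_lower m (4 * kf b m + 3) (by omega)
    have hnatR : (m : ℝ) < (4 * (kf b m : ℝ) + 3) * ((nf b m : ℝ) + 1) := by
      have hcast : ((m : ℕ) : ℝ) < (((4 * kf b m + 3) * (m / (4 * kf b m + 3) + 1) : ℕ) : ℝ) := by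
        exact_mod_cast hnat
      push_cast at hcast
      show (m : ℝ) < (4 * (kf b m : ℝ) + 3) * ((m / (4 * kf b m + 3) : ℕ) + 1 : ℝ)
      push_cast
      linarith
    have hdiv1 : (m : ℝ) / ((m : ℝ) ^ γ) ≤ (m : ℝ) / (4 * (kf b m : ℝ) + 3) := by
      rw [div_le_div_iff₀ hmγpos hspos]
      exact mul_le_mul_of_nonneg_left hsle (le_of_lt hmpos)
    have hdiv2 : (m : ℝ) / (4 * (kf b m : ℝ) + 3) < (nf b m : ℝ) + 1 := by
      rw [div_lt_iff₀ hspos]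
      rw [mul_comm]
      exact hnatR
    have hmpow : (m : ℝ) ^ ((1:ℝ) - γ) = (m : ℝ) / ((m : ℝ) ^ γ) := by
      rw [Real.rpow_sub hmpos, Real.rpow_one]
    have hnlow : (m : ℝ) ^ ((1:ℝ) - γ) - 1 ≤ (nf b m : ℝ) := by
      rw [hmpow]
      linarith
    have hn2 : (m : ℝ) ^ ((1:ℝ) - γ) / 2 ≤ (nf b m : ℝ) := by linarith
    have hnd : ((m : ℝ) ^ ((1:ℝ) - γ) / 2) ^ d ≤ ((nf b m : ℝ)) ^ d :=
      pow_le_pow_left₀ (by positivity) hn2 d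
    have hexpb : Real.exp (-(ζ + δ)) * (m : ℝ) ^ (-θ) ≤ Real.exp (-(ζ + δ) * kf b m) := by
      have h1 : -(ζ + δ) + -θ * Real.log m ≤ -(ζ + δ) * kf b m := by
        have : (ζ + δ) * kf b m ≤ (ζ + δ) * (b * Real.log m + 1) :=
          mul_le_mul_of_nonneg_left hkc.le (by linarith)
        rw [hθdef]
        nlinarith
      calc Real.exp (-(ζ + δ)) * (m : ℝ) ^ (-θ)
          = Real.exp (-(ζ + δ) + -θ * Real.log m) := by
            rw [Real.exp_add, Real.rpow_def_of_pos hmpos, mul_comm (Real.log (m:ℝ)) (-θ)]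
      _ ≤ Real.exp (-(ζ + δ) * kf b m) := Real.exp_le_exp.mpr h1
    have hfinal : C0 * (m : ℝ) ^ η
        ≤ ((m : ℝ) ^ ((1:ℝ) - γ) / 2) ^ d * (Real.exp (-(ζ + δ)) * (m : ℝ) ^ (-θ)) := by
      have hpowd : ((m : ℝ) ^ ((1:ℝ) - γ) / 2) ^ d
          = (m : ℝ) ^ (((1:ℝ) - γ) * d) / 2 ^ d := by
        rw [div_pow, ← Real.rpow_natCast ((m : ℝ) ^ ((1:ℝ) - γ)) d,
          ← Real.rpow_mul (by linarith)]
      rw [hpowd]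
      have hmul : (m : ℝ) ^ (((1:ℝ) - γ) * d) * (m : ℝ) ^ (-θ) = (m : ℝ) ^ η := by
        rw [← Real.rpow_add hmpos]
        have harith : ((1:ℝ) - γ) * d + -θ = η := by linarith [hexpeq]
        rw [harith]
      have heq : C0 * (m : ℝ) ^ η
          = (m : ℝ) ^ (((1:ℝ) - γ) * d) / 2 ^ d * (Real.exp (-(ζ + δ)) * (m : ℝ) ^ (-θ)) := by
        rw [hC0, ← hmul]
        ring
      exact le_of_eq heq
    calc C0 * (m : ℝ) ^ η
        ≤ ((m : ℝ) ^ ((1:ℝ) - γ) / 2) ^ d * (Real.exp (-(ζ + δ)) * (m : ℝ) ^ (-θ)) := hfinal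
    _ ≤ ((nf b m : ℝ)) ^ d * Real.exp (-(ζ + δ) * kf b m) := by
        apply mul_le_mul hnd hexpb (by positivity) (by positivity)
    _ = Af b (ζ + δ) d m := by
        unfold Af
        push_cast
        ring
  have hAtop : Tendsto (fun m : ℕ => Af b (ζ + δ) d m) atTop atTop := by
    apply tendsto_atTop_mono' atTop claim2
    exact ((tendsto_rpow_atTop hηpos).comp tendsto_natCast_atTop_atTop).const_mul_atTop hC0pos
  -- Claim 1
  have claim1 : ∀ᶠ m : ℕ in atTop,
      μ {ω : Vertex d → Bool | (largest d m ω : ℝ) < b * Real.log m}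
        ≤ ENNReal.ofReal (Real.exp (-(Af b (ζ + δ) d m) / 2)) := by
    filter_upwards [hkm K] with m hKm
    set k := kf b m with hk
    set n := nf b m with hn
    set qE := μ (Gset (origin d) k) with hqE
    set q := qE.toReal with hqdef
    have hq0 : 0 ≤ q := ENNReal.toReal_nonneg
    have hq1 : q ≤ 1 := by
      rw [hqdef, hqE]
      exact ENNReal.toReal_le_of_le_ofReal (by norm_num) (by simpa using prob_le_one)
    have hqlow : (1 / 2) * Real.exp (-(ζ + δ) * k) ≤ q := hK k hKm
    have hsub : {ω : Vertex d → Bool | (largest d m ω : ℝ) < b * Real.log m}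
        ⊆ {ω : Vertex d → Bool | largest d m ω < k} := by
      intro ω hω
      have h1 : (largest d m ω : ℝ) < b * Real.log m := hω
      have h2 : b * Real.log m ≤ (k : ℝ) := Nat.le_ceil _
      have : (largest d m ω : ℝ) < (k : ℝ) := lt_of_lt_of_le h1 h2
      exact_mod_cast this
    have hdm : (4 * k + 3) * n ≤ m := by
      rw [hn, hk]
      rw [mul_comm]
      exact Nat.div_mul_le_self m (4 * kf b m + 3)
    have hone : (1 : ENNReal) - qE = ENNReal.ofReal (1 - q) := by
      rw [ENNReal.ofReal_sub _ hq0, ENNReal.ofReal_one, hqdef, hqE,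
        ENNReal.ofReal_toReal (measure_ne_top μ _)]
    calc μ {ω : Vertex d → Bool | (largest d m ω : ℝ) < b * Real.log m}
        ≤ μ {ω : Vertex d → Bool | largest d m ω < k} := measure_mono hsub
    _ ≤ (1 - qE) ^ (n ^ d) := measure_largest_lt hμ hdm
    _ = ENNReal.ofReal ((1 - q) ^ (n ^ d)) := by
        rw [hone, ENNReal.ofReal_pow (by linarith)]
    _ ≤ ENNReal.ofReal (Real.exp (-(Af b (ζ + δ) d m) / 2)) := by
        apply ENNReal.ofReal_le_ofReal
        have h1 : (1 - q) ^ (n ^ d) ≤ Real.exp (-q) ^ (n ^ d) := by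
          apply pow_le_pow_left₀ (by linarith)
          have := Real.add_one_le_exp (-q)
          linarith
        have h2 : Real.exp (-q) ^ (n ^ d) = Real.exp (-(((n ^ d : ℕ) : ℝ) * q)) := by
          rw [← Real.exp_nat_mul]
          congr 1
          ring
        have h3 : -(((n ^ d : ℕ) : ℝ) * q) ≤ -(Af b (ζ + δ) d m) / 2 := by
          have hAeq : Af b (ζ + δ) d m = ((n ^ d : ℕ) : ℝ) * Real.exp (-(ζ + δ) * k) := by
            rw [hn, hk]
            rfl
          have hNnn : (0 : ℝ) ≤ ((n ^ d : ℕ) : ℝ) := by positivity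
          have := mul_le_mul_of_nonneg_left hqlow hNnn
          rw [hAeq]
          nlinarith
        calc (1 - q) ^ (n ^ d) ≤ Real.exp (-(((n ^ d : ℕ) : ℝ) * q)) := by rw [← h2]; exact h1
        _ ≤ Real.exp (-(Af b (ζ + δ) d m) / 2) := Real.exp_le_exp.mpr h3
  -- conclude
  have hzero : Tendsto (fun m : ℕ => ENNReal.ofReal (Real.exp (-(Af b (ζ + δ) d m) / 2)))
      atTop (nhds 0) := by
    have h1 : Tendsto (fun m : ℕ => -(Af b (ζ + δ) d m) / 2) atTop atBot := by
      have h2 : Tendsto (fun m : ℕ => Af b (ζ + δ) d m / 2) atTop atTop :=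
        hAtop.atTop_div_const (by norm_num)
      have h3 := tendsto_neg_atTop_atBot.comp h2
      refine h3.congr fun m => ?_
      simp [neg_div]
    have h4 := Real.tendsto_exp_atBot.comp h1
    have h5 := (ENNReal.continuous_ofReal.tendsto 0).comp h4
    simpa [Function.comp_def] using h5
  exact tendsto_of_tendsto_of_tendsto_of_le_of_le' tendsto_const_nhds hzero
    (Eventually.of_forall fun m => zero_le) claim1

end Lower

end Perc6

/-- S_m / log m → d / ζ_p in probability, subcritical. -/
theorem stmt6 (d : ℕ) (hd : 1 ≤ d) (p ζ : ℝ) (hp : 0 < p) (hpc : p < Perc.pc d)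
    (μ : Measure (Perc.Vertex d → Bool)) (hμ : Perc.IsBernoulliPerc μ p)
    (hζpos : 0 < ζ)
    (hζ : Tendsto (fun k : ℕ => -(1 / (k : ℝ)) *
        Real.log ((μ (Perc.clusterGE (Perc.origin d) k)).toReal)) atTop (nhds ζ)) :
    ∀ ε > 0, Tendsto (fun m : ℕ =>
      μ {ω | ε < |(Perc.largest d m ω : ℝ) / Real.log m - (d : ℝ) / ζ|})
      atTop (nhds 0) := by
  intro ε hε
  haveI := hμ.1
  have hdpos : (0 : ℝ) < d := by exact_mod_cast hd
  have hdζpos : (0 : ℝ) < (d : ℝ) / ζ := div_pos hdpos hζpos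
  set a := (d : ℝ) / ζ + ε with hadef
  have ha : (d : ℝ) / ζ < a := by rw [hadef]; linarith
  have hU := Perc6.tendsto_upper hμ hζpos hζ ha hd
  set b := (d : ℝ) / ζ - ε with hbdef
  have hbda : b < (d : ℝ) / ζ := by rw [hbdef]; linarith
  rcases le_or_gt b 0 with hb0 | hb0
  · -- only the upper deviation is possible
    have hsub : ∀ᶠ m : ℕ in atTop,
        μ {ω | ε < |(Perc.largest d m ω : ℝ) / Real.log m - (d : ℝ) / ζ|}
          ≤ μ {ω : Perc.Vertex d → Bool | a * Real.log m ≤ (Perc.largest d m ω : ℝ)} := by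
      filter_upwards [eventually_ge_atTop 2] with m hm2
      apply measure_mono
      intro ω hω
      have hm1 : (1 : ℝ) < m := by exact_mod_cast hm2
      have hlog : 0 < Real.log m := Real.log_pos hm1
      have hω' : ε < |(Perc.largest d m ω : ℝ) / Real.log m - (d : ℝ) / ζ| := hω
      set L := (Perc.largest d m ω : ℝ) with hL
      have hL0 : 0 ≤ L := by positivity
      rcases lt_abs.mp hω' with h | h
      · show a * Real.log m ≤ L
        have hx : a ≤ L / Real.log m := by rw [hadef]; linarith
        calc a * Real.log m ≤ (L / Real.log m) * Real.log m :=
              mul_le_mul_of_nonneg_right hx hlog.le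
        _ = L := by field_simp
      · exfalso
        have hx : L / Real.log m < b := by rw [hbdef]; linarith
        have hnn : 0 ≤ L / Real.log m := by positivity
        exact absurd (lt_of_le_of_lt hnn hx) (not_lt.mpr hb0)
    exact tendsto_of_tendsto_of_tendsto_of_le_of_le' tendsto_const_nhds hU
      (Eventually.of_forall fun m => zero_le) hsub
  · have hL := Perc6.tendsto_lower hμ hζpos hζ hb0 hbda hd
    have hsub : ∀ᶠ m : ℕ in atTop,
        μ {ω | ε < |(Perc.largest d m ω : ℝ) / Real.log m - (d : ℝ) / ζ|}
          ≤ μ {ω : Perc.Vertex d → Bool | a * Real.log m ≤ (Perc.largest d m ω : ℝ)}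
            + μ {ω : Perc.Vertex d → Bool | (Perc.largest d m ω : ℝ) < b * Real.log m} := by
      filter_upwards [eventually_ge_atTop 2] with m hm2
      have hm1 : (1 : ℝ) < m := by exact_mod_cast hm2
      have hlog : 0 < Real.log m := Real.log_pos hm1
      calc μ {ω | ε < |(Perc.largest d m ω : ℝ) / Real.log m - (d : ℝ) / ζ|}
          ≤ μ ({ω : Perc.Vertex d → Bool | a * Real.log m ≤ (Perc.largest d m ω : ℝ)}
            ∪ {ω : Perc.Vertex d → Bool | (Perc.largest d m ω : ℝ) < b * Real.log m}) := by
            apply measure_mono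
            intro ω hω
            have hω' : ε < |(Perc.largest d m ω : ℝ) / Real.log m - (d : ℝ) / ζ| := hω
            set L := (Perc.largest d m ω : ℝ) with hL
            rcases lt_abs.mp hω' with h | h
            · left
              show a * Real.log m ≤ L
              have hx : a ≤ L / Real.log m := by rw [hadef]; linarith
              calc a * Real.log m ≤ (L / Real.log m) * Real.log m :=
                    mul_le_mul_of_nonneg_right hx hlog.le
              _ = L := by field_simp
            · right
              show L < b * Real.log m
              have hx : L / Real.log m < b := by rw [hbdef]; linarith
              calc L = (L / Real.log m) * Real.log m := by field_simp
              _ < b * Real.log m := by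
                    exact mul_lt_mul_of_pos_right hx hlog
      _ ≤ μ {ω : Perc.Vertex d → Bool | a * Real.log m ≤ (Perc.largest d m ω : ℝ)}
            + μ {ω : Perc.Vertex d → Bool | (Perc.largest d m ω : ℝ) < b * Real.log m} :=
            measure_union_le _ _
    have hsum : Tendsto (fun m : ℕ =>
        μ {ω : Perc.Vertex d → Bool | a * Real.log m ≤ (Perc.largest d m ω : ℝ)}
          + μ {ω : Perc.Vertex d → Bool | (Perc.largest d m ω : ℝ) < b * Real.log m})
        atTop (nhds 0) := by
      have := hU.add hL
      simpa using this
    exact tendsto_of_tendsto_of_tendsto_of_le_of_le' tendsto_const_nhds hsum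
      (Eventually.of_forall fun m => zero_le) hsub
end

section
/- In the coin-tossing interpretation of one-dimensional site percolation with parameter p ∈ (0,1), let S_m be the length of the longest run of successes among m i.i.d. Bernoulli(p) trials. Then S_m / log m → 1/log(1/p) almost surely as m → ∞. -/
open MeasureTheory Filter Set

lemma runCyl (p : ℝ) (μ : Measure (ℕ → Bool))
    (hiid : ∀ (s : Finset ℕ) (f : ℕ → Bool),
      μ {ω | ∀ i ∈ s, ω i = f i}
        = ∏ i ∈ s, (if f i then ENNReal.ofReal p else ENNReal.ofReal (1 - p)))
    (i k : ℕ) :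
    μ {ω | ∀ j < k, ω (i + j) = true} = ENNReal.ofReal p ^ k := by
  have h := hiid ((Finset.range k).image (i + ·)) (fun _ => true)
  have hset : {ω : ℕ → Bool | ∀ t ∈ (Finset.range k).image (i + ·), ω t = (fun _ => true) t}
      = {ω : ℕ → Bool | ∀ j < k, ω (i + j) = true} := by
    ext ω
    simp only [Finset.mem_image, Finset.mem_range, Set.mem_setOf_eq]
    constructor
    · intro h j hj; exact h (i + j) ⟨j, hj, rfl⟩
    · rintro h t ⟨j, hj, rfl⟩; exact h j hj
  rw [hset] at h
  rw [h]
  rw [Finset.prod_image (by intro a _ b _ hab; exact Nat.add_left_cancel hab)]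
  simp

section
variable (p : ℝ) (k N : ℕ)

/-- weight function -/
noncomputable def wB (b : Bool) : ENNReal := if b then ENNReal.ofReal p else ENNReal.ofReal (1 - p)

/-- extension of a block configuration to ℕ → Bool -/
def gB (hk : 1 ≤ k) (h : Fin N → Fin k → Bool) : ℕ → Bool := fun i =>
  if hi : i < N * k then h ⟨i / k, by rw [Nat.div_lt_iff_lt_mul hk]; omega⟩
    ⟨i % k, Nat.mod_lt _ hk⟩ else false

lemma blockIdx_lt (hk : 1 ≤ k) (b : Fin N) (j : Fin k) : (b : ℕ) * k + (j : ℕ) < N * k := by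
  have hb : (b : ℕ) + 1 ≤ N := b.isLt
  calc (b : ℕ) * k + (j : ℕ) < (b : ℕ) * k + k := by omega
  _ = ((b : ℕ) + 1) * k := by ring
  _ ≤ N * k := Nat.mul_le_mul_right _ hb

lemma gB_apply (hk : 1 ≤ k) (h : Fin N → Fin k → Bool) (b : Fin N) (j : Fin k) :
    gB k N hk h (b * k + j) = h b j := by
  have hlt : (b : ℕ) * k + (j : ℕ) < N * k := blockIdx_lt k N hk b j
  rw [gB, dif_pos hlt]
  congr 1
  · apply Fin.ext
    show ((b : ℕ) * k + (j : ℕ)) / k = b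
    rw [show (b : ℕ) * k + (j : ℕ) = (j : ℕ) + (b : ℕ) * k by ring,
      Nat.add_mul_div_right _ _ hk, Nat.div_eq_of_lt j.isLt, zero_add]
  · apply Fin.ext
    show ((b : ℕ) * k + (j : ℕ)) % k = j
    rw [show (b : ℕ) * k + (j : ℕ) = (j : ℕ) + (b : ℕ) * k by ring,
      Nat.add_mul_mod_self_right, Nat.mod_eq_of_lt j.isLt]

end

lemma blockCyl (p : ℝ) (hp : p ∈ Set.Ioo (0 : ℝ) 1) (μ : Measure (ℕ → Bool))
    (hiid : ∀ (s : Finset ℕ) (f : ℕ → Bool),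
      μ {ω | ∀ i ∈ s, ω i = f i}
        = ∏ i ∈ s, (if f i then ENNReal.ofReal p else ENNReal.ofReal (1 - p)))
    (k N : ℕ) (hk : 1 ≤ k) :
    μ {ω | ∀ b < N, ∃ j < k, ω (b * k + j) = false}
      = ENNReal.ofReal ((1 - p ^ k) ^ N) := by
  obtain ⟨hp0, hp1⟩ := hp
  classical
  set T : Finset (Fin k → Bool) := Finset.univ.filter (fun u => ∃ j, u j = false) with hT
  set S : Finset (Fin N → Fin k → Bool) := Fintype.piFinset (fun _ => T) with hS
  set atom : (Fin N → Fin k → Bool) → Set (ℕ → Bool) :=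
    fun h => {ω | ∀ i ∈ Finset.range (N * k), ω i = gB k N hk h i} with hatom
  -- set equality
  have hset : {ω : ℕ → Bool | ∀ b < N, ∃ j < k, ω (b * k + j) = false}
      = ⋃ h ∈ S, atom h := by
    ext ω
    simp only [Set.mem_setOf_eq, Set.mem_iUnion]
    constructor
    · intro hω
      refine ⟨fun b j => ω (b * k + j), ?_, ?_⟩
      · rw [hS, Fintype.mem_piFinset]
        intro b
        rw [hT, Finset.mem_filter]
        obtain ⟨j, hj, hjf⟩ := hω b b.isLt
        exact ⟨Finset.mem_univ _, ⟨⟨j, hj⟩, hjf⟩⟩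
      · intro i hi
        rw [Finset.mem_range] at hi
        show ω i = gB k N hk _ i
        rw [gB, dif_pos hi]
        show ω i = ω (i / k * k + i % k)
        rw [Nat.div_add_mod']
    · rintro ⟨h, hhS, hω⟩
      intro b hb
      rw [hS, Fintype.mem_piFinset] at hhS
      obtain ⟨j, hjf⟩ := by
        have := hhS ⟨b, hb⟩
        rw [hT, Finset.mem_filter] at this
        exact this.2
      refine ⟨j, j.isLt, ?_⟩
      have hmem : (b * k + (j : ℕ)) ∈ Finset.range (N * k) := by
        rw [Finset.mem_range]
        have : ((b : ℕ) : ℕ) = b := rfl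
        calc b * k + (j : ℕ) < b * k + k := by omega
        _ = (b + 1) * k := by ring
        _ ≤ N * k := Nat.mul_le_mul_right _ hb
      rw [hω _ hmem]
      exact (gB_apply k N hk h ⟨b, hb⟩ j).trans hjf
  have hdisj : (↑S : Set (Fin N → Fin k → Bool)).PairwiseDisjoint atom := by
    intro h₁ _ h₂ _ hne
    rw [Function.onFun, Set.disjoint_left]
    intro ω hω1 hω2
    apply hne
    funext b j
    have hmem : ((b : ℕ) * k + (j : ℕ)) ∈ Finset.range (N * k) :=
      Finset.mem_range.mpr (blockIdx_lt k N hk b j)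
    have e1 := hω1 _ hmem
    have e2 := hω2 _ hmem
    rw [gB_apply k N hk h₁ b j] at e1
    rw [gB_apply k N hk h₂ b j] at e2
    exact e1.symm.trans e2
  have hmeas : ∀ h, MeasurableSet (atom h) := by
    intro h
    have : atom h = ⋂ i ∈ Finset.range (N * k), {ω : ℕ → Bool | ω i = gB k N hk h i} := by
      ext ω; simp [hatom]
    rw [this]
    exact MeasurableSet.biInter (Finset.range _).countable_toSet
      (fun i _ => (measurable_pi_apply i) (measurableSet_singleton _))
  rw [hset, measure_biUnion_finset hdisj (fun h _ => hmeas h)]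
  have hatomval : ∀ h : Fin N → Fin k → Bool,
      μ (atom h) = ∏ b : Fin N, ∏ j : Fin k, wB p (h b j) := by
    intro h
    have hμ := hiid (Finset.range (N * k)) (gB k N hk h)
    calc μ (atom h) = ∏ i ∈ Finset.range (N * k), wB p (gB k N hk h i) := hμ
      _ = ∏ i : Fin (N * k), wB p (gB k N hk h i) :=
          (Fin.prod_univ_eq_prod_range (fun i => wB p (gB k N hk h i)) (N * k)).symm
      _ = ∏ x : Fin N × Fin k, wB p (gB k N hk h (finProdFinEquiv x)) :=
          (Equiv.prod_comp finProdFinEquiv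
            (fun i : Fin (N * k) => wB p (gB k N hk h i))).symm
      _ = ∏ b : Fin N, ∏ j : Fin k, wB p (h b j) := by
          rw [Fintype.prod_prod_type]
          refine Finset.prod_congr rfl (fun b _ => Finset.prod_congr rfl (fun j _ => ?_))
          have hval : ((finProdFinEquiv (b, j) : Fin (N * k)) : ℕ) = (b : ℕ) * k + (j : ℕ) := by
            simp [finProdFinEquiv]; ring
          rw [hval, gB_apply k N hk h b j]
  have hinner : (∑ u ∈ T, ∏ j : Fin k, wB p (u j)) = ENNReal.ofReal (1 - p ^ k) := by
    have huniv : (∑ u : Fin k → Bool, ∏ j : Fin k, wB p (u j)) = 1 := by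
      have := Finset.prod_univ_sum (fun _ : Fin k => (Finset.univ : Finset Bool))
        (fun _ b => wB p b)
      rw [Fintype.piFinset_univ] at this
      rw [← this]
      have hone : (∑ b : Bool, wB p b) = 1 := by
        rw [Fintype.sum_bool]
        show ENNReal.ofReal p + ENNReal.ofReal (1 - p) = 1
        rw [← ENNReal.ofReal_add hp0.le (by linarith)]
        norm_num
      simp only [hone, Finset.prod_const_one]
    have hnotT : Finset.univ.filter (fun u : Fin k → Bool => ¬∃ j, u j = false)
        = {(fun _ => true : Fin k → Bool)} := by
      ext u
      simp only [Finset.mem_filter, Finset.mem_univ, true_and, Finset.mem_singleton,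
        not_exists, Bool.not_eq_false]
      constructor
      · intro hu; funext j; exact hu j
      · intro hu j; rw [hu]
    have hsplit := Finset.sum_filter_add_sum_filter_not Finset.univ
      (fun u : Fin k → Bool => ∃ j, u j = false) (fun u => ∏ j : Fin k, wB p (u j))
    rw [hnotT, huniv] at hsplit
    rw [Finset.sum_singleton] at hsplit
    have htrue : (∏ j : Fin k, wB p ((fun _ => true) j)) = ENNReal.ofReal (p ^ k) := by
      have hw : ∀ j : Fin k, wB p ((fun _ => true) j) = ENNReal.ofReal p := fun j => by simp [wB]
      rw [Finset.prod_congr rfl (fun j _ => hw j), Finset.prod_const, Finset.card_univ,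
        Fintype.card_fin, ← ENNReal.ofReal_pow hp0.le]
    rw [htrue] at hsplit
    have hpk1 : p ^ k ≤ 1 := pow_le_one₀ hp0.le hp1.le
    have : ENNReal.ofReal (1 - p ^ k) + ENNReal.ofReal (p ^ k) = 1 := by
      rw [← ENNReal.ofReal_add (by linarith) (by positivity)]
      norm_num
    have hc : ENNReal.ofReal (p ^ k) ≠ ⊤ := ENNReal.ofReal_ne_top
    exact (ENNReal.add_left_inj hc).mp (hsplit.trans this.symm)
  calc (∑ h ∈ S, μ (atom h)) = ∑ h ∈ S, ∏ b : Fin N, ∏ j : Fin k, wB p (h b j) :=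
        Finset.sum_congr rfl (fun h _ => hatomval h)
    _ = ∏ b : Fin N, ∑ u ∈ T, ∏ j : Fin k, wB p (u j) :=
        (Finset.prod_univ_sum (fun _ : Fin N => T) (fun _ u => ∏ j : Fin k, wB p (u j))).symm
    _ = ENNReal.ofReal ((1 - p ^ k) ^ N) := by
        rw [hinner, Finset.prod_const, Finset.card_univ, Fintype.card_fin,
          ← ENNReal.ofReal_pow (by linarith [(pow_le_one₀ hp0.le hp1.le : p ^ k ≤ 1)])]

lemma bc_helper {α : Type*} [MeasurableSpace α] (μ : Measure α) (s : ℕ → Set α) (f : ℕ → ℝ)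
    (hf0 : ∀ n, 0 ≤ f n) (hf : Summable f) (M : ℕ)
    (h : ∀ m, M ≤ m → μ (s m) ≤ ENNReal.ofReal (f m)) :
    ∀ᵐ ω ∂μ, ∀ᶠ m in atTop, ω ∉ s m := by
  have hne : (∑' n, μ (s (n + M))) ≠ ⊤ := by
    have hle : (∑' n, μ (s (n + M))) ≤ ∑' n, ENNReal.ofReal (f (n + M)) :=
      ENNReal.tsum_le_tsum (fun n => h _ (Nat.le_add_left _ _))
    have heq : (∑' n, ENNReal.ofReal (f (n + M))) = ENNReal.ofReal (∑' n, f (n + M)) :=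
      (ENNReal.ofReal_tsum_of_nonneg (fun n => hf0 _) ((summable_nat_add_iff M).mpr hf)).symm
    exact ne_top_of_le_ne_top (by rw [heq]; exact ENNReal.ofReal_ne_top) hle
  filter_upwards [MeasureTheory.ae_eventually_notMem hne] with ω hω
  rw [eventually_atTop] at hω ⊢
  obtain ⟨N0, hN0⟩ := hω
  refine ⟨N0 + M, fun m hm => ?_⟩
  have := hN0 (m - M) (by omega)
  rwa [Nat.sub_add_cancel (by omega)] at this

lemma no_inf_run (p : ℝ) (hp : p ∈ Set.Ioo (0 : ℝ) 1) (μ : Measure (ℕ → Bool))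
    (hiid : ∀ (s : Finset ℕ) (f : ℕ → Bool),
      μ {ω | ∀ i ∈ s, ω i = f i}
        = ∏ i ∈ s, (if f i then ENNReal.ofReal p else ENNReal.ofReal (1 - p))) :
    ∀ᵐ ω ∂μ, ∀ i : ℕ, ∃ j : ℕ, ω (i + j) = false := by
  rw [ae_all_iff]
  intro i
  rw [ae_iff]
  have hset : {ω : ℕ → Bool | ¬∃ j, ω (i + j) = false} = {ω : ℕ → Bool | ∀ j, ω (i + j) = true} := by
    ext ω; simp [Bool.not_eq_false]
  rw [hset]
  have hle : ∀ n : ℕ, μ {ω : ℕ → Bool | ∀ j, ω (i + j) = true} ≤ ENNReal.ofReal p ^ n := by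
    intro n
    rw [← runCyl p μ hiid i n]
    exact measure_mono (fun ω hω j _ => hω j)
  have htend : Tendsto (fun n : ℕ => ENNReal.ofReal p ^ n) atTop (nhds 0) :=
    ENNReal.tendsto_pow_atTop_nhds_zero_of_lt_one
      (by rw [← ENNReal.ofReal_one]; exact ENNReal.ofReal_lt_ofReal_iff_of_nonneg hp.1.le |>.mpr hp.2)
  exact le_antisymm (ge_of_tendsto htend (Eventually.of_forall hle)) zero_le

lemma log_inv_pos (p : ℝ) (hp : p ∈ Set.Ioo (0 : ℝ) 1) : 0 < Real.log (1 / p) :=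
  Real.log_pos (by rw [lt_div_iff₀ hp.1]; linarith [hp.2])

lemma log_p_eq (p : ℝ) (hp : 0 < p) : Real.log p = -Real.log (1 / p) := by
  rw [one_div, Real.log_inv]; ring

lemma upperBound (p : ℝ) (hp : p ∈ Set.Ioo (0 : ℝ) 1) (μ : Measure (ℕ → Bool))
    (hiid : ∀ (s : Finset ℕ) (f : ℕ → Bool),
      μ {ω | ∀ i ∈ s, ω i = f i}
        = ∏ i ∈ s, (if f i then ENNReal.ofReal p else ENNReal.ofReal (1 - p)))
    (ε : ℝ) (hε : 0 < ε) :
    ∀ᵐ ω ∂μ, ∀ᶠ m : ℕ in atTop,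
      ((sSup {k : ℕ | ∃ i, i + k ≤ m ∧ ∀ j < k, ω (i + j) = true} : ℕ) : ℝ)
        ≤ (1 + ε) * Real.log m / Real.log (1 / p) + 1 := by
  classical
  obtain ⟨hp0, hp1⟩ := hp
  set c := Real.log (1 / p) with hcdef
  have hc : 0 < c := log_inv_pos p ⟨hp0, hp1⟩
  set K : ℕ → ℕ := fun n => ⌈(1 + ε) * Real.log n / c⌉₊ with hK
  set A : ℕ → Set (ℕ → Bool) := fun i => {ω | ∀ j < K i, ω (i + j) = true} with hA
  have hμA : ∀ i, μ (A i) = ENNReal.ofReal (p ^ K i) := by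
    intro i
    rw [hA]
    show μ {ω | ∀ j < K i, ω (i + j) = true} = _
    rw [runCyl p μ hiid i (K i), ← ENNReal.ofReal_pow hp0.le]
  have hbound : ∀ i, 1 ≤ i → p ^ K i ≤ (i : ℝ) ^ (-(1 + ε)) := by
    intro i hi
    have hipos : (0 : ℝ) < i := by exact_mod_cast hi
    have h1 : (p : ℝ) ^ (K i) = p ^ ((K i : ℕ) : ℝ) := (Real.rpow_natCast p _).symm
    rw [h1]
    have h2 : p ^ ((K i : ℕ) : ℝ) ≤ p ^ ((1 + ε) * Real.log i / c) :=
      Real.rpow_le_rpow_of_exponent_ge hp0 hp1.le (Nat.le_ceil _)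
    refine h2.trans (le_of_eq ?_)
    rw [Real.rpow_def_of_pos hp0, Real.rpow_def_of_pos hipos, log_p_eq p hp0, ← hcdef]
    congr 1
    field_simp
  have hsum : Summable (fun i : ℕ => (i : ℝ) ^ (-(1 + ε))) :=
    Real.summable_nat_rpow.mpr (by linarith)
  have hbc := bc_helper μ A (fun i => (i : ℝ) ^ (-(1 + ε)))
    (fun n => Real.rpow_nonneg (Nat.cast_nonneg n) _) hsum 1
    (fun m hm => by rw [hμA]; exact ENNReal.ofReal_le_ofReal (hbound m hm))
  have hKtop : Tendsto K atTop atTop := by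
    apply tendsto_nat_ceil_atTop.comp
    exact Tendsto.atTop_div_const hc
      (Tendsto.const_mul_atTop (by linarith : (0:ℝ) < 1 + ε)
        (Real.tendsto_log_atTop.comp tendsto_natCast_atTop_atTop))
  filter_upwards [hbc, no_inf_run p ⟨hp0, hp1⟩ μ hiid] with ω hAev hB
  obtain ⟨I, hI⟩ := eventually_atTop.1 hAev
  set Mx := (Finset.range I).sup (fun i => Nat.find (hB i)) with hMx
  filter_upwards [hKtop.eventually_gt_atTop Mx, eventually_ge_atTop 1] with m hKm hm1
  set Rs := {k : ℕ | ∃ i, i + k ≤ m ∧ ∀ j < k, ω (i + j) = true} with hRs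
  have hbdd : BddAbove Rs := ⟨m, fun k ⟨i, hik, _⟩ => by omega⟩
  have hne : Rs.Nonempty := ⟨0, 0, by omega, fun j hj => absurd hj (by omega)⟩
  have hRmem : sSup Rs ∈ Rs := Nat.sSup_mem hne hbdd
  have hRK : sSup Rs < K m := by
    by_contra hcon
    push_neg at hcon
    obtain ⟨i, him, hrun⟩ := hRmem
    by_cases hiI : I ≤ i
    · refine hI i hiI ?_
      intro j hj
      apply hrun
      have hlog : Real.log i ≤ Real.log m := by
        rcases Nat.eq_zero_or_pos i with h0 | h0
        · rw [h0]; simpa using Real.log_natCast_nonneg m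
        · exact Real.log_le_log (by exact_mod_cast h0) (Nat.cast_le.mpr (by omega))
      have hiKm : K i ≤ K m := by
        apply Nat.ceil_mono
        gcongr
      omega
    · push_neg at hiI
      have hj0 : Nat.find (hB i) ≤ Mx :=
        Finset.le_sup (f := fun i => Nat.find (hB i)) (Finset.mem_range.mpr hiI)
      have hfalse := Nat.find_spec (hB i)
      have hle : sSup Rs ≤ Nat.find (hB i) := by
        by_contra hlt
        push_neg at hlt
        rw [hrun _ hlt] at hfalse
        simp at hfalse
      omega
  have hx0 : 0 ≤ (1 + ε) * Real.log m / c :=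
    div_nonneg (mul_nonneg (by linarith) (Real.log_natCast_nonneg m)) hc.le
  have hceil : (K m : ℝ) < (1 + ε) * Real.log m / c + 1 := Nat.ceil_lt_add_one hx0
  have : ((sSup Rs : ℕ) : ℝ) < (K m : ℝ) := by exact_mod_cast hRK
  linarith

lemma lowerBound (p : ℝ) (hp : p ∈ Set.Ioo (0 : ℝ) 1) (μ : Measure (ℕ → Bool))
    (hiid : ∀ (s : Finset ℕ) (f : ℕ → Bool),
      μ {ω | ∀ i ∈ s, ω i = f i}
        = ∏ i ∈ s, (if f i then ENNReal.ofReal p else ENNReal.ofReal (1 - p)))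
    (ε : ℝ) (hε0 : 0 < ε) (hε1 : ε < 1) :
    ∀ᵐ ω ∂μ, ∀ᶠ m : ℕ in atTop,
      (1 - ε) * Real.log m / Real.log (1 / p) - 1
        ≤ ((sSup {k : ℕ | ∃ i, i + k ≤ m ∧ ∀ j < k, ω (i + j) = true} : ℕ) : ℝ) := by
  classical
  obtain ⟨hp0, hp1⟩ := hp
  set c := Real.log (1 / p) with hcdef
  have hc : 0 < c := log_inv_pos p ⟨hp0, hp1⟩
  set k : ℕ → ℕ := fun m => ⌊(1 - ε) * Real.log m / c⌋₊ with hkdef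
  set C : ℕ → Set (ℕ → Bool) :=
    fun m => {ω | ∀ b < m / k m, ∃ j < k m, ω (b * k m + j) = false} with hCdef
  -- the key asymptotic inequality, over ℝ
  have key : ∀ᶠ x : ℝ in atTop, 2 * Real.log x + 1 ≤ c * x ^ ε / Real.log x := by
    have hlog2 : (fun x : ℝ => Real.log x) =o[atTop] fun x : ℝ => x ^ (ε / 2) :=
      isLittleO_log_rpow_atTop (half_pos hε0)
    have hlogε : (fun x : ℝ => Real.log x) =o[atTop] fun x : ℝ => x ^ ε :=
      isLittleO_log_rpow_atTop hε0
    have hsq : (fun x : ℝ => Real.log x * Real.log x) =o[atTop] fun x : ℝ => x ^ ε := by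
      have h2 := hlog2.mul hlog2
      refine h2.congr' (EventuallyEq.rfl) ?_
      filter_upwards [eventually_gt_atTop (0 : ℝ)] with x hx
      rw [← Real.rpow_add hx]
      norm_num
    have h4 : (fun x : ℝ => 2 * (Real.log x * Real.log x) + Real.log x)
        =o[atTop] fun x : ℝ => x ^ ε := (hsq.const_mul_left 2).add hlogε
    have h5 := (Asymptotics.isLittleO_iff.mp h4) (half_pos hc)
    filter_upwards [h5, eventually_ge_atTop (3 : ℝ)] with x hx hx3
    have hL : 1 ≤ Real.log x := by
      rw [Real.le_log_iff_exp_le (by linarith)]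
      exact (Real.exp_one_lt_d9.le.trans (by norm_num)).trans hx3
    have hxε : 0 ≤ x ^ ε := Real.rpow_nonneg (by linarith) _
    rw [Real.norm_eq_abs, Real.norm_eq_abs, abs_of_nonneg hxε,
      abs_of_nonneg (by nlinarith)] at hx
    rw [le_div_iff₀ (by linarith)]
    nlinarith
  have keyN : ∀ᶠ m : ℕ in atTop,
      2 * Real.log m + 1 ≤ c * (m : ℝ) ^ ε / Real.log m :=
    tendsto_natCast_atTop_atTop.eventually key
  have hk1 : ∀ᶠ m : ℕ in atTop, 1 ≤ k m := by
    have h1 : Tendsto (fun m : ℕ => (1 - ε) * Real.log m / c) atTop atTop :=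
      Tendsto.atTop_div_const hc
        (Tendsto.const_mul_atTop (by linarith : (0:ℝ) < 1 - ε)
          (Real.tendsto_log_atTop.comp tendsto_natCast_atTop_atTop))
    filter_upwards [h1.eventually_ge_atTop 1] with m hm
    exact Nat.le_floor (by exact_mod_cast hm)
  -- measure bound
  have hμC : ∀ᶠ m : ℕ in atTop, μ (C m) ≤ ENNReal.ofReal ((m : ℝ) ^ (-2 : ℝ)) := by
    filter_upwards [hk1, keyN, eventually_ge_atTop 3] with m hkm hkey hm3
    have hm0 : (0 : ℝ) < m := by exact_mod_cast (by omega : 0 < m)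
    set L := Real.log m with hLdef
    have hL0 : 0 ≤ L := Real.log_natCast_nonneg m
    rw [hCdef]
    show μ {ω | ∀ b < m / k m, ∃ j < k m, ω (b * k m + j) = false} ≤ _
    rw [blockCyl p ⟨hp0, hp1⟩ μ hiid (k m) (m / k m) hkm]
    apply ENNReal.ofReal_le_ofReal
    set x := p ^ (k m) with hxdef
    set N := m / k m with hNdef
    have hx0 : 0 < x := pow_pos hp0 _
    have hx1 : x ≤ 1 := pow_le_one₀ hp0.le hp1.le
    have hkle : (k m : ℝ) ≤ (1 - ε) * L / c :=
      Nat.floor_le (div_nonneg (mul_nonneg (by linarith) hL0) hc.le)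
    have hkpos : (0 : ℝ) < k m := by exact_mod_cast hkm
    have hkleL : (k m : ℝ) ≤ L / c := by
      refine hkle.trans ?_
      gcongr
      nlinarith
    have hxlb : (m : ℝ) ^ (-(1 - ε)) ≤ x := by
      have h1 : (p : ℝ) ^ (k m) = p ^ ((k m : ℕ) : ℝ) := (Real.rpow_natCast p _).symm
      rw [hxdef, h1]
      have h2 : p ^ ((1 - ε) * L / c) ≤ p ^ ((k m : ℕ) : ℝ) :=
        Real.rpow_le_rpow_of_exponent_ge hp0 hp1.le hkle
      refine le_trans (le_of_eq ?_) h2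
      rw [Real.rpow_def_of_pos hp0, Real.rpow_def_of_pos hm0, log_p_eq p hp0, ← hcdef]
      congr 1
      field_simp
      ring
    have hNlb : (m : ℝ) / (k m) - 1 < (N : ℝ) := by
      have h1 : m < (N + 1) * k m := by
        have h2 := Nat.div_add_mod m (k m)
        have h3 : m % k m < k m := Nat.mod_lt _ (by omega)
        calc m = k m * N + m % k m := h2.symm
          _ < k m * N + k m := by omega
          _ = (N + 1) * k m := by ring
      have h1' : (m : ℝ) < ((N : ℝ) + 1) * k m := by exact_mod_cast h1
      rw [sub_lt_iff_lt_add, div_lt_iff₀ hkpos]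
      linarith [h1']
    have hmx : (m : ℝ) ^ (ε : ℝ) ≤ (m : ℝ) * x := by
      have h1 : (m : ℝ) ^ (ε : ℝ) = (m : ℝ) * (m : ℝ) ^ (-(1 - ε)) := by
        nth_rewrite 2 [show (m : ℝ) = (m : ℝ) ^ (1 : ℝ) from (Real.rpow_one _).symm]
        rw [← Real.rpow_add hm0]
        norm_num
      rw [h1]
      exact mul_le_mul_of_nonneg_left hxlb hm0.le
    have hLpos : 0 < L := by
      have : (1:ℝ) ≤ L := by
        rw [hLdef, Real.le_log_iff_exp_le hm0]
        have h9 : Real.exp 1 ≤ 3 :=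
          le_trans Real.exp_one_lt_d9.le (by norm_num)
        exact h9.trans (by exact_mod_cast (by omega : 3 ≤ m))
      linarith
    have hdiv : c * (m : ℝ) ^ ε / L ≤ (m : ℝ) * x / (k m) := by
      rw [show c * (m : ℝ) ^ ε / L = (m : ℝ) ^ ε / (L / c) from by field_simp]
      gcongr
    have h6 : (m : ℝ) * x / k m - x ≤ (N : ℝ) * x := by
      have h7 : ((m : ℝ) / k m - 1) * x ≤ (N : ℝ) * x :=
        mul_le_mul_of_nonneg_right hNlb.le hx0.le
      calc (m : ℝ) * x / k m - x = ((m : ℝ) / k m - 1) * x := by ring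
        _ ≤ (N : ℝ) * x := h7
    have hNx : 2 * L ≤ (N : ℝ) * x := by linarith
    calc (1 - x) ^ N ≤ Real.exp (-x) ^ N := by
          apply pow_le_pow_left₀ (by linarith)
          linarith [Real.add_one_le_exp (-x)]
      _ = Real.exp (-((N : ℝ) * x)) := by
          rw [← Real.exp_nat_mul]
          congr 1
          ring
      _ ≤ Real.exp (-(2 * L)) := Real.exp_le_exp.mpr (by linarith)
      _ = (m : ℝ) ^ (-2 : ℝ) := by
          rw [Real.rpow_def_of_pos hm0]
          congr 1
          ring
  obtain ⟨M, hM⟩ := eventually_atTop.1 hμC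
  have hbc := bc_helper μ C (fun m => (m : ℝ) ^ (-2 : ℝ))
    (fun n => Real.rpow_nonneg (Nat.cast_nonneg n) _)
    (Real.summable_nat_rpow.mpr (by norm_num)) M hM
  filter_upwards [hbc] with ω hω
  filter_upwards [hω] with m hm
  simp only [hCdef, Set.mem_setOf_eq] at hm
  push_neg at hm
  obtain ⟨b, hbN, hrun⟩ := hm
  set Rs := {k' : ℕ | ∃ i, i + k' ≤ m ∧ ∀ j < k', ω (i + j) = true} with hRsdef
  have hbdd : BddAbove Rs := ⟨m, fun k' ⟨i, hik, _⟩ => by omega⟩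
  have hmem : k m ∈ Rs := by
    refine ⟨b * k m, ?_, ?_⟩
    · have h1 : (b + 1) * k m ≤ (m / k m) * k m := Nat.mul_le_mul_right _ hbN
      have h2 : m / k m * k m ≤ m := Nat.div_mul_le_self m (k m)
      nlinarith
    · intro j hj
      simpa [Bool.not_eq_false] using hrun j hj
  have hsup : k m ≤ sSup Rs := le_csSup hbdd hmem
  have hfl : (1 - ε) * Real.log m / c - 1 < (k m : ℝ) := Nat.sub_one_lt_floor _
  have : (k m : ℝ) ≤ ((sSup Rs : ℕ) : ℝ) := by exact_mod_cast hsup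
  linarith

lemma glue (c : ℝ) (hc : 0 < c) (u : ℕ → ℝ)
    (h : ∀ n : ℕ, ∀ᶠ m : ℕ in atTop,
      (1 - 1/((n:ℝ)+2)) * Real.log m / c - 1 ≤ u m
        ∧ u m ≤ (1 + 1/((n:ℝ)+2)) * Real.log m / c + 1) :
    Tendsto (fun m => u m / Real.log m) atTop (nhds (1/c)) := by
  rw [Metric.tendsto_atTop]
  intro δ hδ
  set n := ⌈3/(c*δ)⌉₊ with hn
  set ε := 1/((n:ℝ)+2) with hε
  have hcδ : 0 < 3/(c*δ) := by positivity
  have hn2 : 3/(c*δ) ≤ (n:ℝ)+2 := le_trans (Nat.le_ceil _) (by linarith)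
  have hε3 : ε/c ≤ δ/3 := by
    rw [hε]
    have h1 : 1/((n:ℝ)+2) ≤ 1/(3/(c*δ)) := one_div_le_one_div_of_le hcδ hn2
    calc 1/(((n:ℝ)+2)) / c ≤ (1/(3/(c*δ))) / c := by
          apply div_le_div_of_nonneg_right h1 hc.le
      _ = δ/3 := by field_simp
  have hεpos : 0 < ε := by positivity
  have hev := (Real.tendsto_log_atTop.comp
    tendsto_natCast_atTop_atTop).eventually_ge_atTop (max (3/δ) 1)
  obtain ⟨N, hN⟩ := eventually_atTop.1 ((h n).and hev)
  refine ⟨N, fun m hm => ?_⟩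
  obtain ⟨⟨hlb, hub⟩, hLbig⟩ := hN m hm
  set L := Real.log m with hL
  have hL1 : 1 ≤ L := le_trans (le_max_right _ _) hLbig
  have hL3 : 3/δ ≤ L := le_trans (le_max_left _ _) hLbig
  have hL0 : 0 < L := by linarith
  have h1L : 1/L ≤ δ/3 := by
    have := one_div_le_one_div_of_le (by positivity : (0:ℝ) < 3/δ) hL3
    calc 1/L ≤ 1/(3/δ) := this
      _ = δ/3 := by field_simp
  have hA : u m / L ≤ (1+ε)/c + 1/L := by
    have h2 : u m / L ≤ ((1+ε)*L/c + 1)/L := by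
      apply div_le_div_of_nonneg_right hub hL0.le
    refine h2.trans (le_of_eq ?_)
    field_simp
  have hB : (1-ε)/c - 1/L ≤ u m / L := by
    have h2 : ((1-ε)*L/c - 1)/L ≤ u m / L := by
      apply div_le_div_of_nonneg_right hlb hL0.le
    refine le_trans (le_of_eq ?_) h2
    field_simp
  rw [Real.dist_eq, abs_sub_lt_iff]
  have hεc : ε/c > 0 := by positivity
  constructor
  · have : (1+ε)/c = 1/c + ε/c := by ring
    nlinarith
  · have : (1-ε)/c = 1/c - ε/c := by ring
    nlinarith


/-- Erdős–Rényi law for the longest run of successes. -/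
theorem stmt7 (p : ℝ) (hp : p ∈ Set.Ioo (0 : ℝ) 1)
    (μ : Measure (ℕ → Bool)) (hprob : IsProbabilityMeasure μ)
    (hiid : ∀ (s : Finset ℕ) (f : ℕ → Bool),
      μ {ω | ∀ i ∈ s, ω i = f i}
        = ∏ i ∈ s, (if f i then ENNReal.ofReal p else ENNReal.ofReal (1 - p))) :
    ∀ᵐ ω ∂μ, Tendsto (fun m : ℕ =>
      ((sSup {k : ℕ | ∃ i, i + k ≤ m ∧ ∀ j < k, ω (i + j) = true} : ℕ) : ℝ)
        / Real.log m)
      atTop (nhds (1 / Real.log (1 / p))) := by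
  have hc : 0 < Real.log (1 / p) := log_inv_pos p hp
  have hae : ∀ᵐ ω ∂μ, ∀ n : ℕ,
      (∀ᶠ m : ℕ in atTop,
        (1 - 1/((n:ℝ)+2)) * Real.log m / Real.log (1/p) - 1
          ≤ ((sSup {k : ℕ | ∃ i, i + k ≤ m ∧ ∀ j < k, ω (i + j) = true} : ℕ) : ℝ))
      ∧ (∀ᶠ m : ℕ in atTop,
        ((sSup {k : ℕ | ∃ i, i + k ≤ m ∧ ∀ j < k, ω (i + j) = true} : ℕ) : ℝ)
          ≤ (1 + 1/((n:ℝ)+2)) * Real.log m / Real.log (1/p) + 1) := by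
    rw [ae_all_iff]
    intro n
    have hε0 : 0 < (1:ℝ)/((n:ℝ)+2) := by positivity
    have hε1 : (1:ℝ)/((n:ℝ)+2) < 1 := by
      rw [div_lt_one (by positivity)]
      have : (0:ℝ) ≤ n := Nat.cast_nonneg n
      linarith
    filter_upwards [lowerBound p hp μ hiid _ hε0 hε1, upperBound p hp μ hiid _ hε0]
      with ω h1 h2
    exact ⟨h1, h2⟩
  filter_upwards [hae] with ω hω
  exact glue _ hc _ (fun n => ((hω n).1.and (hω n).2))
end

section
/- In the setting of site percolation on ℤ^d restricted to the box V_m, let N_m(k) denote the number of open clusters of size k within V_m. Then for all k, ℓ ≥ 1: |Cov(N_m(k), N_m(ℓ))| ≤ 3^{d+1} (k + ℓ)^d E[N_m(k ∨ ℓ)]. In particular, Var(N_m(k)) ≤ 6^{d+1} k^d E[N_m(k)]. -/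
open MeasureTheory Filter Set
open scoped Classical

namespace PercAux
open Perc

variable {d : ℕ}

lemma linfDist_le_iff {v w : Vertex d} {r : ℕ} :
    linfDist v w ≤ r ↔ ∀ i, (v i - w i).natAbs ≤ r := by
  simp [linfDist, Finset.sup_le_iff]

lemma linfDist_self (v : Vertex d) : linfDist v v = 0 := by
  simp [linfDist]

lemma linfDist_comm (v w : Vertex d) : linfDist v w = linfDist w v := by
  unfold linfDist
  congr 1
  funext i
  omega

lemma adj_linfDist {v w : Vertex d} (h : adj v w) : linfDist v w ≤ 1 := by
  rw [linfDist_le_iff]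
  intro i
  unfold adj at h
  have h2 : (v i - w i).natAbs ≤ ∑ j, (v j - w j).natAbs := by
    exact Finset.single_le_sum (f := fun j => (v j - w j).natAbs)
      (fun j _ => Nat.zero_le _) (Finset.mem_univ i)
  omega

lemma linfDist_triangle (v x w : Vertex d) :
    linfDist v w ≤ linfDist v x + linfDist x w := by
  rw [linfDist_le_iff]
  intro i
  have h1 : (v i - x i).natAbs ≤ linfDist v x :=
    Finset.le_sup (f := fun i => (v i - x i).natAbs) (Finset.mem_univ i)
  have h2 : (x i - w i).natAbs ≤ linfDist x w :=
    Finset.le_sup (f := fun i => (x i - w i).natAbs) (Finset.mem_univ i)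
  omega

lemma mem_cluster_open {B : Set (Vertex d)} {ω : Vertex d → Bool} {v w : Vertex d}
    (h : w ∈ clusterIn B ω v) : w ∈ B ∧ ω w = true := by
  obtain ⟨hvB, hv, hr⟩ := h
  induction hr with
  | refl => exact ⟨hvB, hv⟩
  | tail _ hbc _ => exact ⟨hbc.2.2.1, hbc.2.2.2.2⟩

lemma reach_ivt {B : Set (Vertex d)} {ω : Vertex d → Bool} {v w : Vertex d}
    (h : Relation.ReflTransGen (openAdjIn B ω) v w) :
    ∀ j ≤ linfDist v w, ∃ x, Relation.ReflTransGen (openAdjIn B ω) v x ∧ linfDist v x = j := by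
  induction h with
  | refl =>
    intro j hj
    rw [linfDist_self] at hj
    exact ⟨v, .refl, by rw [linfDist_self]; omega⟩
  | @tail b c hvb hbc ih =>
    intro j hj
    by_cases hcase : j ≤ linfDist v b
    · exact ih j hcase
    · refine ⟨c, hvb.tail hbc, ?_⟩
      have h1 : linfDist v c ≤ linfDist v b + linfDist b c := linfDist_triangle _ _ _
      have h2 : linfDist b c ≤ 1 := adj_linfDist hbc.1
      omega

lemma mem_dist_lt {B : Set (Vertex d)} {ω : Vertex d → Bool} {v w : Vertex d} {k : ℕ}
    (hcard : (clusterIn B ω v).ncard = k) (hk : 1 ≤ k)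
    (hw : w ∈ clusterIn B ω v) : linfDist v w + 1 ≤ k := by
  have hfin : (clusterIn B ω v).Finite := by
    by_contra hinf
    rw [Set.Infinite.ncard hinf] at hcard
    omega
  obtain ⟨hvB, hv, hr⟩ := hw
  set D := linfDist v w with hD
  have himg : (↑(Finset.range (D + 1)) : Set ℕ) ⊆ linfDist v '' clusterIn B ω v := by
    intro j hj
    simp only [Finset.coe_range, Set.mem_Iio] at hj
    obtain ⟨x, hx, hxd⟩ := reach_ivt hr j (by omega)
    exact ⟨x, ⟨hvB, hv, hx⟩, hxd⟩
  have h1 : (↑(Finset.range (D + 1)) : Set ℕ).ncard ≤ (linfDist v '' clusterIn B ω v).ncard :=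
    Set.ncard_le_ncard himg (hfin.image _)
  have h2 : (linfDist v '' clusterIn B ω v).ncard ≤ (clusterIn B ω v).ncard :=
    Set.ncard_image_le hfin
  rw [Set.ncard_coe_finset, Finset.card_range] at h1
  omega

lemma cluster_eq_of_agree {B : Set (Vertex d)} {ω ω' : Vertex d → Bool} {v : Vertex d} {k : ℕ}
    (hk : 1 ≤ k) (h : ∀ w, linfDist v w ≤ k → ω w = ω' w)
    (hcard : (clusterIn B ω v).ncard = k) :
    clusterIn B ω' v = clusterIn B ω v := by
  have hne : (clusterIn B ω v).Nonempty := Set.nonempty_of_ncard_ne_zero (by omega)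
  obtain ⟨w0, hvB, hv, -⟩ := hne
  have hv' : ω' v = true := by
    rw [← h v (by rw [linfDist_self]; omega)]; exact hv
  apply Set.Subset.antisymm
  · rintro w ⟨-, -, hr⟩
    induction hr with
    | refl => exact ⟨hvB, hv, .refl⟩
    | @tail b c hvb hbc ih =>
      have hb : b ∈ clusterIn B ω v := ih
      have hbd : linfDist v b + 1 ≤ k := mem_dist_lt hcard hk hb
      have hωb : ω b = true := (mem_cluster_open hb).2
      have hcd : linfDist v c ≤ k := by
        have h1 := linfDist_triangle v b c
        have h2 := adj_linfDist hbc.1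
        omega
      have hωc : ω c = true := by rw [h c hcd]; exact hbc.2.2.2.2
      exact ⟨hvB, hv, hb.2.2.tail ⟨hbc.1, hbc.2.1, hbc.2.2.1, hωb, hωc⟩⟩
  · rintro w ⟨-, -, hr⟩
    induction hr with
    | refl => exact ⟨hvB, hv', .refl⟩
    | @tail b c hvb hbc ih =>
      have hb : b ∈ clusterIn B ω v := ⟨hvB, hv, hvb⟩
      have hc : c ∈ clusterIn B ω v := ⟨hvB, hv, hvb.tail hbc⟩
      have hbd : linfDist v b + 1 ≤ k := mem_dist_lt hcard hk hb
      have hcd : linfDist v c + 1 ≤ k := mem_dist_lt hcard hk hc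
      have hωb : ω' b = true := by rw [← h b (by omega)]; exact hbc.2.2.2.1
      have hωc : ω' c = true := by rw [← h c (by omega)]; exact hbc.2.2.2.2
      obtain ⟨-, -, hrb⟩ := ih
      exact ⟨hvB, hv', hrb.tail ⟨hbc.1, hbc.2.1, hbc.2.2.1, hωb, hωc⟩⟩

lemma ncard_eq_of_agree {B : Set (Vertex d)} {ω ω' : Vertex d → Bool} {v : Vertex d} {k : ℕ}
    (hk : 1 ≤ k) (h : ∀ w, linfDist v w ≤ k → ω w = ω' w)
    (hcard : (clusterIn B ω v).ncard = k) : (clusterIn B ω' v).ncard = k := by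
  rw [cluster_eq_of_agree hk h hcard]; exact hcard

def cylE (s : Finset (Vertex d)) (f : Vertex d → Bool) : Set (Vertex d → Bool) :=
  {ω | ∀ v ∈ s, ω v = f v}

def DependsOn (s : Finset (Vertex d)) (E : Set (Vertex d → Bool)) : Prop :=
  ∀ ω ω', (∀ v ∈ s, ω v = ω' v) → ω ∈ E → ω' ∈ E

lemma measurableSet_cylE (s : Finset (Vertex d)) (f : Vertex d → Bool) :
    MeasurableSet (cylE s f) := by
  have : cylE s f = ⋂ v ∈ s, (fun ω : Vertex d → Bool => ω v) ⁻¹' {f v} := by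
    ext ω; simp [cylE]
  rw [this]
  exact MeasurableSet.biInter s.countable_toSet
    (fun v _ => measurable_pi_apply v (measurableSet_singleton (f v)))

noncomputable def cfgs (s : Finset (Vertex d)) : Finset (Vertex d → Bool) :=
  (Fintype.piFinset (fun _ : ↑s => (Finset.univ : Finset Bool))).image
    (fun g v => if h : v ∈ s then g ⟨v, h⟩ else false)

lemma mem_cfgs {s : Finset (Vertex d)} {f : Vertex d → Bool} :
    f ∈ cfgs s ↔ ∀ v ∉ s, f v = false := by
  constructor
  · rintro hf v hv
    simp only [cfgs, Finset.mem_image] at hf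
    obtain ⟨g, -, rfl⟩ := hf
    simp [hv]
  · intro hf
    simp only [cfgs, Finset.mem_image]
    refine ⟨fun x => f x, by simp, ?_⟩
    funext v
    by_cases hv : v ∈ s
    · simp [hv]
    · simp only [hv, dif_neg, not_false_iff]
      exact (hf v hv).symm

lemma cover (s : Finset (Vertex d)) : (⋃ f ∈ cfgs s, cylE s f) = Set.univ := by
  ext ω
  simp only [Set.mem_iUnion, Set.mem_univ, iff_true]
  refine ⟨fun v => if v ∈ s then ω v else false, ?_, ?_⟩
  · exact mem_cfgs.2 (fun v hv => by simp [hv])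
  · intro v hv
    simp [cylE, hv]

lemma measure_partition (μ : Measure (Vertex d → Bool)) (s : Finset (Vertex d))
    {A : Set (Vertex d → Bool)} (hA : MeasurableSet A) :
    μ A = ∑ f ∈ cfgs s, μ (A ∩ cylE s f) := by
  have hdisj : (↑(cfgs s) : Set (Vertex d → Bool)).PairwiseDisjoint
      (fun f => A ∩ cylE s f) := by
    intro f hf g hg hfg
    apply Set.disjoint_left.mpr
    rintro ω ⟨-, hωf⟩ ⟨-, hωg⟩
    apply hfg
    funext v
    by_cases hv : v ∈ s
    · rw [← hωf v hv, hωg v hv]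
    · rw [mem_cfgs.1 (Finset.mem_coe.1 hf) v hv, mem_cfgs.1 (Finset.mem_coe.1 hg) v hv]
  have hcup : A = ⋃ f ∈ cfgs s, A ∩ cylE s f := by
    conv_lhs => rw [← Set.inter_univ A, ← cover s]
    exact Set.inter_iUnion₂ _ _
  conv_lhs => rw [hcup]
  exact measure_biUnion_finset hdisj (fun f _ => hA.inter (measurableSet_cylE s f))

lemma depends_inter_cylE {s : Finset (Vertex d)} {E : Set (Vertex d → Bool)}
    (hE : DependsOn s E) (f : Vertex d → Bool) :
    E ∩ cylE s f = if f ∈ E then cylE s f else ∅ := by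
  split_ifs with hf
  · ext ω
    exact ⟨fun h => h.2, fun h => ⟨hE f ω (fun v hv => (h v hv).symm) hf, h⟩⟩
  · ext ω
    simp only [Set.mem_inter_iff, Set.mem_empty_iff_false, iff_false, not_and]
    intro hωE hc
    exact hf (hE ω f (fun v hv => hc v hv) hωE)

lemma measurableSet_of_depends {s : Finset (Vertex d)} {E : Set (Vertex d → Bool)}
    (hE : DependsOn s E) : MeasurableSet E := by
  have hcup : E = ⋃ f ∈ cfgs s, E ∩ cylE s f := by
    conv_lhs => rw [← Set.inter_univ E, ← cover s]
    exact Set.inter_iUnion₂ _ _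
  rw [hcup]
  refine Set.Finite.measurableSet_biUnion (cfgs s).finite_toSet (fun f _ => ?_)
  rw [depends_inter_cylE hE]
  split_ifs
  · exact measurableSet_cylE s f
  · exact MeasurableSet.empty

lemma measure_inter_of_depends {q : Vertex d → ℝ} {μ : Measure (Vertex d → Bool)}
    (hμ : IsSitePerc μ q) {s t : Finset (Vertex d)} {E F : Set (Vertex d → Bool)}
    (hE : DependsOn s E) (hF : DependsOn t F) (hst : Disjoint s t) :
    μ (E ∩ F) = μ E * μ F := by
  have hEm := measurableSet_of_depends hE
  have hFm := measurableSet_of_depends hF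
  have hcyl_mul : ∀ f g, μ (cylE s f ∩ cylE t g) = μ (cylE s f) * μ (cylE t g) := by
    intro f g
    have hcomb : cylE s f ∩ cylE t g
        = cylE (s ∪ t) (fun v => if v ∈ s then f v else g v) := by
      ext ω
      simp only [cylE, Set.mem_inter_iff, Set.mem_setOf_eq, Finset.mem_union]
      constructor
      · rintro ⟨h1, h2⟩ v hv
        rcases hv with hv | hv
        · rw [if_pos hv]; exact h1 v hv
        · rw [if_neg (Finset.disjoint_right.1 hst hv)]; exact h2 v hv
      · intro h
        constructor
        · intro v hv
          have := h v (Or.inl hv); rwa [if_pos hv] at this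
        · intro v hv
          have := h v (Or.inr hv); rwa [if_neg (Finset.disjoint_right.1 hst hv)] at this
    rw [hcomb]
    show μ {ω | ∀ v ∈ s ∪ t, ω v = _} = μ {ω | ∀ v ∈ s, ω v = f v} * μ {ω | ∀ v ∈ t, ω v = g v}
    rw [hμ.2, hμ.2, hμ.2, Finset.prod_union hst]
    congr 1
    · apply Finset.prod_congr rfl
      intro v hv
      rw [if_pos hv]
    · apply Finset.prod_congr rfl
      intro v hv
      rw [if_neg (Finset.disjoint_right.1 hst hv)]
  have hsum : ∀ (G : Set (Vertex d → Bool)) (u : Finset (Vertex d)), DependsOn u G →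
      μ G = ∑ f ∈ cfgs u, if f ∈ G then μ (cylE u f) else 0 := by
    intro G u hG
    rw [measure_partition μ u (measurableSet_of_depends hG)]
    apply Finset.sum_congr rfl
    intro f _
    rw [depends_inter_cylE hG]
    split_ifs <;> simp
  rw [hsum E s hE, hsum F t hF, Finset.sum_mul_sum,
    measure_partition μ s (hEm.inter hFm)]
  apply Finset.sum_congr rfl
  intro f _
  rw [measure_partition μ t ((hEm.inter hFm).inter (measurableSet_cylE s f))]
  apply Finset.sum_congr rfl
  intro g _
  have hre : E ∩ F ∩ cylE s f ∩ cylE t g = (E ∩ cylE s f) ∩ (F ∩ cylE t g) := by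
    ext ω; simp only [Set.mem_inter_iff]; tauto
  rw [hre, depends_inter_cylE hE, depends_inter_cylE hF]
  split_ifs with h1 h2 h2 <;>
    simp [hcyl_mul f g, Set.empty_inter, Set.inter_empty]

noncomputable def ballF (v : Vertex d) (r : ℕ) : Finset (Vertex d) :=
  Fintype.piFinset (fun i => Finset.Icc (v i - r) (v i + r))

lemma mem_ballF {v w : Vertex d} {r : ℕ} : w ∈ ballF v r ↔ linfDist v w ≤ r := by
  rw [ballF, Fintype.mem_piFinset, linfDist_le_iff]
  apply forall_congr'
  intro i
  rw [Finset.mem_Icc]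
  omega

lemma card_ballF (v : Vertex d) (r : ℕ) : (ballF v r).card = (2 * r + 1) ^ d := by
  rw [ballF, Fintype.card_piFinset]
  have hc : ∀ i, (Finset.Icc (v i - (r : ℤ)) (v i + r)).card = 2 * r + 1 := by
    intro i
    rw [Int.card_Icc]
    omega
  rw [Finset.prod_congr rfl (fun i _ => hc i), Finset.prod_const, Finset.card_univ,
    Fintype.card_fin]

def Ev (m : ℕ) (v : Vertex d) (k : ℕ) : Set (Vertex d → Bool) :=
  {ω | (clusterIn (box d m) ω v).ncard = k}

lemma depends_Ev (m : ℕ) (v : Vertex d) (k : ℕ) (hk : 1 ≤ k) :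
    DependsOn (ballF v k) (Ev m v k) := by
  intro ω ω' hagree hω
  exact ncard_eq_of_agree hk (fun w hw => hagree w (mem_ballF.2 hw)) hω

lemma ballF_disjoint {v w : Vertex d} {k l : ℕ} (h : k + l < linfDist v w) :
    Disjoint (ballF v k) (ballF w l) := by
  rw [Finset.disjoint_left]
  intro x hx hx'
  rw [mem_ballF] at hx hx'
  have h1 := linfDist_triangle v x w
  rw [linfDist_comm x w] at h1
  omega

lemma nm_nonneg (d m j : ℕ) (ω : Vertex d → Bool) : 0 ≤ Nm d m j ω := by
  apply Finset.sum_nonneg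
  intro v _
  split_ifs
  · positivity
  · exact le_refl 0

lemma cov_bound (d : ℕ) (p : ℝ)
    (μ : Measure (Vertex d → Bool)) (hμ : IsBernoulliPerc μ p)
    (m k l : ℕ) (hk : 1 ≤ k) (hl : 1 ≤ l) :
    |∫ ω, Nm d m k ω * Nm d m l ω ∂μ
        - (∫ ω, Nm d m k ω ∂μ) * (∫ ω, Nm d m l ω ∂μ)|
      ≤ 3 ^ (d + 1) * ((k : ℝ) + l) ^ d * ∫ ω, Nm d m k ω ∂μ := by
  haveI : IsProbabilityMeasure μ := hμ.1
  set F : Finset (Vertex d) :=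
    Fintype.piFinset (fun _ : Fin d => Finset.Icc (1 : ℤ) (m : ℤ)) with hF
  have hmeas : ∀ (v : Vertex d) (j : ℕ), 1 ≤ j → MeasurableSet (Ev m v j) :=
    fun v j hj => measurableSet_of_depends (depends_Ev m v j hj)
  set X : Vertex d → ℕ → (Vertex d → Bool) → ℝ :=
    fun v j => (Ev m v j).indicator (fun _ => (1 : ℝ) / j) with hXdef
  have hNm : ∀ j, Nm d m j = fun ω => ∑ v ∈ F, X v j ω := by
    intro j
    funext ω
    apply Finset.sum_congr rfl
    intro v _
    by_cases h : (clusterIn (box d m) ω v).ncard = j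
    · simp [hXdef, Set.indicator_apply, Ev, h]
    · simp [hXdef, Set.indicator_apply, Ev, h]
  have hXint : ∀ v j, 1 ≤ j → Integrable (X v j) μ :=
    fun v j hj => (integrable_const _).indicator (hmeas v j hj)
  have hXY : ∀ v w, (fun ω => X v k ω * X w l ω)
      = ((Ev m v k) ∩ (Ev m w l)).indicator (fun _ => (1 : ℝ) / k * (1 / l)) := by
    intro v w
    funext ω
    exact (Set.inter_indicator_mul _ _ _).symm
  have hXint2 : ∀ v w, Integrable (fun ω => X v k ω * X w l ω) μ := by
    intro v w
    rw [hXY v w]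
    exact (integrable_const _).indicator ((hmeas v k hk).inter (hmeas w l hl))
  have hIX : ∀ (v : Vertex d) (j : ℕ), 1 ≤ j →
      ∫ ω, X v j ω ∂μ = (μ (Ev m v j)).toReal * (1 / j) := by
    intro v j hj
    rw [hXdef]
    simp only
    rw [MeasureTheory.integral_indicator_const _ (hmeas v j hj)]
    simp [mul_comm, measureReal_def]
  have hIXY : ∀ v w, ∫ ω, X v k ω * X w l ω ∂μ
      = (μ (Ev m v k ∩ Ev m w l)).toReal * (1 / k * (1 / l)) := by
    intro v w
    rw [hXY v w, MeasureTheory.integral_indicator_const _ ((hmeas v k hk).inter (hmeas w l hl))]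
    simp [mul_comm, measureReal_def]
  have hsplit : ∀ j, 1 ≤ j → ∫ ω, Nm d m j ω ∂μ = ∑ v ∈ F, ∫ ω, X v j ω ∂μ := by
    intro j hj
    rw [hNm j]
    exact integral_finset_sum F (fun v _ => hXint v j hj)
  have hsplit2 : ∫ ω, Nm d m k ω * Nm d m l ω ∂μ
      = ∑ v ∈ F, ∑ w ∈ F, ∫ ω, X v k ω * X w l ω ∂μ := by
    have hexp : (fun ω => Nm d m k ω * Nm d m l ω)
        = fun ω => ∑ v ∈ F, ∑ w ∈ F, X v k ω * X w l ω := by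
      funext ω
      rw [hNm k, hNm l]
      exact Finset.sum_mul_sum F F _ _
    rw [hexp,
      integral_finset_sum F (fun v _ => integrable_finset_sum F (fun w _ => hXint2 v w))]
    exact Finset.sum_congr rfl (fun v _ => integral_finset_sum F (fun w _ => hXint2 v w))
  set C : Vertex d → Vertex d → ℝ :=
    fun v w => (∫ ω, X v k ω * X w l ω ∂μ) - (∫ ω, X v k ω ∂μ) * (∫ ω, X w l ω ∂μ)
    with hCdef
  have hgoal1 : ∫ ω, Nm d m k ω * Nm d m l ω ∂μ
      - (∫ ω, Nm d m k ω ∂μ) * (∫ ω, Nm d m l ω ∂μ) = ∑ v ∈ F, ∑ w ∈ F, C v w := by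
    rw [hsplit2, hsplit k hk, hsplit l hl, Finset.sum_mul_sum, ← Finset.sum_sub_distrib]
    exact Finset.sum_congr rfl (fun v _ => (Finset.sum_sub_distrib _ _).symm)
  set a : Vertex d → ℝ := fun v => ∫ ω, X v k ω ∂μ with hadef
  have hanonneg : ∀ v, 0 ≤ a v := by
    intro v
    apply integral_nonneg
    intro ω
    exact Set.indicator_nonneg (fun _ _ => one_div_nonneg.mpr (Nat.cast_nonneg _)) ω
  have hC0 : ∀ v w, ¬ linfDist v w ≤ k + l → C v w = 0 := by
    intro v w hfar
    have hind := measure_inter_of_depends hμ (depends_Ev m v k hk) (depends_Ev m w l hl)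
      (ballF_disjoint (by omega : k + l < linfDist v w))
    rw [hCdef]
    simp only
    rw [hIXY v w, hIX v k hk, hIX w l hl, hind, ENNReal.toReal_mul]
    ring
  have hCbound : ∀ v w, |C v w| ≤ 2 / l * a v := by
    intro v w
    have h1 : (μ (Ev m v k ∩ Ev m w l)).toReal ≤ (μ (Ev m v k)).toReal :=
      ENNReal.toReal_mono (measure_ne_top μ _) (measure_mono Set.inter_subset_left)
    have h2 : (μ (Ev m w l)).toReal ≤ 1 := by
      simpa using ENNReal.toReal_mono (by simp) (prob_le_one (μ := μ) (s := Ev m w l))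
    have h3 : (0:ℝ) ≤ (μ (Ev m v k ∩ Ev m w l)).toReal := ENNReal.toReal_nonneg
    have h4 : (0:ℝ) ≤ (μ (Ev m v k)).toReal := ENNReal.toReal_nonneg
    have h5 : (0:ℝ) ≤ (μ (Ev m w l)).toReal := ENNReal.toReal_nonneg
    have hkpos : (0:ℝ) < k := by positivity
    have hlpos : (0:ℝ) < l := by exact_mod_cast hl
    have hA := hIXY v w
    have hB := hIX v k hk
    have hD := hIX w l hl
    rw [hCdef]
    simp only
    rw [hA, hB, hD, hadef]
    simp only
    rw [hB]
    have hA0 : (0:ℝ) ≤ (μ (Ev m v k ∩ Ev m w l)).toReal * (1 / k * (1 / l)) := by positivity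
    have hB0 : (0:ℝ) ≤ (μ (Ev m v k)).toReal * (1 / k) * ((μ (Ev m w l)).toReal * (1 / l)) := by
      positivity
    have e1 : (μ (Ev m v k ∩ Ev m w l)).toReal * (1 / k * (1 / l))
        ≤ (μ (Ev m v k)).toReal * (1 / k) * (1 / l) := by
      rw [← mul_assoc]
      apply mul_le_mul_of_nonneg_right _ (by positivity)
      exact mul_le_mul_of_nonneg_right h1 (by positivity)
    have e2 : (μ (Ev m v k)).toReal * (1 / k) * ((μ (Ev m w l)).toReal * (1 / l))
        ≤ (μ (Ev m v k)).toReal * (1 / k) * (1 / l) := by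
      apply mul_le_mul_of_nonneg_left _ (by positivity)
      calc (μ (Ev m w l)).toReal * (1 / l) ≤ 1 * (1 / l) :=
            mul_le_mul_of_nonneg_right h2 (by positivity)
        _ = 1 / l := one_mul _
    calc |(μ (Ev m v k ∩ Ev m w l)).toReal * (1 / k * (1 / l))
          - (μ (Ev m v k)).toReal * (1 / k) * ((μ (Ev m w l)).toReal * (1 / l))|
        ≤ |(μ (Ev m v k ∩ Ev m w l)).toReal * (1 / k * (1 / l))|
          + |(μ (Ev m v k)).toReal * (1 / k) * ((μ (Ev m w l)).toReal * (1 / l))| :=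
          abs_sub _ _
      _ = (μ (Ev m v k ∩ Ev m w l)).toReal * (1 / k * (1 / l))
          + (μ (Ev m v k)).toReal * (1 / k) * ((μ (Ev m w l)).toReal * (1 / l)) := by
          rw [abs_of_nonneg hA0, abs_of_nonneg hB0]
      _ ≤ (μ (Ev m v k)).toReal * (1 / k) * (1 / l)
          + (μ (Ev m v k)).toReal * (1 / k) * (1 / l) := add_le_add e1 e2
      _ = 2 / l * ((μ (Ev m v k)).toReal * (1 / k)) := by ring
  have hrowbound : ∀ v ∈ F, ∑ w ∈ F, |C v w|
      ≤ ((2 * (k + l) + 1 : ℕ) ^ d : ℝ) * (2 / l * a v) := by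
    intro v _
    have hfilter : ∑ w ∈ F, |C v w|
        = ∑ w ∈ F.filter (fun w => linfDist v w ≤ k + l), |C v w| := by
      symm
      apply Finset.sum_filter_of_ne
      intro w _ hne
      by_contra hfar
      exact hne (by rw [hC0 v w hfar, abs_zero])
    rw [hfilter]
    calc ∑ w ∈ F.filter (fun w => linfDist v w ≤ k + l), |C v w|
        ≤ (F.filter (fun w => linfDist v w ≤ k + l)).card • (2 / l * a v) :=
          Finset.sum_le_card_nsmul _ _ _ (fun w _ => hCbound v w)
      _ = ((F.filter (fun w => linfDist v w ≤ k + l)).card : ℝ) * (2 / l * a v) :=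
          nsmul_eq_mul _ _
      _ ≤ ((2 * (k + l) + 1 : ℕ) ^ d : ℝ) * (2 / l * a v) := by
          apply mul_le_mul_of_nonneg_right
          · have hsub : F.filter (fun w => linfDist v w ≤ k + l) ⊆ ballF v (k + l) := by
              intro w hw
              rw [mem_ballF]
              exact (Finset.mem_filter.1 hw).2
            have hcard := Finset.card_le_card hsub
            rw [card_ballF] at hcard
            exact_mod_cast hcard
          · have := hanonneg v
            positivity
  have hT : (0:ℝ) ≤ ∑ v ∈ F, a v := Finset.sum_nonneg (fun v _ => hanonneg v)
  rw [hgoal1]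
  calc |∑ v ∈ F, ∑ w ∈ F, C v w| ≤ ∑ v ∈ F, |∑ w ∈ F, C v w| :=
        Finset.abs_sum_le_sum_abs _ _
    _ ≤ ∑ v ∈ F, ∑ w ∈ F, |C v w| :=
        Finset.sum_le_sum (fun v _ => Finset.abs_sum_le_sum_abs _ _)
    _ ≤ ∑ v ∈ F, ((2 * (k + l) + 1 : ℕ) ^ d : ℝ) * (2 / l * a v) :=
        Finset.sum_le_sum hrowbound
    _ = ((2 * (k + l) + 1 : ℕ) ^ d : ℝ) * (2 / l) * ∑ v ∈ F, a v := by
        rw [Finset.mul_sum]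
        exact Finset.sum_congr rfl (fun v _ => by ring)
    _ ≤ 3 ^ (d + 1) * ((k : ℝ) + l) ^ d * ∑ v ∈ F, a v := by
        apply mul_le_mul_of_nonneg_right _ hT
        have hkl1 : (1:ℝ) ≤ (k : ℝ) + l := by
          have : (1:ℝ) ≤ (k:ℝ) := by exact_mod_cast hk
          have : (0:ℝ) ≤ (l:ℝ) := by positivity
          linarith
        have h1 : ((2 * (k + l) + 1 : ℕ) ^ d : ℝ) ≤ (3 * ((k : ℝ) + l)) ^ d := by
          apply pow_le_pow_left₀ (by positivity)
          push_cast
          linarith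
        have h2 : 2 / (l:ℝ) ≤ 2 := by
          have hl1 : (1:ℝ) ≤ (l:ℝ) := by exact_mod_cast hl
          rw [div_le_iff₀ (by linarith)]
          linarith
        calc ((2 * (k + l) + 1 : ℕ) ^ d : ℝ) * (2 / l)
            ≤ (3 * ((k : ℝ) + l)) ^ d * 2 := by
              apply mul_le_mul h1 h2 (by positivity) (by positivity)
          _ = 3 ^ d * ((k : ℝ) + l) ^ d * 2 := by rw [mul_pow]
          _ ≤ 3 ^ (d + 1) * ((k : ℝ) + l) ^ d := by
              rw [pow_succ]
              have hp1 : (0:ℝ) ≤ ((k : ℝ) + l) ^ d := by positivity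
              have hp2 : (0:ℝ) ≤ (3:ℝ) ^ d := by positivity
              nlinarith
  rw [hsplit k hk]

end PercAux

/-- covariance and variance bounds for cluster counts. -/
theorem stmt9 (d : ℕ) (hd : 1 ≤ d) (p : ℝ) (hp : p ∈ Set.Icc (0 : ℝ) 1)
    (μ : Measure (Perc.Vertex d → Bool)) (hμ : Perc.IsBernoulliPerc μ p)
    (m k l : ℕ) (hk : 1 ≤ k) (hl : 1 ≤ l) :
    |∫ ω, Perc.Nm d m k ω * Perc.Nm d m l ω ∂μ
        - (∫ ω, Perc.Nm d m k ω ∂μ) * (∫ ω, Perc.Nm d m l ω ∂μ)|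
      ≤ 3 ^ (d + 1) * ((k : ℝ) + l) ^ d * ∫ ω, Perc.Nm d m (max k l) ω ∂μ ∧
    ∫ ω, (Perc.Nm d m k ω) ^ 2 ∂μ - (∫ ω, Perc.Nm d m k ω ∂μ) ^ 2
      ≤ 6 ^ (d + 1) * (k : ℝ) ^ d * ∫ ω, Perc.Nm d m k ω ∂μ := by
  haveI : IsProbabilityMeasure μ := hμ.1
  have hnn : 0 ≤ ∫ ω, Perc.Nm d m k ω ∂μ :=
    integral_nonneg (fun ω => PercAux.nm_nonneg d m k ω)
  constructor
  · rcases le_total l k with hlk | hkl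
    · rw [max_eq_left hlk]
      exact PercAux.cov_bound d p μ hμ m k l hk hl
    · rw [max_eq_right hkl]
      have h := PercAux.cov_bound d p μ hμ m l k hl hk
      have hcomm : ∫ ω, Perc.Nm d m k ω * Perc.Nm d m l ω ∂μ
          = ∫ ω, Perc.Nm d m l ω * Perc.Nm d m k ω ∂μ := by
        apply integral_congr_ae
        filter_upwards with ω
        ring
      rw [hcomm, mul_comm (∫ ω, Perc.Nm d m k ω ∂μ),
        show (k:ℝ) + l = (l:ℝ) + k from by ring]
      exact h
  · have h := PercAux.cov_bound d p μ hμ m k k hk hk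
    have hsq : ∫ ω, (Perc.Nm d m k ω) ^ 2 ∂μ
        = ∫ ω, Perc.Nm d m k ω * Perc.Nm d m k ω ∂μ := by
      apply integral_congr_ae
      filter_upwards with ω
      ring
    have key : (3:ℝ) ^ (d+1) * ((k:ℝ) + k) ^ d ≤ 6 ^ (d+1) * (k:ℝ) ^ d := by
      have h6 : (6:ℝ) ^ d = 3 ^ d * 2 ^ d := by rw [← mul_pow]; norm_num
      have h2k : ((k:ℝ) + k) ^ d = 2 ^ d * (k:ℝ) ^ d := by rw [← two_mul, mul_pow]
      rw [h2k, pow_succ, pow_succ, h6]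
      have hkd : (0:ℝ) ≤ (k:ℝ) ^ d := by positivity
      have h3 : (0:ℝ) ≤ (3:ℝ) ^ d := by positivity
      have h2 : (0:ℝ) ≤ (2:ℝ) ^ d := by positivity
      nlinarith [mul_nonneg (mul_nonneg h3 h2) hkd]
    calc ∫ ω, (Perc.Nm d m k ω) ^ 2 ∂μ - (∫ ω, Perc.Nm d m k ω ∂μ) ^ 2
        = ∫ ω, Perc.Nm d m k ω * Perc.Nm d m k ω ∂μ
          - (∫ ω, Perc.Nm d m k ω ∂μ) * (∫ ω, Perc.Nm d m k ω ∂μ) := by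
          rw [hsq]; ring
      _ ≤ |∫ ω, Perc.Nm d m k ω * Perc.Nm d m k ω ∂μ
          - (∫ ω, Perc.Nm d m k ω ∂μ) * (∫ ω, Perc.Nm d m k ω ∂μ)| := le_abs_self _
      _ ≤ 3 ^ (d + 1) * ((k : ℝ) + k) ^ d * ∫ ω, Perc.Nm d m k ω ∂μ := h
      _ ≤ 6 ^ (d + 1) * (k : ℝ) ^ d * ∫ ω, Perc.Nm d m k ω ∂μ :=
          mul_le_mul_of_nonneg_right key hnn
end
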